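/- arXiv:1412.1711 — 15 statements merged into one kernel-verified Lean document; each statement's English description precedes it below -/
import Mathlib

section
/- Let (Ω, 𝔄, P) be a probability space, X ∈ L²(P) with E[X] = 0, and r > 0 with 2r < E[|X|]. Then there exist unique real numbers v′ < 0 < v″ such that E[(v′ − X)₊] = r and E[(X − v″)₊] = r, where y₊ = max(y, 0). -/
open MeasureTheory Filter

private lemma tv_aux {Ω : Type*} [MeasurableSpace Ω] (P : Measure Ω) [IsProbabilityMeasure P]
    (X : Ω → ℝ) (hXi : Integrable X P) (r : ℝ) (hr : 0 < r)
    (hr0 : r < ∫ x, max (0 - X x) 0 ∂P) :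
    ∃! v : ℝ, v < 0 ∧ (∫ x, max (v - X x) 0 ∂P) = r := by
  set f : ℝ → ℝ := fun v => ∫ x, max (v - X x) 0 ∂P with hf
  have hint : ∀ v : ℝ, Integrable (fun x => max (v - X x) 0) P :=
    fun v => ((integrable_const v).sub hXi).pos_part
  -- f is 1-Lipschitz, hence continuous
  have hlip : LipschitzWith 1 f := by
    apply LipschitzWith.of_dist_le_mul
    intro v1 v2
    rw [Real.dist_eq, Real.dist_eq, NNReal.coe_one, one_mul]
    have hsub : f v1 - f v2 = ∫ x, (max (v1 - X x) 0 - max (v2 - X x) 0) ∂P :=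
      (integral_sub (hint v1) (hint v2)).symm
    calc |f v1 - f v2| ≤ ∫ x, |max (v1 - X x) 0 - max (v2 - X x) 0| ∂P := by
          rw [hsub]
          simpa [Real.norm_eq_abs] using
            norm_integral_le_integral_norm (μ := P)
              (fun x => max (v1 - X x) 0 - max (v2 - X x) 0)
      _ ≤ ∫ _x, |v1 - v2| ∂P := by
          apply integral_mono ((hint v1).sub (hint v2)).abs (integrable_const _)
          intro x
          have := abs_max_sub_max_le_abs (v1 - X x) (v2 - X x) 0
          simpa using this
      _ = |v1 - v2| := by simp
  have hcont : Continuous f := hlip.continuous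
  -- f tends to 0 at -∞
  have hlim : Tendsto f atBot (nhds 0) := by
    have h0 : (0 : ℝ) = ∫ _x, (0 : ℝ) ∂P := by simp
    rw [h0]
    apply tendsto_integral_filter_of_dominated_convergence (fun x => max (0 - X x) 0)
    · exact Eventually.of_forall fun v => (hint v).aestronglyMeasurable
    · filter_upwards [eventually_le_atBot (0 : ℝ)] with v hv
      refine Eventually.of_forall fun x => ?_
      rw [Real.norm_eq_abs, abs_of_nonneg (le_max_right _ _)]
      exact max_le_max (by linarith) le_rfl
    · exact ((integrable_const (0 : ℝ)).sub hXi).pos_part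
    · refine Eventually.of_forall fun x => ?_
      apply Tendsto.congr' _ tendsto_const_nhds
      filter_upwards [eventually_le_atBot (X x)] with v hv
      simp [max_eq_right (by linarith : v - X x ≤ 0)]
  -- find a point where f < r
  have hev : ∀ᶠ v in atBot, f v < r := hlim.eventually_lt_const hr
  obtain ⟨a, ha⟩ := (hev.and (eventually_lt_atBot (0 : ℝ))).exists
  -- existence by IVT
  have hsub : Set.Icc (f a) (f 0) ⊆ f '' Set.Icc a 0 :=
    intermediate_value_Icc ha.2.le hcont.continuousOn
  have hr0' : r < f 0 := hr0
  obtain ⟨v, hv, hvr⟩ := hsub ⟨ha.1.le, hr0'.le⟩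
  have hvneg : v < 0 := lt_of_le_of_ne hv.2 (fun h => by rw [h] at hvr; linarith)
  -- uniqueness key: no two distinct solutions
  have key : ∀ v1 v2 : ℝ, v1 < v2 → f v1 = r → f v2 = r → False := by
    intro v1 v2 h12 h1 h2
    have hdiff : ∫ x, (max (v2 - X x) 0 - max (v1 - X x) 0) ∂P = 0 := by
      rw [integral_sub (hint v2) (hint v1)]
      rw [hf] at h1 h2; simp only at h1 h2; rw [h1, h2, sub_self]
    have hnn : 0 ≤ᵐ[P] fun x => max (v2 - X x) 0 - max (v1 - X x) 0 :=
      Eventually.of_forall fun x => by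
        simp only [Pi.zero_apply, sub_nonneg]
        exact max_le_max (by linarith) le_rfl
    have hzero : (fun x => max (v2 - X x) 0 - max (v1 - X x) 0) =ᵐ[P] 0 :=
      (integral_eq_zero_iff_of_nonneg_ae hnn ((hint v2).sub (hint v1))).mp hdiff
    have hae : ∀ᵐ x ∂P, max (v1 - X x) 0 = 0 := by
      filter_upwards [hzero] with x hx
      simp only [Pi.zero_apply] at hx
      by_contra hne
      have h1x : 0 < v1 - X x := by
        rcases le_or_gt (v1 - X x) 0 with h' | h'
        · exact absurd (max_eq_right h') hne
        · exact h'
      rw [max_eq_left h1x.le, max_eq_left (by linarith : (0:ℝ) ≤ v2 - X x)] at hx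
      linarith
    have : f v1 = 0 := by
      rw [hf]
      simp only
      rw [integral_congr_ae hae]
      simp
    rw [h1] at this; linarith
  refine ⟨v, ⟨hvneg, hvr⟩, ?_⟩
  rintro w ⟨hw, hwr⟩
  rcases lt_trichotomy w v with h | h | h
  · exact absurd (key w v h hwr hvr) (not_false)
  · exact h
  · exact absurd (key v w h hvr hwr) (not_false)

/-- existence and uniqueness of the total variation clipping
constants `v′ < 0 < v″` with `E[(v′ − X)₊] = r = E[(X − v″)₊]`, provided
`2r < E[|X|]`. -/
theorem tv_clipping_constants_exist_unique
    {Ω : Type*} [MeasurableSpace Ω] (P : Measure Ω) [IsProbabilityMeasure P]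
    (X : Ω → ℝ) (hX : MemLp X 2 P) (hcent : ∫ x, X x ∂P = 0)
    (r : ℝ) (hr : 0 < r) (hrE : 2 * r < ∫ x, |X x| ∂P) :
    (∃! v' : ℝ, v' < 0 ∧ (∫ x, max (v' - X x) 0 ∂P) = r) ∧
    (∃! v'' : ℝ, 0 < v'' ∧ (∫ x, max (X x - v'') 0 ∂P) = r) := by
  have hXi : Integrable X P := hX.integrable one_le_two
  have hXa : Integrable (fun x => |X x|) P := hXi.abs
  -- E[(−X)₊] = E|X|/2 and E[X₊] = E|X|/2
  have hneg : ∫ x, max (0 - X x) 0 ∂P = (∫ x, |X x| ∂P) / 2 := by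
    have hpt : ∀ x, max (0 - X x) 0 = (|X x| - X x) / 2 := by
      intro x
      rcases le_or_gt (X x) 0 with h | h
      · rw [abs_of_nonpos h, max_eq_left (by linarith : (0:ℝ) ≤ 0 - X x)]; ring
      · rw [abs_of_pos h, max_eq_right (by linarith : 0 - X x ≤ 0)]; ring
    rw [integral_congr_ae (Eventually.of_forall hpt)]
    rw [integral_div, integral_sub hXa hXi, hcent, sub_zero]
  have hpos : ∫ x, max (0 - (- X x)) 0 ∂P = (∫ x, |X x| ∂P) / 2 := by
    have hpt : ∀ x, max (0 - (- X x)) 0 = (|X x| + X x) / 2 := by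
      intro x
      rcases le_or_gt (X x) 0 with h | h
      · rw [abs_of_nonpos h, max_eq_right (by linarith : 0 - (- X x) ≤ 0)]; ring
      · rw [abs_of_pos h, max_eq_left (by linarith : (0:ℝ) ≤ 0 - (- X x))]; ring
    rw [integral_congr_ae (Eventually.of_forall hpt)]
    rw [integral_div, integral_add hXa hXi, hcent, add_zero]
  constructor
  · exact tv_aux P X hXi r hr (by rw [hneg]; linarith)
  · obtain ⟨w, ⟨hw, hwr⟩, hwu⟩ :=
      tv_aux P (fun x => - X x) hXi.neg r hr (by rw [hpos]; linarith)
    refine ⟨-w, ⟨neg_pos.mpr hw, ?_⟩, ?_⟩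
    · rw [← hwr]
      apply integral_congr_ae (Eventually.of_forall fun x => ?_)
      congr 1; ring
    · rintro v'' ⟨hv, hvr⟩
      have hweq : -v'' = w := by
        apply hwu
        refine ⟨by linarith, ?_⟩
        rw [← hvr]
        apply integral_congr_ae (Eventually.of_forall fun x => ?_)
        congr 1; ring
      linarith
end

section
/- Let (Ω, 𝔄, P) be a probability space, X ∈ L²(P) with E[X] = 0, and r > 0. If 2r < E[|X|], let v′ < 0 < v″ be the unique reals with E[(v′ − X)₊] = r = E[(X − v″)₊]; then the metric projection of X onto the total variation tangent ball G_v(r) = {g ∈ L²(P) : E[g] = 0, E[|g|] ≤ 2r} equals X − (v′ ∨ X ∧ v″), i.e. the residual X − π(X) is the clipped function v′ ∨ X ∧ v″ (pointwise max with v′ and min with v″). If instead E[|X|] ≤ 2r, then π(X) = X and the residual is 0. -/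
open MeasureTheory RealInnerProductSpace

private lemma clip_eq {v' v'' : ℝ} (hvv : v' ≤ v'') (a : ℝ) :
    max v' (min a v'') = a - max (a - v'') 0 + max (v' - a) 0 := by
  simp only [max_def, min_def]; split_ifs <;> first | ring1 | linarith

private lemma abs_diff_pos_parts {v' v'' : ℝ} (hvv : v' ≤ v'') (a : ℝ) :
    |max (a - v'') 0 - max (v' - a) 0| = max (a - v'') 0 + max (v' - a) 0 := by
  rcases le_total a v' with h1 | h1 <;> rcases le_total a v'' with h2 | h2 <;>
    rw [abs_sub_comm] <;>
    first
      | (rw [max_eq_right (by linarith : a - v'' ≤ 0), max_eq_left (by linarith : (0:ℝ) ≤ v' - a),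
          abs_of_nonneg (by linarith : (0:ℝ) ≤ v' - a - 0)] ; ring)
      | (rw [max_eq_right (by linarith : a - v'' ≤ 0), max_eq_right (by linarith : v' - a ≤ 0)] ; simp)
      | (rw [max_eq_left (by linarith : (0:ℝ) ≤ a - v''), max_eq_right (by linarith : v' - a ≤ 0),
          abs_of_nonpos (by linarith : (0:ℝ) - (a - v'') ≤ 0)] ; ring)
      | linarith

private lemma clip_mul_eq {v' v'' : ℝ} (hvv : v' ≤ v'') (a : ℝ) :
    max v' (min a v'') * (max (a - v'') 0 - max (v' - a) 0)
      = v'' * max (a - v'') 0 - v' * max (v' - a) 0 := by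
  simp only [max_def, min_def]
  split_ifs <;> first | ring1 | nlinarith

/-- the metric projection `p` of `X` onto the total variation
tangent ball `G_v(r) = {g ∈ L²(P) : E[g] = 0, E[|g|] ≤ 2r}` has residual
`X - p = v′ ∨ X ∧ v″` when `2r < E[|X|]` (with `v′, v″` the clipping
constants), and `p = X` when `E[|X|] ≤ 2r`. -/
theorem tv_projection_residual_is_clipped
    {Ω : Type*} [MeasurableSpace Ω] (P : Measure Ω) [IsProbabilityMeasure P]
    (r : ℝ) (hr : 0 < r)
    (X : Lp ℝ 2 P) (hcent : ∫ x, X x ∂P = 0)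
    (G : Set (Lp ℝ 2 P))
    (hG : G = {g : Lp ℝ 2 P | (∫ x, g x ∂P) = 0 ∧ (∫ x, |g x| ∂P) ≤ 2 * r})
    (p : Lp ℝ 2 P) (hpG : p ∈ G) (hpmin : ∀ g ∈ G, ‖X - p‖ ≤ ‖X - g‖) :
    (∀ v' v'' : ℝ, v' < 0 → 0 < v'' →
      (∫ x, max (v' - X x) 0 ∂P) = r → (∫ x, max (X x - v'') 0 ∂P) = r →
      2 * r < (∫ x, |X x| ∂P) →
      (fun x => X x - p x) =ᵐ[P] fun x => max v' (min (X x) v'')) ∧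
    ((∫ x, |X x| ∂P) ≤ 2 * r → p = X) := by
  subst hG
  obtain ⟨hp0, hp1⟩ := hpG
  constructor
  · intro v' v'' hv' hv'' hEr' hEr'' _hlt
    have hvv : v' ≤ v'' := hv'.le.trans hv''.le
    set f : Ω → ℝ := fun x => X x with hf_def
    have hfmem : MemLp f 2 P := Lp.memLp X
    have hfint : Integrable f P := hfmem.integrable one_le_two
    set c : Ω → ℝ := fun x => max v' (min (f x) v'') with hc_def
    have hcmeas : AEStronglyMeasurable c P :=
      (continuous_const.max ((continuous_id.min continuous_const))).comp_aestronglyMeasurable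
        hfmem.aestronglyMeasurable
    have hcbd : ∀ x, v' ≤ c x ∧ c x ≤ v'' := fun x =>
      ⟨le_max_left _ _, max_le hvv (min_le_right _ _)⟩
    have hcnorm : ∀ x, ‖c x‖ ≤ max (-v') v'' := by
      intro x
      rw [Real.norm_eq_abs, abs_le]
      constructor
      · have := (hcbd x).1; have : -(max (-v') v'') ≤ v' := by
          have := le_max_left (-v') v''; linarith
        linarith [(hcbd x).1]
      · exact le_trans (hcbd x).2 (le_max_right _ _)
    have hcmem : MemLp c 2 P :=
      MemLp.of_bound hcmeas (max (-v') v'') (Filter.Eventually.of_forall hcnorm)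
    have hcint : Integrable c P := hcmem.integrable one_le_two
    set q1 : Ω → ℝ := fun x => max (f x - v'') 0 with hq1_def
    set q2 : Ω → ℝ := fun x => max (v' - f x) 0 with hq2_def
    have hq1int : Integrable q1 P := (hfint.sub (integrable_const _)).pos_part
    have hq2int : Integrable q2 P := ((integrable_const _).sub hfint).pos_part
    have hfc : ∀ x, f x - c x = q1 x - q2 x := by
      intro x; have := clip_eq hvv (f x)
      simp only [hc_def, hq1_def, hq2_def]; rw [this]; ring
    -- integral of c is 0
    have hEq1 : ∫ x, q1 x ∂P = r := hEr''
    have hEq2 : ∫ x, q2 x ∂P = r := hEr'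
    have hEfc : ∫ x, (f x - c x) ∂P = 0 := by
      have : (fun x => f x - c x) = fun x => q1 x - q2 x := funext hfc
      rw [this, integral_sub hq1int hq2int, hEq1, hEq2, sub_self]
    have hEabs : ∫ x, |f x - c x| ∂P = 2 * r := by
      have : (fun x => |f x - c x|) = fun x => q1 x + q2 x := by
        funext x; rw [hfc x]
        simpa using abs_diff_pos_parts hvv (f x)
      rw [this, integral_add hq1int hq2int, hEq1, hEq2]; ring
    -- integral of c * (f - c)
    have hcfcint : Integrable (fun x => c x * (f x - c x)) P :=
      Integrable.bdd_mul (hfint.sub hcint) hcmeas (Filter.Eventually.of_forall hcnorm)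
    have hEcfc : ∫ x, c x * (f x - c x) ∂P = (v'' - v') * r := by
      have : (fun x => c x * (f x - c x)) = fun x => v'' * q1 x - v' * q2 x := by
        funext x; rw [hfc x]
        simpa using clip_mul_eq hvv (f x)
      rw [this, integral_sub (hq1int.const_mul _) (hq2int.const_mul _),
        integral_const_mul, integral_const_mul, hEq1, hEq2]; ring
    -- key bound: for any mean-zero g with ∫|g| ≤ 2r, ∫ c g ≤ (v''-v') r
    have key : ∀ g : Ω → ℝ, Integrable g P → ∫ x, g x ∂P = 0 →
        ∫ x, |g x| ∂P ≤ 2 * r → ∫ x, c x * g x ∂P ≤ (v'' - v') * r := by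
      intro g hgint hg0 hg1
      set m : ℝ := (v' + v'') / 2 with hm_def
      have hcmbd : ∀ x, ‖c x - m‖ ≤ (v'' - v') / 2 := by
        intro x
        rw [Real.norm_eq_abs, abs_le]
        constructor <;> [linarith [(hcbd x).1]; linarith [(hcbd x).2]]
      have hcmint : Integrable (fun x => (c x - m) * g x) P :=
        Integrable.bdd_mul hgint (hcmeas.sub aestronglyMeasurable_const)
          (Filter.Eventually.of_forall hcmbd)
      have hsplit : ∫ x, c x * g x ∂P = ∫ x, (c x - m) * g x ∂P := by
        have h1 : (fun x => c x * g x) = fun x => (c x - m) * g x + m * g x := by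
          funext x; ring
        rw [h1, integral_add hcmint (hgint.const_mul m), integral_const_mul, hg0,
          mul_zero, add_zero]
      rw [hsplit]
      calc ∫ x, (c x - m) * g x ∂P ≤ |∫ x, (c x - m) * g x ∂P| := le_abs_self _
        _ ≤ ∫ x, |(c x - m) * g x| ∂P := by
            simpa [Real.norm_eq_abs, abs_mul] using
              norm_integral_le_integral_norm (μ := P) (fun x => (c x - m) * g x)
        _ ≤ ∫ x, (v'' - v') / 2 * |g x| ∂P := by
            refine integral_mono hcmint.abs (hgint.abs.const_mul _) fun x => ?_
            rw [abs_mul]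
            exact mul_le_mul_of_nonneg_right (hcmbd x) (abs_nonneg _)
        _ = (v'' - v') / 2 * ∫ x, |g x| ∂P := integral_const_mul _ _
        _ ≤ (v'' - v') / 2 * (2 * r) := by
            apply mul_le_mul_of_nonneg_left hg1; linarith
        _ = (v'' - v') * r := by ring
    -- build g0 and cL as Lp elements
    have hg0mem : MemLp (fun x => f x - c x) 2 P := hfmem.sub hcmem
    set g0 : Lp ℝ 2 P := hg0mem.toLp _ with hg0_def
    have hg0coe : ⇑g0 =ᵐ[P] fun x => f x - c x := hg0mem.coeFn_toLp
    set cL : Lp ℝ 2 P := hcmem.toLp c with hcL_def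
    have hcLcoe : ⇑cL =ᵐ[P] c := hcmem.coeFn_toLp
    have hg0G : g0 ∈ {g : Lp ℝ 2 P | (∫ x, g x ∂P) = 0 ∧ (∫ x, |g x| ∂P) ≤ 2 * r} := by
      constructor
      · rw [integral_congr_ae hg0coe]; exact hEfc
      · have : (fun x => |g0 x|) =ᵐ[P] fun x => |f x - c x| := hg0coe.fun_comp abs
        rw [integral_congr_ae this, hEabs]
    have hXg0 : X - g0 = cL := by
      apply Lp.ext
      filter_upwards [Lp.coeFn_sub X g0, hg0coe, hcLcoe] with x h1 h2 h3
      rw [h1, h3]; simp only [Pi.sub_apply, h2]; simp [hf_def]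
    -- inner product nonneg
    have hpint : Integrable (fun x => p x) P := (Lp.memLp p).integrable one_le_two
    have hcpint : Integrable (fun x => c x * p x) P :=
      Integrable.bdd_mul hpint hcmeas (Filter.Eventually.of_forall hcnorm)
    have hinner : (0 : ℝ) ≤ ⟪cL, g0 - p⟫ := by
      rw [L2.inner_def]
      have hcongr : (fun x => ⟪cL x, (g0 - p) x⟫) =ᵐ[P]
          fun x => c x * (f x - c x) - c x * p x := by
        filter_upwards [hcLcoe, Lp.coeFn_sub g0 p, hg0coe] with x h1 h2 h3
        rw [h1, h2]
        simp only [Pi.sub_apply, h3, RCLike.inner_apply, conj_trivial]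
        ring
      rw [integral_congr_ae hcongr, integral_sub hcfcint hcpint, hEcfc]
      have := key (fun x => p x) hpint hp0 hp1
      linarith
    -- norm comparison
    have hXp : X - p = cL + (g0 - p) := by rw [← hXg0]; abel
    have hsq : ‖X - p‖ ^ 2 = ‖cL‖ ^ 2 + 2 * ⟪cL, g0 - p⟫ + ‖g0 - p‖ ^ 2 := by
      rw [hXp, norm_add_sq_real]
    have hle : ‖X - p‖ ≤ ‖cL‖ := by
      have := hpmin g0 hg0G
      rwa [hXg0] at this
    have hle2 : ‖X - p‖ ^ 2 ≤ ‖cL‖ ^ 2 :=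
      pow_le_pow_left₀ (norm_nonneg _) hle 2
    have hg0p : g0 = p := by
      have hsq0 : ‖g0 - p‖ ^ 2 = 0 := le_antisymm (by nlinarith) (sq_nonneg _)
      have hn0 : ‖g0 - p‖ = 0 := pow_eq_zero_iff (two_ne_zero) |>.mp hsq0
      exact sub_eq_zero.mp (norm_eq_zero.mp hn0)
    filter_upwards [hg0coe] with x hx
    rw [← hg0p, hx]
    simp only [hc_def]
    ring
  · intro h
    have hXG : X ∈ {g : Lp ℝ 2 P | (∫ x, g x ∂P) = 0 ∧ (∫ x, |g x| ∂P) ≤ 2 * r} :=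
      ⟨hcent, h⟩
    have := hpmin X hXG
    rw [sub_self, norm_zero] at this
    have h0 : ‖X - p‖ = 0 := le_antisymm this (norm_nonneg _)
    have := norm_eq_zero.mp h0
    have := sub_eq_zero.mp this
    exact this.symm
end

section
/- Let (Ω, 𝔄, P) be a probability space, X ∈ L²(P) with E[X] = 0, and 0 < 2r < E[|X|]. Let v′ < 0 < v″ be the unique reals with E[(v′ − X)₊] = r = E[(X − v″)₊], and set X⁽ᵛ⁾ = v′ ∨ X ∧ v″. Then E[X⁽ᵛ⁾ X] = E[(X⁽ᵛ⁾)²] + r(v″ − v′), and in particular E[X⁽ᵛ⁾ X] > 0. -/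
open MeasureTheory

/-- for the clipped scores `X⁽ᵛ⁾ = v′ ∨ X ∧ v″` in the total
variation model, `E[X⁽ᵛ⁾ X] = E[(X⁽ᵛ⁾)²] + r(v″ − v′)`, and `E[X⁽ᵛ⁾ X] > 0`. -/
theorem tv_clipped_scores_inner_product
    {Ω : Type*} [MeasurableSpace Ω] (P : Measure Ω) [IsProbabilityMeasure P]
    (X : Ω → ℝ) (hX : MemLp X 2 P) (hcent : ∫ x, X x ∂P = 0)
    (r : ℝ) (hr : 0 < r) (hrE : 2 * r < ∫ x, |X x| ∂P)
    (v' v'' : ℝ) (hv' : v' < 0) (hv'' : 0 < v'')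
    (hv'eq : (∫ x, max (v' - X x) 0 ∂P) = r)
    (hv''eq : (∫ x, max (X x - v'') 0 ∂P) = r)
    (Xv : Ω → ℝ) (hXv : Xv = fun x => max v' (min (X x) v'')) :
    (∫ x, Xv x * X x ∂P) = (∫ x, (Xv x) ^ 2 ∂P) + r * (v'' - v') ∧
    0 < ∫ x, Xv x * X x ∂P := by
  have hv'v'' : v' < v'' := hv'.trans hv''
  -- measurability and integrability facts
  have hXm : AEStronglyMeasurable X P := hX.aestronglyMeasurable
  have hXvm : AEStronglyMeasurable Xv P := by
    rw [hXv]
    exact (aestronglyMeasurable_const.sup ((hXm.inf aestronglyMeasurable_const)))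
  have hXvbd : ∀ x, ‖Xv x‖ ≤ max ‖v'‖ ‖v''‖ := by
    intro x
    rw [hXv]
    simp only [Real.norm_eq_abs]
    rcases le_total (X x) v' with h | h
    · rw [min_eq_left (h.trans hv'v''.le), max_eq_left h]
      exact le_max_left _ _
    · rcases le_total (X x) v'' with h2 | h2
      · rw [min_eq_left h2, max_eq_right h]
        rw [abs_le]
        constructor
        · exact le_trans (neg_le_neg (le_max_left |v'| |v''|))
            (le_trans (neg_abs_le v') h)
        · exact le_trans h2 (le_trans (le_abs_self v'') (le_max_right _ _))
      · rw [min_eq_right h2, max_eq_right (hv'v''.le)]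
        exact le_max_right _ _
  have hXv2 : MemLp Xv 2 P :=
    MemLp.of_bound hXvm _ (Filter.Eventually.of_forall hXvbd)
  have hXint : Integrable X P := hX.integrable one_le_two
  have hXvint : Integrable Xv P := hXv2.integrable one_le_two
  have hmul : Integrable (fun x => Xv x * X x) P :=
    hXint.bdd_mul hXvm (Filter.Eventually.of_forall hXvbd)
  have hsq : Integrable (fun x => (Xv x) ^ 2) P := by
    have := hXvint.bdd_mul hXvm (Filter.Eventually.of_forall hXvbd)
    simpa [pow_two] using this
  have hp1 : Integrable (fun x => max (v' - X x) 0) P :=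
    ((integrable_const v').sub hXint).pos_part
  have hp2 : Integrable (fun x => max (X x - v'') 0) P :=
    (hXint.sub (integrable_const v'')).pos_part
  -- pointwise identity
  have key : ∀ x, Xv x * X x
      = (Xv x) ^ 2 + (v'' * max (X x - v'') 0 - v' * max (v' - X x) 0) := by
    intro x
    rw [hXv]
    simp only
    rcases le_total (X x) v' with h | h
    · rw [min_eq_left (h.trans hv'v''.le), max_eq_left h,
        max_eq_right (sub_nonpos.2 (h.trans hv'v''.le)),
        max_eq_left (sub_nonneg.2 h)]
      ring
    · rcases le_total (X x) v'' with h2 | h2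
      · rw [min_eq_left h2, max_eq_right h, max_eq_right (sub_nonpos.2 h2),
          max_eq_right (sub_nonpos.2 h)]
        ring
      · rw [min_eq_right h2, max_eq_right hv'v''.le,
          max_eq_left (sub_nonneg.2 h2), max_eq_right (sub_nonpos.2 (hv'v''.le.trans h2))]
        ring
  have hint : (∫ x, Xv x * X x ∂P)
      = (∫ x, (Xv x) ^ 2 ∂P) + r * (v'' - v') := by
    calc (∫ x, Xv x * X x ∂P)
        = ∫ x, (Xv x) ^ 2 + (v'' * max (X x - v'') 0 - v' * max (v' - X x) 0) ∂P := by
          exact integral_congr_ae (Filter.Eventually.of_forall key)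
      _ = (∫ x, (Xv x) ^ 2 ∂P)
            + ((∫ x, v'' * max (X x - v'') 0 ∂P) - ∫ x, v' * max (v' - X x) 0 ∂P) := by
          have hdiff : Integrable
              (fun x => v'' * max (X x - v'') 0 - v' * max (v' - X x) 0) P :=
            (hp2.const_mul v'').sub (hp1.const_mul v')
          rw [integral_add hsq hdiff,
            integral_sub (hp2.const_mul v'') (hp1.const_mul v')]
      _ = (∫ x, (Xv x) ^ 2 ∂P) + r * (v'' - v') := by
          rw [integral_const_mul, integral_const_mul, hv''eq, hv'eq]
          ring
  refine ⟨hint, ?_⟩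
  rw [hint]
  have h1 : 0 ≤ ∫ x, (Xv x) ^ 2 ∂P := integral_nonneg fun x => sq_nonneg _
  have h2 : 0 < r * (v'' - v') := mul_pos hr (sub_pos.2 hv'v'')
  linarith
end

section
/- Let (Ω, 𝔄, P) be a probability space, X ∈ L²(P) with E[X] = 0, and 0 < r < −essinf_P X (where essinf_P X denotes the P-essential infimum of X). Then there exists a unique u > 0 such that E[(X + r) ∧ u] = 0, where ∧ denotes pointwise minimum. -/
open MeasureTheory Filter Topology

/-- existence and uniqueness of the contamination clipping
constant `u > 0` with `E[(X + r) ∧ u] = 0`, provided `0 < r < −essinf_P X`. -/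
theorem contamination_clipping_constant_exists_unique
    {Ω : Type*} [MeasurableSpace Ω] (P : Measure Ω) [IsProbabilityMeasure P]
    (X : Ω → ℝ) (hX : MemLp X 2 P) (hcent : ∫ x, X x ∂P = 0)
    (r : ℝ) (hr : 0 < r) (hress : r < - essInf X P) :
    ∃! u : ℝ, 0 < u ∧ (∫ x, min (X x + r) u ∂P) = 0 := by
  have hXi : Integrable X P := hX.integrable one_le_two
  have hXr : Integrable (fun x => X x + r) P := hXi.add (integrable_const r)
  have hint : ∀ u : ℝ, Integrable (fun x => min (X x + r) u) P := by
    intro u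
    have := hXr.inf (integrable_const u)
    simpa [Pi.inf_def] using this
  set F : ℝ → ℝ := fun u => ∫ x, min (X x + r) u ∂P with hF
  have hXrint : ∫ x, (X x + r) ∂P = r := by
    rw [integral_add hXi (integrable_const r), hcent, integral_const]
    simp
  -- I := F 0 is negative
  have hInonpos : F 0 ≤ 0 :=
    integral_nonpos fun x => min_le_right _ 0
  have hIne : F 0 ≠ 0 := by
    intro h0
    have hnn : (0 : Ω → ℝ) ≤ fun x => -min (X x + r) 0 := fun x => by
      simp only [Pi.zero_apply, neg_nonneg]; exact min_le_right _ _
    have hi : Integrable (fun x => -min (X x + r) 0) P := (hint 0).neg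
    have hiz : ∫ x, -min (X x + r) 0 ∂P = 0 := by
      rw [integral_neg, neg_eq_zero]; exact h0
    have hae : (fun x => -min (X x + r) 0) =ᵐ[P] 0 :=
      (integral_eq_zero_iff_of_nonneg hnn hi).mp hiz
    have hae2 : ∀ᵐ x ∂P, (fun _ : Ω => (-r : ℝ)) x ≤ X x := by
      filter_upwards [hae] with x hx
      have : min (X x + r) 0 = 0 := by
        have := congrArg Neg.neg hx
        simpa using hx
      have h1 : 0 ≤ X x + r := by
        by_contra hc
        push_neg at hc
        rw [min_eq_left hc.le] at this
        linarith
      linarith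
    have hbdd : BddAbove {a : ℝ | P {x | X x < a} = 0} := by
      refine ⟨0, fun a ha => ?_⟩
      have hmeas : ∀ᵐ x ∂P, a ≤ X x := by
        rw [ae_iff]
        simpa only [not_le, Set.mem_setOf_eq] using ha
      have hle := integral_mono_ae (integrable_const a) hXi hmeas
      rw [integral_const, hcent] at hle
      simpa using hle
    have hmem : (-r : ℝ) ∈ {a : ℝ | P {x | X x < a} = 0} := by
      have : ∀ᵐ x ∂P, -r ≤ X x := hae2
      rw [ae_iff] at this
      simpa only [not_le, Set.mem_setOf_eq] using this
    have hle : (-r : ℝ) ≤ essInf X P := by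
      rw [essInf_eq_sSup]
      exact le_csSup hbdd hmem
    linarith
  have hI : F 0 < 0 := lt_of_le_of_ne hInonpos hIne
  -- F u ≤ u + F 0 for u ≥ 0
  have hFle : ∀ u : ℝ, 0 ≤ u → F u ≤ u + F 0 := by
    intro u hu
    have hpt : ∀ x, min (X x + r) u ≤ u + min (X x + r) 0 := by
      intro x
      rcases le_total (X x + r) 0 with h | h
      · rw [min_eq_left h]
        have : min (X x + r) u ≤ X x + r := min_le_left _ _
        linarith
      · rw [min_eq_right h]
        have : min (X x + r) u ≤ u := min_le_right _ _
        linarith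
    calc F u ≤ ∫ x, (u + min (X x + r) 0) ∂P :=
          integral_mono (hint u) ((integrable_const u).add (hint 0)) hpt
      _ = u + F 0 := by
          rw [integral_add (integrable_const u) (hint 0), integral_const]
          simp
          rfl
  -- F is Lipschitz hence continuous
  have hlip : LipschitzWith 1 F := by
    apply LipschitzWith.of_dist_le_mul
    intro u v
    rw [Real.dist_eq, Real.dist_eq, NNReal.coe_one, one_mul]
    have : F u - F v = ∫ x, (min (X x + r) u - min (X x + r) v) ∂P := by
      rw [integral_sub (hint u) (hint v)]
    rw [this]
    calc |∫ x, (min (X x + r) u - min (X x + r) v) ∂P|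
        ≤ ∫ x, |min (X x + r) u - min (X x + r) v| ∂P := by
          simpa [Real.norm_eq_abs] using
            norm_integral_le_integral_norm (fun x => min (X x + r) u - min (X x + r) v)
      _ ≤ ∫ _ : Ω, |u - v| ∂P := by
          apply integral_mono ((hint u).sub (hint v)).abs (integrable_const _)
          intro x
          have := abs_min_sub_min_le_max (X x + r) u (X x + r) v
          simpa using this
      _ = |u - v| := by simp
  have hcont : Continuous F := hlip.continuous
  -- F (n : ℕ) tends to r
  have hT : Tendsto (fun n : ℕ => F n) atTop (𝓝 r) := by
    rw [← hXrint]
    apply tendsto_integral_of_dominated_convergence (fun x => |X x + r|)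
      (fun n => (hint n).aestronglyMeasurable) hXr.abs
    · intro n
      filter_upwards with x
      rw [Real.norm_eq_abs, abs_le]
      constructor
      · exact le_min (neg_abs_le _) ((neg_nonpos_of_nonneg (abs_nonneg _)).trans (Nat.cast_nonneg n))
      · exact (min_le_left _ _).trans (le_abs_self _)
    · filter_upwards with x
      obtain ⟨N, hN⟩ := exists_nat_ge (X x + r)
      apply Tendsto.congr' _ tendsto_const_nhds
      filter_upwards [eventually_ge_atTop N] with n hn
      exact (min_eq_left (hN.trans (Nat.cast_le.2 hn))).symm
  -- existence
  set u0 : ℝ := -(F 0) / 2 with hu0def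
  have hu0 : 0 < u0 := by rw [hu0def]; linarith
  have hFu0 : F u0 < 0 := by
    have := hFle u0 hu0.le
    rw [hu0def] at this ⊢
    linarith
  obtain ⟨n, hn1, hn2⟩ : ∃ n : ℕ, 0 < F n ∧ u0 ≤ (n : ℝ) := by
    have h1 : ∀ᶠ n : ℕ in atTop, 0 < F n := hT.eventually (eventually_gt_nhds hr)
    have h2 : ∀ᶠ n : ℕ in atTop, u0 ≤ (n : ℝ) :=
      tendsto_natCast_atTop_atTop.eventually_ge_atTop u0
    exact (h1.and h2).exists
  have hsub := intermediate_value_Icc hn2 hcont.continuousOn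
  have h0mem : (0 : ℝ) ∈ Set.Icc (F u0) (F n) := ⟨hFu0.le, hn1.le⟩
  obtain ⟨u, humem, hFu⟩ := hsub h0mem
  -- uniqueness
  have key : ∀ a b : ℝ, 0 < a → F a = 0 → F b = 0 → a < b → False := by
    intro a b ha hFa hFb hab
    have hg : ∀ x, 0 ≤ min (X x + r) b - min (X x + r) a := by
      intro x
      have : min (X x + r) a ≤ min (X x + r) b := min_le_min le_rfl hab.le
      linarith
    have hgint : Integrable (fun x => min (X x + r) b - min (X x + r) a) P :=
      (hint b).sub (hint a)
    have hzero : ∫ x, (min (X x + r) b - min (X x + r) a) ∂P = 0 := by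
      rw [integral_sub (hint b) (hint a)]
      change F b - F a = 0
      rw [hFa, hFb]; ring
    have hae : (fun x => min (X x + r) b - min (X x + r) a) =ᵐ[P] 0 := by
      rw [← integral_eq_zero_iff_of_nonneg hg hgint]
      exact hzero
    have hae2 : (fun x => min (X x + r) a) =ᵐ[P] (fun x => X x + r) := by
      filter_upwards [hae] with x hx
      simp only [Pi.zero_apply] at hx
      have heq : min (X x + r) b = min (X x + r) a := by linarith
      have hxa : X x + r ≤ a := by
        by_contra hc
        push_neg at hc
        rw [min_eq_right hc.le] at heq
        have : a < min (X x + r) b := lt_min hc hab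
        rw [heq] at this
        exact lt_irrefl a this
      exact min_eq_left hxa
    have : F a = r := by
      rw [hF]
      calc ∫ x, min (X x + r) a ∂P = ∫ x, (X x + r) ∂P := integral_congr_ae hae2
        _ = r := hXrint
    rw [hFa] at this
    exact hr.ne this
  refine ⟨u, ⟨lt_of_lt_of_le hu0 humem.1, hFu⟩, ?_⟩
  rintro v ⟨hv, hFv⟩
  rcases lt_trichotomy v u with h | h | h
  · exact absurd h (fun h => key v u hv hFv hFu h)
  · exact h
  · exact absurd h (fun h => key u v (lt_of_lt_of_le hu0 humem.1) hFu hFv h)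
end

section
/- Let (Ω, 𝔄, P) be a probability space, X ∈ L²(P) with E[X] = 0, and r > 0. If r < −essinf_P X, let u > 0 be the unique constant with E[(X + r) ∧ u] = 0; then the metric projection of X onto the contamination tangent ball G_c(r) = {g ∈ L²(P) : E[g] = 0, g ≥ −r P-a.e.} equals X − ((X + r) ∧ u), i.e. the residual X − π(X) is (X + r) ∧ u. If instead X ≥ −r P-a.e., then π(X) = X and the residual is 0. -/
open MeasureTheory

/-- the metric projection `p` of `X` onto the contamination
tangent ball `G_c(r) = {g ∈ L²(P) : E[g] = 0, g ≥ −r a.e.}` has residual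
`X - p = (X + r) ∧ u` when `r < −essinf_P X` (with `u` the clipping constant),
and `p = X` when `X ≥ −r` a.e. -/
theorem contamination_projection_residual_is_clipped
    {Ω : Type*} [MeasurableSpace Ω] (P : Measure Ω) [IsProbabilityMeasure P]
    (r : ℝ) (hr : 0 < r)
    (X : Lp ℝ 2 P) (hcent : ∫ x, X x ∂P = 0)
    (G : Set (Lp ℝ 2 P))
    (hG : G = {g : Lp ℝ 2 P | (∫ x, g x ∂P) = 0 ∧ ∀ᵐ x ∂P, -r ≤ g x})
    (p : Lp ℝ 2 P) (hpG : p ∈ G) (hpmin : ∀ g ∈ G, ‖X - p‖ ≤ ‖X - g‖) :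
    (∀ u : ℝ, 0 < u → (∫ x, min (X x + r) u ∂P) = 0 →
      r < - essInf (fun x => X x) P →
      (fun x => X x - p x) =ᵐ[P] fun x => min (X x + r) u) ∧
    ((∀ᵐ x ∂P, -r ≤ X x) → p = X) := by
  subst hG
  constructor
  · intro u hu hint hress
    -- the clipped function
    have hXmem : MemLp (fun x => X x) 2 P := Lp.memLp X
    have hfmem : MemLp (fun x => min (X x + r) u) 2 P := by
      have h1 : MemLp (fun x => X x + r) 2 P := hXmem.add (memLp_const r)
      have h2 : MemLp (fun _ : Ω => u) 2 P := memLp_const u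
      exact h1.inf h2
    set fL : Lp ℝ 2 P := hfmem.toLp _ with hfL
    have hfL_coe : fL =ᵐ[P] fun x => min (X x + r) u := hfmem.coeFn_toLp
    set g0 : Lp ℝ 2 P := X - fL with hg0
    have hg0_coe : (g0 : Ω → ℝ) =ᵐ[P] fun x => X x - min (X x + r) u := by
      filter_upwards [Lp.coeFn_sub X fL, hfL_coe] with x h1 h2
      rw [h1, Pi.sub_apply, h2]
    -- g0 ∈ G
    have hXint : Integrable (fun x => X x) P := hXmem.integrable one_le_two
    have hfint : Integrable (fun x => min (X x + r) u) P := hfmem.integrable one_le_two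
    have hg0_int0 : ∫ x, g0 x ∂P = 0 := by
      rw [integral_congr_ae hg0_coe, integral_sub hXint hfint, hcent, hint, sub_zero]
    have hg0_ge : ∀ᵐ x ∂P, -r ≤ g0 x := by
      filter_upwards [hg0_coe] with x h1
      rw [h1]
      have : min (X x + r) u ≤ X x + r := min_le_left _ _
      linarith
    have hg0G : g0 ∈ {g : Lp ℝ 2 P | (∫ x, g x ∂P) = 0 ∧ ∀ᵐ x ∂P, -r ≤ g x} :=
      ⟨hg0_int0, hg0_ge⟩
    -- key inner product inequality: ⟪fL, p - g0⟫ ≤ 0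
    have hpint : Integrable (fun x => p x) P := (Lp.memLp p).integrable one_le_two
    have hinner : (inner ℝ fL (p - g0) : ℝ) ≤ 0 := by
      rw [L2.inner_def]
      have hptw : ∀ᵐ x ∂P, (inner ℝ (fL x) ((p - g0) x) : ℝ) ≤ u * ((p - g0) x) := by
        filter_upwards [hfL_coe, hg0_coe, hpG.2, Lp.coeFn_sub p g0] with x h1 h2 h3 h4
        rw [h4, Pi.sub_apply, RCLike.inner_apply, conj_trivial, h1, h2, mul_comm]
        rcases le_or_gt (X x + r) u with hle | hlt
        · have hmin : min (X x + r) u = X x + r := min_eq_left hle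
          rw [hmin]
          have hnn : 0 ≤ p x - (X x - (X x + r)) := by linarith
          exact mul_le_mul_of_nonneg_right hle hnn
        · have hmin : min (X x + r) u = u := min_eq_right hlt.le
          rw [hmin]
      have hI1 : Integrable (fun x => (inner ℝ (fL x) ((p - g0) x) : ℝ)) P :=
        L2.integrable_inner (𝕜 := ℝ) fL (p - g0)
      have hI2 : Integrable (fun x => u * ((p - g0) x)) P :=
        (((Lp.memLp (p - g0)).integrable one_le_two)).const_mul u
      calc ∫ x, (inner ℝ (fL x) ((p - g0) x) : ℝ) ∂P
          ≤ ∫ x, u * ((p - g0) x) ∂P := integral_mono_ae hI1 hI2 hptw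
        _ = u * ∫ x, (p - g0) x ∂P := integral_const_mul u _
        _ = 0 := by
            have : ∫ x, (p - g0) x ∂P = 0 := by
              rw [integral_congr_ae (Lp.coeFn_sub p g0)]
              simp only [Pi.sub_apply]
              rw [integral_sub (hpint) ((Lp.memLp g0).integrable one_le_two)]
              simp only [hpG.1, hg0_int0, sub_zero]
            rw [this, mul_zero]
      -- done
    -- norm comparison forces p = g0
    have hXg0 : X - g0 = fL := by rw [hg0]; abel
    have hnorm1 : ‖X - p‖ ≤ ‖fL‖ := by
      have := hpmin g0 hg0G
      rwa [hXg0] at this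
    have hexp : ‖X - p‖ ^ 2 = ‖fL‖ ^ 2 - 2 * (inner ℝ fL (p - g0) : ℝ) + ‖p - g0‖ ^ 2 := by
      have h : X - p = fL - (p - g0) := by rw [hg0]; abel
      rw [h, @norm_sub_sq_real (Lp ℝ 2 P)]
    have hpg0 : p = g0 := by
      have h1 : ‖fL‖ ^ 2 + ‖p - g0‖ ^ 2 ≤ ‖X - p‖ ^ 2 := by nlinarith
      have h2 : ‖X - p‖ ^ 2 ≤ ‖fL‖ ^ 2 := by
        have h0 : (0:ℝ) ≤ ‖X - p‖ := norm_nonneg _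
        nlinarith
      have : ‖p - g0‖ ^ 2 ≤ 0 := by linarith
      have : ‖p - g0‖ = 0 := by nlinarith [norm_nonneg (p - g0)]
      have := norm_eq_zero.mp this
      exact sub_eq_zero.mp this
    subst hpg0
    filter_upwards [hg0_coe] with x h1
    rw [h1]; ring
  · intro hXge
    have hXG : X ∈ {g : Lp ℝ 2 P | (∫ x, g x ∂P) = 0 ∧ ∀ᵐ x ∂P, -r ≤ g x} :=
      ⟨hcent, hXge⟩
    have := hpmin X hXG
    rw [sub_self, norm_zero] at this
    have h0 : ‖X - p‖ = 0 := le_antisymm this (norm_nonneg _)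
    have := norm_eq_zero.mp h0
    have := sub_eq_zero.mp this
    exact this.symm
end

section
/- Let (Ω, 𝔄, P) be a probability space, X ∈ L²(P) with E[X] = 0, and 0 < r < −essinf_P X. Let u > 0 be the unique constant with E[(X + r) ∧ u] = 0 and set X⁽ᶜ⁾ = (X + r) ∧ u. Then E[X⁽ᶜ⁾ X] = E[(X⁽ᶜ⁾)²] + E[X⁽ᶜ⁾ (X + r − X⁽ᶜ⁾)], and E[X⁽ᶜ⁾ X] > 0. -/
open MeasureTheory

private lemma l2_mul_integrable {Ω : Type*} [MeasurableSpace Ω] {P : Measure Ω}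
    {f g : Ω → ℝ} (hf : MemLp f 2 P) (hg : MemLp g 2 P) :
    Integrable (fun x => f x * g x) P := by
  have h : MemLp (f • g) 1 P := hg.smul hf
  exact memLp_one_iff_integrable.mp h

/-- for the clipped scores `X⁽ᶜ⁾ = (X + r) ∧ u` in the
contamination model, `E[X⁽ᶜ⁾ X] = E[(X⁽ᶜ⁾)²] + E[X⁽ᶜ⁾(X + r − X⁽ᶜ⁾)]`, and
`E[X⁽ᶜ⁾ X] > 0`. -/
theorem contamination_clipped_scores_inner_product
    {Ω : Type*} [MeasurableSpace Ω] (P : Measure Ω) [IsProbabilityMeasure P]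
    (X : Ω → ℝ) (hX : MemLp X 2 P) (hcent : ∫ x, X x ∂P = 0)
    (r : ℝ) (hr : 0 < r) (hress : r < - essInf X P)
    (u : ℝ) (hu : 0 < u) (hueq : (∫ x, min (X x + r) u ∂P) = 0)
    (huuniq : ∀ u' : ℝ, 0 < u' → (∫ x, min (X x + r) u' ∂P) = 0 → u' = u)
    (Xc : Ω → ℝ) (hXc : Xc = fun x => min (X x + r) u) :
    (∫ x, Xc x * X x ∂P) =
      (∫ x, (Xc x) ^ 2 ∂P) + (∫ x, Xc x * (X x + r - Xc x) ∂P) ∧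
    0 < ∫ x, Xc x * X x ∂P := by
  have hXr : MemLp (fun x => X x + r) 2 P := hX.add (memLp_const r)
  have hXcL2 : MemLp Xc 2 P := by
    rw [hXc]
    exact hXr.inf (memLp_const u)
  have hI1 : Integrable (fun x => Xc x * X x) P := l2_mul_integrable hXcL2 hX
  have hI2 : Integrable (fun x => Xc x ^ 2) P := by
    have := l2_mul_integrable hXcL2 hXcL2
    exact this.congr (Filter.Eventually.of_forall fun x => by ring)
  have hI3 : Integrable (fun x => Xc x * (X x + r)) P := l2_mul_integrable hXcL2 hXr
  have hI4 : Integrable (fun x => Xc x * (X x + r - Xc x)) P := by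
    have h := hI3.sub hI2
    exact h.congr (Filter.Eventually.of_forall fun x => by
      simp only [Pi.sub_apply]; ring)
  have hIr : Integrable (fun x => r * Xc x) P :=
    (hXcL2.integrable (by norm_num)).const_mul r
  have hXc0 : ∫ x, Xc x ∂P = 0 := by rw [hXc]; exact hueq
  have key : (∫ x, Xc x * X x ∂P) =
      (∫ x, Xc x ^ 2 ∂P) + (∫ x, Xc x * (X x + r - Xc x) ∂P) := by
    have hpt : (∫ x, Xc x * X x ∂P) =
        ∫ x, (Xc x ^ 2 + Xc x * (X x + r - Xc x) - r * Xc x) ∂P := by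
      apply integral_congr_ae
      filter_upwards with x
      ring
    have e1 : ∫ x, (Xc x ^ 2 + Xc x * (X x + r - Xc x) - r * Xc x) ∂P
        = (∫ x, (Xc x ^ 2 + Xc x * (X x + r - Xc x)) ∂P) - ∫ x, r * Xc x ∂P :=
      integral_sub (hI2.add hI4) hIr
    have e2 : ∫ x, (Xc x ^ 2 + Xc x * (X x + r - Xc x)) ∂P
        = (∫ x, Xc x ^ 2 ∂P) + ∫ x, Xc x * (X x + r - Xc x) ∂P :=
      integral_add hI2 hI4
    rw [hpt, e1, e2, integral_const_mul, hXc0, mul_zero, sub_zero]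
  have h4nn : 0 ≤ ∫ x, Xc x * (X x + r - Xc x) ∂P := by
    apply integral_nonneg
    intro x
    rw [hXc]
    dsimp only
    rcases le_total (X x + r) u with h | h
    · simp [min_eq_left h]
    · rw [min_eq_right h]
      exact mul_nonneg hu.le (by linarith)
  have h2pos : 0 < ∫ x, Xc x ^ 2 ∂P := by
    rcases (integral_nonneg (f := fun x => Xc x ^ 2) fun x => sq_nonneg (Xc x)).lt_or_eq with h | h
    · exact h
    · exfalso
      have hz : (fun x => Xc x ^ 2) =ᵐ[P] 0 :=
        (integral_eq_zero_iff_of_nonneg (fun x => sq_nonneg (Xc x)) hI2).mp h.symm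
      have hXm : X =ᵐ[P] fun _ => -r := by
        filter_upwards [hz] with x hx
        have hx0 : Xc x = 0 := by
          have : Xc x ^ 2 = 0 := hx
          exact pow_eq_zero_iff (by norm_num) |>.mp this
        rw [hXc] at hx0
        dsimp only at hx0
        rcases le_total (X x + r) u with h' | h'
        · rw [min_eq_left h'] at hx0; linarith
        · rw [min_eq_right h'] at hx0; linarith
      have hcon : ∫ x, X x ∂P = -r := by
        rw [integral_congr_ae hXm]
        simp
      rw [hcent] at hcon
      linarith
  refine ⟨key, ?_⟩
  rw [key]
  exact add_pos_of_pos_of_nonneg h2pos h4nn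
end

section
/- Let (Ω, 𝔄, P) be a probability space, Λ ∈ L²(P; ℝ^k) with E[Λ] = 0, and let G be a closed linear subspace of L²(P) with E[g] = 0 for all g ∈ G. Let π_G : L²(P) → G be the orthogonal projection, applied coordinatewise to Λ, and set 𝒥 = E[(Λ − π_G Λ)(Λ − π_G Λ)ᵀ]. Define Ψ = {ψ ∈ L²(P; ℝ^k) : E[ψ] = 0, E[ψ Λᵀ] = I_k, and E[ψ g] = 0 for all g ∈ G}. Then the following are equivalent: (i) Ψ ≠ ∅; (ii) 𝒥 is positive definite; (iii) for every a ∈ ℝ^k with a ≠ 0, the scalar function aᵀΛ does not belong to G. -/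
open MeasureTheory RealInnerProductSpace Matrix

section aux
variable {Ω : Type*} [MeasurableSpace Ω] {P : Measure Ω}

lemma aux_inner_eq (f g : Lp ℝ 2 P) : ⟪f, g⟫ = ∫ x, f x * g x ∂P := by
  rw [MeasureTheory.L2.inner_def]
  simp [RCLike.inner_apply, conj_trivial, mul_comm]

lemma aux_inner_one [IsProbabilityMeasure P] (f : Lp ℝ 2 P) :
    ⟪f, Lp.const 2 P (1:ℝ)⟫ = ∫ x, f x ∂P := by
  rw [MeasureTheory.L2.inner_def]
  apply integral_congr_ae
  filter_upwards [Lp.coeFn_const 2 P (1:ℝ)] with x hx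
  simp [hx, RCLike.inner_apply]

end aux

/-- existence of influence curves is equivalent to positive
definiteness of the Fisher information `𝒥` of the residual scores, and to
the condition that no nontrivial linear combination `aᵀΛ` lies in the
nuisance tangent space `G`. -/
theorem influence_curves_exist_iff_fisher_info_posdef
    {Ω : Type*} [MeasurableSpace Ω] (P : Measure Ω) [IsProbabilityMeasure P]
    (k : ℕ) (Λ : Fin k → Lp ℝ 2 P) (hcent : ∀ i, ∫ x, Λ i x ∂P = 0)
    (G : Submodule ℝ (Lp ℝ 2 P)) (hGclosed : IsClosed (G : Set (Lp ℝ 2 P)))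
    (hGcent : ∀ g ∈ G, ∫ x, g x ∂P = 0)
    (πΛ : Fin k → Lp ℝ 2 P)
    (hπmem : ∀ i, πΛ i ∈ G)
    (hπorth : ∀ i, ∀ g ∈ G, ∫ x, (Λ i x - πΛ i x) * g x ∂P = 0)
    (𝒥 : Matrix (Fin k) (Fin k) ℝ)
    (hJ : ∀ i j, 𝒥 i j = ∫ x, (Λ i x - πΛ i x) * (Λ j x - πΛ j x) ∂P)
    (Ψ : Set (Fin k → Lp ℝ 2 P))
    (hΨ : Ψ = {ψ | (∀ i, ∫ x, ψ i x ∂P = 0) ∧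
      (∀ i j, (∫ x, ψ i x * Λ j x ∂P) = if i = j then 1 else 0) ∧
      (∀ g ∈ G, ∀ i, ∫ x, ψ i x * g x ∂P = 0)}) :
    (Ψ.Nonempty ↔ 𝒥.PosDef) ∧
    (𝒥.PosDef ↔ ∀ a : Fin k → ℝ, a ≠ 0 → (∑ i, a i • Λ i) ∉ G) := by
  set R : Fin k → Lp ℝ 2 P := fun i => Λ i - πΛ i with hRdef
  have hint : ∀ f : Lp ℝ 2 P, Integrable f P := fun f => (Lp.memLp f).integrable (by norm_num)
  have hRcoe : ∀ i, ∀ᵐ x ∂P, (R i : Ω → ℝ) x = Λ i x - πΛ i x := fun i => Lp.coeFn_sub _ _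
  -- 𝒥 as Gram matrix
  have hJ' : ∀ i j, 𝒥 i j = ⟪R i, R j⟫ := by
    intro i j
    rw [hJ, aux_inner_eq]
    apply integral_congr_ae
    filter_upwards [hRcoe i, hRcoe j] with x h1 h2
    rw [h1, h2]
  -- residuals orthogonal to G
  have hRorth : ∀ i, ∀ g ∈ G, ⟪R i, g⟫ = 0 := by
    intro i g hg
    rw [aux_inner_eq, ← hπorth i g hg]
    apply integral_congr_ae
    filter_upwards [hRcoe i] with x h
    rw [h]
  -- residuals centered
  have hRcent : ∀ i, ∫ x, R i x ∂P = 0 := by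
    intro i
    have : ∫ x, R i x ∂P = ∫ x, (Λ i x - πΛ i x) ∂P :=
      integral_congr_ae (by filter_upwards [hRcoe i] with x h using h)
    rw [this, integral_sub (hint _) (hint _), hcent i, hGcent _ (hπmem i), sub_zero]
  set S : (Fin k → ℝ) → Lp ℝ 2 P := fun a => ∑ i, a i • R i with hSdef
  have hSinner : ∀ a (h : Lp ℝ 2 P), ⟪S a, h⟫ = ∑ i, a i * ⟪R i, h⟫ := by
    intro a h
    simp [hSdef, sum_inner, real_inner_smul_left]
  -- quadratic form
  have hquad : ∀ a : Fin k → ℝ, star a ⬝ᵥ 𝒥 *ᵥ a = ⟪S a, S a⟫ := by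
    intro a
    have h1 : ⟪S a, S a⟫ = ∑ i, ∑ j, a i * (a j * ⟪R i, R j⟫) := by
      rw [hSinner]
      refine Finset.sum_congr rfl fun i _ => ?_
      rw [hSdef]
      simp only [inner_sum, real_inner_smul_right, Finset.mul_sum]
    rw [h1]
    simp only [dotProduct, Matrix.mulVec, Pi.star_apply, star_trivial,
      Finset.mul_sum]
    refine Finset.sum_congr rfl fun i _ => Finset.sum_congr rfl fun j _ => ?_
    rw [hJ' i j]
    ring
  have hherm : 𝒥.IsHermitian :=
    Matrix.ext fun i j => by
      simp only [Matrix.conjTranspose_apply, star_trivial, hJ', real_inner_comm]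
  have hPD : 𝒥.PosDef ↔ ∀ a : Fin k → ℝ, a ≠ 0 → S a ≠ 0 := by
    constructor
    · intro hpd a ha hS
      have h := hpd.dotProduct_mulVec_pos ha
      rw [hquad, hS] at h
      simp at h
    · intro h
      refine Matrix.PosDef.of_dotProduct_mulVec_pos hherm fun a ha => ?_
      rw [hquad, real_inner_self_eq_norm_sq]
      exact pow_pos (norm_pos_iff.mpr (h a ha)) 2
  have hGiff : ∀ a : Fin k → ℝ, (∑ i, a i • Λ i) ∈ G ↔ S a = 0 := by
    intro a
    have hsplit : S a = (∑ i, a i • Λ i) - ∑ i, a i • πΛ i := by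
      rw [hSdef, ← Finset.sum_sub_distrib]
      exact Finset.sum_congr rfl fun i _ => by rw [smul_sub]
    have hπG : (∑ i, a i • πΛ i) ∈ G :=
      Submodule.sum_mem _ fun i _ => Submodule.smul_mem _ _ (hπmem i)
    constructor
    · intro hmem
      have hSG : S a ∈ G := by rw [hsplit]; exact Submodule.sub_mem _ hmem hπG
      have : ⟪S a, S a⟫ = 0 := by
        rw [hSinner]
        exact Finset.sum_eq_zero fun i _ => by rw [hRorth i _ hSG, mul_zero]
      exact inner_self_eq_zero.mp this
    · intro hS
      have h0 : (∑ i, a i • Λ i) - ∑ i, a i • πΛ i = 0 := by rw [← hsplit, hS]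
      rw [sub_eq_zero] at h0
      rw [h0]; exact hπG
  have main2 : 𝒥.PosDef ↔ ∀ a : Fin k → ℝ, a ≠ 0 → (∑ i, a i • Λ i) ∉ G := by
    rw [hPD]
    exact forall_congr' fun a => imp_congr_right fun _ => not_congr (hGiff a).symm
  refine ⟨?_, main2⟩
  constructor
  · -- Ψ nonempty → PosDef
    rintro ⟨ψ, hψ⟩
    rw [hΨ] at hψ
    obtain ⟨h1, h2, h3⟩ := hψ
    have hψR : ∀ i j, ⟪ψ i, R j⟫ = if i = j then 1 else 0 := by
      intro i j
      have e : ⟪ψ i, R j⟫ = ⟪ψ i, Λ j⟫ - ⟪ψ i, πΛ j⟫ := by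
        rw [hRdef]; exact inner_sub_right _ _ _
      have e1 : ⟪ψ i, Λ j⟫ = if i = j then 1 else 0 := by rw [aux_inner_eq]; exact h2 i j
      have e2 : ⟪ψ i, πΛ j⟫ = 0 := by rw [aux_inner_eq]; exact h3 _ (hπmem j) i
      rw [e, e1, e2, sub_zero]
    rw [hPD]
    intro a ha hS
    have hc : ⟪(∑ i, a i • ψ i : Lp ℝ 2 P), S a⟫ = ∑ i, a i * a i := by
      rw [sum_inner]
      refine Finset.sum_congr rfl fun i _ => ?_
      rw [real_inner_smul_left]
      congr 1
      rw [hSdef]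
      simp [inner_sum, real_inner_smul_right, hψR, Finset.sum_ite_eq', mul_comm]
    rw [hS, inner_zero_right] at hc
    have : ∀ i, a i = 0 := by
      intro i
      have h0 := (Finset.sum_eq_zero_iff_of_nonneg
        (fun j _ => mul_self_nonneg (a j))).mp hc.symm i (Finset.mem_univ i)
      exact mul_self_eq_zero.mp h0
    exact ha (funext this)
  · -- PosDef → Ψ nonempty
    intro hpd
    have hdet : IsUnit 𝒥.det := isUnit_iff_ne_zero.mpr (ne_of_gt hpd.det_pos)
    set C : Matrix (Fin k) (Fin k) ℝ := 𝒥⁻¹ with hC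
    have hCJ : C * 𝒥 = 1 := Matrix.nonsing_inv_mul _ hdet
    refine ⟨fun i => ∑ j, C i j • R j, ?_⟩
    rw [hΨ]
    have hψR : ∀ i j, ⟪(∑ l, C i l • R l : Lp ℝ 2 P), R j⟫ = if i = j then 1 else 0 := by
      intro i j
      rw [sum_inner]
      have : ∑ l, ⟪C i l • R l, R j⟫ = ∑ l, C i l * 𝒥 l j := by
        refine Finset.sum_congr rfl fun l _ => ?_
        rw [real_inner_smul_left, hJ']
      rw [this, ← Matrix.mul_apply, hCJ, Matrix.one_apply]
    have hψG : ∀ g ∈ G, ∀ i, ⟪(∑ l, C i l • R l : Lp ℝ 2 P), g⟫ = 0 := by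
      intro g hg i
      rw [sum_inner]
      exact Finset.sum_eq_zero fun l _ => by
        rw [real_inner_smul_left, hRorth l g hg, mul_zero]
    refine ⟨?_, ?_, ?_⟩
    · intro i
      rw [← aux_inner_one, sum_inner]
      exact Finset.sum_eq_zero fun l _ => by
        rw [real_inner_smul_left, aux_inner_one, hRcent l, mul_zero]
    · intro i j
      rw [← aux_inner_eq]
      have e0 : Λ j = R j + πΛ j := by
        show Λ j = (Λ j - πΛ j) + πΛ j
        abel
      have e : ⟪(∑ l, C i l • R l : Lp ℝ 2 P), Λ j⟫ =
          ⟪(∑ l, C i l • R l : Lp ℝ 2 P), R j⟫ +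
          ⟪(∑ l, C i l • R l : Lp ℝ 2 P), πΛ j⟫ := by
        rw [← inner_add_right, ← e0]
      rw [e, hψR i j, hψG _ (hπmem j) i, add_zero]
    · intro g hg i
      rw [← aux_inner_eq]
      exact hψG g hg i
end

section
/- Let (Ω, 𝔄, P) be a probability space, Λ ∈ L²(P; ℝ^k) with E[Λ] = 0, and let G be a closed linear subspace of L²(P) with E[g] = 0 for all g ∈ G. Let π_G be the orthogonal projection onto G (applied coordinatewise), set 𝒥 = E[(Λ − π_G Λ)(Λ − π_G Λ)ᵀ], assume 𝒥 is positive definite, and define the canonical influence curve ϱ = 𝒥⁻¹(Λ − π_G Λ). Then: (a) 𝒥 = E[(Λ − π_G Λ)Λᵀ] = E[ΛΛᵀ] − E[(π_G Λ)(π_G Λ)ᵀ]; (b) ϱ ∈ Ψ, where Ψ = {ψ ∈ L²(P; ℝ^k) : E[ψ] = 0, E[ψΛᵀ] = I_k, E[ψ g] = 0 ∀g ∈ G}; and (c) for every ψ ∈ Ψ, the coordinatewise orthogonal projection of ψ onto the closed subspace span{Λ₁, …, Λ_k} + G of L²(P) equals ϱ. -/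
open MeasureTheory

open RealInnerProductSpace in
private lemma inner_eq_int' {Ω : Type*} [MeasurableSpace Ω] {P : Measure Ω}
    (f g : Lp ℝ 2 P) (f' g' : Ω → ℝ) (hf : ⇑f =ᵐ[P] f') (hg : ⇑g =ᵐ[P] g') :
    ⟪f, g⟫ = ∫ x, f' x * g' x ∂P := by
  rw [MeasureTheory.L2.inner_def]
  refine integral_congr_ae ?_
  filter_upwards [hf, hg] with x hfx hgx
  simp [RCLike.inner_apply, hfx, hgx]
  ring

open RealInnerProductSpace in
private lemma inner_eq_int {Ω : Type*} [MeasurableSpace Ω] {P : Measure Ω}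
    (f g : Lp ℝ 2 P) : ⟪f, g⟫ = ∫ x, f x * g x ∂P :=
  inner_eq_int' f g _ _ Filter.EventuallyEq.rfl Filter.EventuallyEq.rfl

open RealInnerProductSpace in
private lemma int_eq_inner_one {Ω : Type*} [MeasurableSpace Ω] {P : Measure Ω}
    [IsProbabilityMeasure P] (f : Lp ℝ 2 P) :
    ∫ x, f x ∂P = ⟪f, Lp.const 2 P (1 : ℝ)⟫ := by
  rw [inner_eq_int' f (Lp.const 2 P (1 : ℝ)) (⇑f) (Function.const Ω 1)
    Filter.EventuallyEq.rfl (Lp.coeFn_const (μ := P) (p := 2) (c := (1 : ℝ)))]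
  simp

open RealInnerProductSpace in
/-- the canonical influence curve `ϱ = 𝒥⁻¹(Λ − π_G Λ)`:
(a) two expressions for the Fisher information `𝒥`; (b) `ϱ` is an influence
curve; (c) every influence curve projects (coordinatewise, orthogonally)
onto `ϱ` in the closed subspace `span{Λ₁,…,Λ_k} + G`. -/
theorem canonical_influence_curve_properties
    {Ω : Type*} [MeasurableSpace Ω] (P : Measure Ω) [IsProbabilityMeasure P]
    (k : ℕ) (Λ : Fin k → Lp ℝ 2 P) (hcent : ∀ i, ∫ x, Λ i x ∂P = 0)
    (G : Submodule ℝ (Lp ℝ 2 P)) (hGclosed : IsClosed (G : Set (Lp ℝ 2 P)))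
    (hGcent : ∀ g ∈ G, ∫ x, g x ∂P = 0)
    (πΛ : Fin k → Lp ℝ 2 P)
    (hπmem : ∀ i, πΛ i ∈ G)
    (hπorth : ∀ i, ∀ g ∈ G, ∫ x, (Λ i x - πΛ i x) * g x ∂P = 0)
    (𝒥 : Matrix (Fin k) (Fin k) ℝ)
    (hJ : ∀ i j, 𝒥 i j = ∫ x, (Λ i x - πΛ i x) * (Λ j x - πΛ j x) ∂P)
    (hJpos : 𝒥.PosDef)
    (ϱ : Fin k → Lp ℝ 2 P)
    (hϱ : ∀ i, ϱ i = ∑ j, 𝒥⁻¹ i j • (Λ j - πΛ j))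
    (Ψ : Set (Fin k → Lp ℝ 2 P))
    (hΨ : Ψ = {ψ | (∀ i, ∫ x, ψ i x ∂P = 0) ∧
      (∀ i j, (∫ x, ψ i x * Λ j x ∂P) = if i = j then 1 else 0) ∧
      (∀ g ∈ G, ∀ i, ∫ x, ψ i x * g x ∂P = 0)}) :
    (∀ i j, 𝒥 i j = ∫ x, (Λ i x - πΛ i x) * Λ j x ∂P) ∧
    (∀ i j, 𝒥 i j = (∫ x, Λ i x * Λ j x ∂P) - ∫ x, πΛ i x * πΛ j x ∂P) ∧
    ϱ ∈ Ψ ∧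
    (∀ ψ ∈ Ψ, ∀ i,
      ϱ i ∈ (Submodule.span ℝ (Set.range Λ)) ⊔ G ∧
      ∀ g ∈ (Submodule.span ℝ (Set.range Λ)) ⊔ G,
        ∫ x, (ψ i x - ϱ i x) * g x ∂P = 0) := by
  set one : Lp ℝ 2 P := Lp.const 2 P (1 : ℝ) with hone
  -- hypotheses in inner-product form
  have hcent' : ∀ i, ⟪Λ i, one⟫ = 0 := fun i => by
    rw [← int_eq_inner_one]; exact hcent i
  have hG1 : ∀ g ∈ G, ⟪g, one⟫ = 0 := fun g hg => by
    rw [← int_eq_inner_one]; exact hGcent g hg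
  have hπorth' : ∀ i, ∀ g ∈ G, ⟪Λ i - πΛ i, g⟫ = 0 := fun i g hg => by
    rw [inner_eq_int' (Λ i - πΛ i) g (fun x => Λ i x - πΛ i x) (⇑g)
      (Lp.coeFn_sub (Λ i) (πΛ i)) Filter.EventuallyEq.rfl]
    exact hπorth i g hg
  -- (a1): 𝒥 i j = ⟪Λ i - πΛ i, Λ j⟫
  have ha1 : ∀ i j, 𝒥 i j = ⟪Λ i - πΛ i, Λ j⟫ := by
    intro i j
    have hJ' : 𝒥 i j = ⟪Λ i - πΛ i, Λ j - πΛ j⟫ := by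
      rw [inner_eq_int' (Λ i - πΛ i) (Λ j - πΛ j) (fun x => Λ i x - πΛ i x)
        (fun x => Λ j x - πΛ j x) (Lp.coeFn_sub (Λ i) (πΛ i))
        (Lp.coeFn_sub (Λ j) (πΛ j))]
      exact hJ i j
    rw [hJ', inner_sub_right, hπorth' i (πΛ j) (hπmem j), sub_zero]
  have ha1' : ∀ i j, 𝒥 i j = ∫ x, (Λ i x - πΛ i x) * Λ j x ∂P := by
    intro i j
    rw [ha1 i j, inner_eq_int' (Λ i - πΛ i) (Λ j) (fun x => Λ i x - πΛ i x) (⇑(Λ j))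
      (Lp.coeFn_sub (Λ i) (πΛ i)) Filter.EventuallyEq.rfl]
  -- (a2)
  have ha2 : ∀ i j, 𝒥 i j = (∫ x, Λ i x * Λ j x ∂P) - ∫ x, πΛ i x * πΛ j x ∂P := by
    intro i j
    have h1 : ⟪πΛ i, Λ j⟫ = ⟪πΛ i, πΛ j⟫ := by
      have h0 : ⟪Λ j - πΛ j, πΛ i⟫ = 0 := hπorth' j (πΛ i) (hπmem i)
      rw [inner_sub_left] at h0
      have heq := sub_eq_zero.mp h0
      calc ⟪πΛ i, Λ j⟫ = ⟪Λ j, πΛ i⟫ := real_inner_comm _ _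
        _ = ⟪πΛ j, πΛ i⟫ := heq
        _ = ⟪πΛ i, πΛ j⟫ := real_inner_comm _ _
    rw [ha1 i j, inner_sub_left, h1, ← inner_eq_int, ← inner_eq_int]
  -- inner products against ϱ
  have hϱinner : ∀ i (g : Lp ℝ 2 P),
      ⟪ϱ i, g⟫ = ∑ j, 𝒥⁻¹ i j * ⟪Λ j - πΛ j, g⟫ := by
    intro i g
    rw [hϱ i, sum_inner]
    exact Finset.sum_congr rfl fun j _ => real_inner_smul_left _ _ _
  have hϱcent : ∀ i, ⟪ϱ i, one⟫ = 0 := by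
    intro i
    rw [hϱinner]
    refine Finset.sum_eq_zero fun j _ => ?_
    rw [inner_sub_left, hcent' j, hG1 (πΛ j) (hπmem j), sub_zero, mul_zero]
  have hJinv : 𝒥⁻¹ * 𝒥 = 1 :=
    Matrix.nonsing_inv_mul 𝒥 (isUnit_iff_ne_zero.mpr hJpos.det_pos.ne')
  have hϱunit : ∀ i j, ⟪ϱ i, Λ j⟫ = if i = j then 1 else 0 := by
    intro i j
    rw [hϱinner]
    have : ∑ l, 𝒥⁻¹ i l * ⟪Λ l - πΛ l, Λ j⟫ = (𝒥⁻¹ * 𝒥) i j := by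
      rw [Matrix.mul_apply]
      exact Finset.sum_congr rfl fun l _ => by rw [← ha1 l j]
    rw [this, hJinv, Matrix.one_apply]
  have hϱorth : ∀ g ∈ G, ∀ i, ⟪ϱ i, g⟫ = 0 := by
    intro g hg i
    rw [hϱinner]
    exact Finset.sum_eq_zero fun j _ => by rw [hπorth' j g hg, mul_zero]
  have hϱΨ : ϱ ∈ Ψ := by
    rw [hΨ]
    refine ⟨fun i => ?_, fun i j => ?_, fun g hg i => ?_⟩
    · rw [int_eq_inner_one]; exact hϱcent i
    · rw [← inner_eq_int]; exact hϱunit i j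
    · rw [← inner_eq_int]; exact hϱorth g hg i
  refine ⟨ha1', ha2, hϱΨ, ?_⟩
  -- (c)
  intro ψ hψ i
  rw [hΨ] at hψ
  obtain ⟨hψ1, hψ2, hψ3⟩ := hψ
  have hψunit : ∀ j, ⟪ψ i, Λ j⟫ = if i = j then 1 else 0 := fun j => by
    rw [inner_eq_int]; exact hψ2 i j
  have hψorth : ∀ g ∈ G, ⟪ψ i, g⟫ = 0 := fun g hg => by
    rw [inner_eq_int]; exact hψ3 g hg i
  constructor
  · rw [hϱ i]
    refine Submodule.sum_mem _ fun j _ => ?_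
    rw [smul_sub]
    exact Submodule.sub_mem _
      (Submodule.mem_sup_left (Submodule.smul_mem _ _
        (Submodule.subset_span ⟨j, rfl⟩)))
      (Submodule.mem_sup_right (Submodule.smul_mem _ _ (hπmem j)))
  · have hsup : Submodule.span ℝ (Set.range Λ) ⊔ G ≤ (ℝ ∙ (ψ i - ϱ i))ᗮ := by
      refine sup_le ?_ ?_
      · rw [Submodule.span_le]
        rintro _ ⟨j, rfl⟩
        rw [SetLike.mem_coe, Submodule.mem_orthogonal_singleton_iff_inner_right]
        rw [inner_sub_left, hψunit j, hϱunit i j, sub_self]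
      · intro g hg
        rw [Submodule.mem_orthogonal_singleton_iff_inner_right]
        rw [inner_sub_left, hψorth g hg, hϱorth g hg i, sub_zero]
    intro g hg
    have h0 : ⟪ψ i - ϱ i, g⟫ = 0 :=
      Submodule.mem_orthogonal_singleton_iff_inner_right.mp (hsup hg)
    rw [inner_eq_int' (ψ i - ϱ i) g (fun x => ψ i x - ϱ i x) (⇑g)
      (Lp.coeFn_sub (ψ i) (ϱ i)) Filter.EventuallyEq.rfl] at h0
    exact h0
end

section
/- Let (Ω, 𝔄, P) be a probability space, Λ ∈ L²(P; ℝ^k) with E[Λ] = 0, and suppose ℐ = E[ΛΛᵀ] is invertible. For β ≥ 0 and r ≥ 0, define the Hellinger mean square error of ψ ∈ L²(P; ℝ^k) as MSE_h(ψ; β, r) = E[|ψ|²] + 8βr²·λ_max(E[ψψᵀ]), where λ_max denotes the largest eigenvalue. Then ϱ̂ = ℐ⁻¹Λ minimizes MSE_h(·; β, r) over the set {ψ ∈ L²(P; ℝ^k) : E[ψ] = 0, E[ψΛᵀ] = I_k}, for every β ≥ 0 and r ≥ 0. -/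
open MeasureTheory

/-- The largest eigenvalue of a symmetric positive semidefinite real matrix,
as the supremum of its quadratic form over the unit sphere. -/
noncomputable def lambdaMax {k : ℕ} (A : Matrix (Fin k) (Fin k) ℝ) : ℝ :=
  sSup {t : ℝ | ∃ a : Fin k → ℝ, (∑ i, (a i) ^ 2) = 1 ∧
    t = ∑ i, ∑ j, a i * A i j * a j}

section helpers

lemma inner_self_le_of_inner_eq {E : Type*} [NormedAddCommGroup E] [InnerProductSpace ℝ E]
    (u v : E) (h : (inner ℝ u v : ℝ) = inner ℝ v v) : (inner ℝ v v : ℝ) ≤ (inner ℝ u u : ℝ) := by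
  have h0 : (0:ℝ) ≤ inner ℝ (u - v) (u - v) := real_inner_self_nonneg
  rw [inner_sub_sub_self] at h0
  rw [real_inner_comm u v] at h0
  linarith [h0, h]

lemma expand_inner_sum {Ω : Type*} [MeasurableSpace Ω] (P : Measure Ω)
    (k : ℕ) (f : Fin k → Lp ℝ 2 P) (a : Fin k → ℝ) :
    (inner ℝ (∑ i, a i • f i) (∑ j, a j • f j) : ℝ)
      = ∑ i, ∑ j, a i * (inner ℝ (f i) (f j) : ℝ) * a j := by
  rw [sum_inner]
  refine Finset.sum_congr rfl fun i _ => ?_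
  rw [inner_sum]
  refine Finset.sum_congr rfl fun j _ => ?_
  rw [real_inner_smul_left, real_inner_smul_right]
  ring

lemma lambdaMax_le_lambdaMax {k : ℕ} (A B : Matrix (Fin k) (Fin k) ℝ)
    (hA0 : ∀ a : Fin k → ℝ, 0 ≤ ∑ i, ∑ j, a i * A i j * a j)
    (hAB : ∀ a : Fin k → ℝ, (∑ i, (a i)^2) = 1 →
      (∑ i, ∑ j, a i * A i j * a j) ≤ ∑ i, ∑ j, a i * B i j * a j) :
    lambdaMax A ≤ lambdaMax B := by
  set SA := {t : ℝ | ∃ a : Fin k → ℝ, (∑ i, (a i) ^ 2) = 1 ∧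
    t = ∑ i, ∑ j, a i * A i j * a j} with hSA
  set SB := {t : ℝ | ∃ a : Fin k → ℝ, (∑ i, (a i) ^ 2) = 1 ∧
    t = ∑ i, ∑ j, a i * B i j * a j} with hSB
  have habs : ∀ a : Fin k → ℝ, (∑ i, (a i) ^ 2) = 1 → ∀ i, |a i| ≤ 1 := by
    intro a ha i
    rw [← sq_le_one_iff_abs_le_one, ← ha]
    exact Finset.single_le_sum (fun j _ => sq_nonneg (a j)) (Finset.mem_univ i)
  have hbdd : BddAbove SB := by
    refine ⟨∑ i, ∑ j, |B i j|, fun t ht => ?_⟩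
    obtain ⟨a, ha, rfl⟩ := ht
    refine Finset.sum_le_sum fun i _ => Finset.sum_le_sum fun j _ => ?_
    calc a i * B i j * a j ≤ |a i * B i j * a j| := le_abs_self _
      _ = |a i| * |B i j| * |a j| := by rw [abs_mul, abs_mul]
      _ ≤ 1 * |B i j| * 1 := by
          gcongr <;> [exact habs a ha i; exact habs a ha j]
      _ = |B i j| := by ring
  by_cases hex : ∃ a : Fin k → ℝ, (∑ i, (a i) ^ 2) = 1
  · obtain ⟨a₀, ha₀⟩ := hex
    have hB0 : (0:ℝ) ≤ lambdaMax B := by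
      have h1 : (∑ i, ∑ j, a₀ i * B i j * a₀ j) ∈ SB := ⟨a₀, ha₀, rfl⟩
      have := le_csSup hbdd h1
      exact le_trans (le_trans (hA0 a₀) (hAB a₀ ha₀)) this
    apply Real.sSup_le _ hB0
    intro t ht
    obtain ⟨a, ha, rfl⟩ := ht
    exact le_trans (hAB a ha) (le_csSup hbdd ⟨a, ha, rfl⟩)
  · have hA : SA = ∅ := by
      ext t; simp only [Set.mem_setOf_eq, Set.mem_empty_iff_false, iff_false]
      rintro ⟨a, ha, -⟩; exact hex ⟨a, ha⟩
    have : lambdaMax A = 0 := by rw [lambdaMax, ← hSA, hA, Real.sSup_empty]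
    rw [this]
    have hB : SB = ∅ := by
      ext t; simp only [Set.mem_setOf_eq, Set.mem_empty_iff_false, iff_false]
      rintro ⟨a, ha, -⟩; exact hex ⟨a, ha⟩
    rw [lambdaMax, ← hSB, hB, Real.sSup_empty]

end helpers

/-- the classical influence curve `ϱ̂ = ℐ⁻¹Λ` minimizes the
Hellinger mean square error `MSE_h(ψ; β, r) = E[|ψ|²] + 8βr²·λ_max(E[ψψᵀ])`
among all influence curves, for every `β ≥ 0` and `r ≥ 0`. -/
theorem classical_ic_minimizes_hellinger_mse
    {Ω : Type*} [MeasurableSpace Ω] (P : Measure Ω) [IsProbabilityMeasure P]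
    (k : ℕ) (Λ : Fin k → Lp ℝ 2 P) (hcent : ∀ i, ∫ x, Λ i x ∂P = 0)
    (ℐ : Matrix (Fin k) (Fin k) ℝ)
    (hI : ∀ i j, ℐ i j = ∫ x, Λ i x * Λ j x ∂P)
    (hIinv : IsUnit ℐ.det)
    (ϱhat : Fin k → Lp ℝ 2 P)
    (hϱhat : ∀ i, ϱhat i = ∑ j, ℐ⁻¹ i j • Λ j) :
    ∀ β r : ℝ, 0 ≤ β → 0 ≤ r →
    ∀ ψ : Fin k → Lp ℝ 2 P,
      (∀ i, ∫ x, ψ i x ∂P = 0) →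
      (∀ i j, (∫ x, ψ i x * Λ j x ∂P) = if i = j then 1 else 0) →
      (∫ x, ∑ i, (ϱhat i x) ^ 2 ∂P) +
          8 * β * r ^ 2 * lambdaMax (Matrix.of fun i j => ∫ x, ϱhat i x * ϱhat j x ∂P) ≤
        (∫ x, ∑ i, (ψ i x) ^ 2 ∂P) +
          8 * β * r ^ 2 * lambdaMax (Matrix.of fun i j => ∫ x, ψ i x * ψ j x ∂P) := by
  intro β r hβ hr ψ hψ0 hcross
  have hinner : ∀ f g : Lp ℝ 2 P, ∫ x, f x * g x ∂P = (inner ℝ f g : ℝ) := by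
    intro f g; rw [L2.inner_def]; simp [RCLike.inner_apply, mul_comm]
  have hΛ : ∀ i j, (inner ℝ (Λ i) (Λ j) : ℝ) = ℐ i j := fun i j => by
    rw [← hinner, ← hI]
  have hIsymm : ∀ i j, ℐ i j = ℐ j i := by
    intro i j; rw [hI, hI]; simp_rw [mul_comm]
  have hψΛ : ∀ i j, (inner ℝ (ψ i) (Λ j) : ℝ) = if i = j then 1 else 0 := fun i j => by
    rw [← hinner]; exact hcross i j
  have hone : ∀ j l, (∑ m, ℐ⁻¹ j m * ℐ m l) = if j = l then 1 else 0 := by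
    intro j l
    have h1 := Matrix.nonsing_inv_mul ℐ hIinv
    have h2 : (ℐ⁻¹ * ℐ) j l = (1 : Matrix (Fin k) (Fin k) ℝ) j l := by rw [h1]
    rw [Matrix.mul_apply] at h2
    rw [h2, Matrix.one_apply]
  have hΛϱ : ∀ l j, (inner ℝ (Λ l) (ϱhat j) : ℝ) = if l = j then 1 else 0 := by
    intro l j
    rw [hϱhat j, inner_sum]
    simp_rw [real_inner_smul_right, hΛ]
    have h3 : (∑ m, ℐ⁻¹ j m * ℐ l m) = ∑ m, ℐ⁻¹ j m * ℐ m l :=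
      Finset.sum_congr rfl fun m _ => by rw [hIsymm l m]
    rw [h3, hone]
    simp [eq_comm]
  have hϱϱ : ∀ i j, (inner ℝ (ϱhat i) (ϱhat j) : ℝ) = ℐ⁻¹ i j := by
    intro i j
    conv_lhs => rw [hϱhat i]
    rw [sum_inner]
    simp_rw [real_inner_smul_left, hΛϱ]
    simp
  have hIinvsymm : ∀ i j, ℐ⁻¹ i j = ℐ⁻¹ j i := by
    intro i j
    have ht : Matrix.transpose ℐ = ℐ := Matrix.ext fun i j => hIsymm j i
    have h2 : Matrix.transpose ℐ⁻¹ = ℐ⁻¹ := by rw [Matrix.transpose_nonsing_inv, ht]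
    have h3 := congrFun (congrFun h2 j) i
    rw [Matrix.transpose_apply] at h3
    exact h3
  have hψϱ : ∀ i j, (inner ℝ (ψ i) (ϱhat j) : ℝ) = (inner ℝ (ϱhat i) (ϱhat j) : ℝ) := by
    intro i j
    rw [hϱϱ i j]
    conv_lhs => rw [hϱhat j]
    rw [inner_sum]
    simp_rw [real_inner_smul_right, hψΛ]
    simp [hIinvsymm j i]
  have hcomp : ∀ i, (inner ℝ (ϱhat i) (ϱhat i) : ℝ) ≤ (inner ℝ (ψ i) (ψ i) : ℝ) :=
    fun i => inner_self_le_of_inner_eq _ _ (hψϱ i i)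
  have hint : ∀ f : Fin k → Lp ℝ 2 P,
      ∫ x, ∑ i, (f i x) ^ 2 ∂P = ∑ i, (inner ℝ (f i) (f i) : ℝ) := by
    intro f
    rw [integral_finset_sum]
    · exact Finset.sum_congr rfl fun i _ => by simp_rw [sq]; exact hinner (f i) (f i)
    · intro i _
      have h4 := L2.integrable_inner (𝕜 := ℝ) (f i) (f i)
      simpa [RCLike.inner_apply, sq, mul_comm] using h4
  have htrace : (∫ x, ∑ i, (ϱhat i x) ^ 2 ∂P) ≤ ∫ x, ∑ i, (ψ i x) ^ 2 ∂P := by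
    rw [hint, hint]
    exact Finset.sum_le_sum fun i _ => hcomp i
  have hMeq : ∀ f : Fin k → Lp ℝ 2 P,
      (Matrix.of fun i j => ∫ x, f i x * f j x ∂P)
        = Matrix.of fun i j => (inner ℝ (f i) (f j) : ℝ) := by
    intro f; ext i j; exact hinner _ _
  have hlmax : lambdaMax (Matrix.of fun i j => ∫ x, ϱhat i x * ϱhat j x ∂P)
      ≤ lambdaMax (Matrix.of fun i j => ∫ x, ψ i x * ψ j x ∂P) := by
    rw [hMeq, hMeq]
    apply lambdaMax_le_lambdaMax
    · intro a
      rw [show (∑ i, ∑ j, a i * (Matrix.of fun i j => (inner ℝ (ϱhat i) (ϱhat j) : ℝ)) i j * a j)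
          = ∑ i, ∑ j, a i * (inner ℝ (ϱhat i) (ϱhat j) : ℝ) * a j from rfl,
        ← expand_inner_sum]
      exact real_inner_self_nonneg
    · intro a _
      show (∑ i, ∑ j, a i * (inner ℝ (ϱhat i) (ϱhat j) : ℝ) * a j)
        ≤ ∑ i, ∑ j, a i * (inner ℝ (ψ i) (ψ j) : ℝ) * a j
      rw [← expand_inner_sum, ← expand_inner_sum]
      apply inner_self_le_of_inner_eq
      rw [sum_inner, sum_inner]
      refine Finset.sum_congr rfl fun i _ => ?_
      rw [real_inner_smul_left, real_inner_smul_left, inner_sum, inner_sum]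
      congr 1
      refine Finset.sum_congr rfl fun j _ => ?_
      rw [real_inner_smul_right, real_inner_smul_right, hψϱ]
  have h8 : (0:ℝ) ≤ 8 * β * r ^ 2 := by positivity
  exact add_le_add htrace (mul_le_mul_of_nonneg_left hlmax h8)
end

section
/- Let H be a real Hilbert space and G₀, G₁ ⊆ H nonempty, closed, convex, and disjoint sets such that G₁₀ = G₁ − G₀ is closed, and let q₁₀ be the unique minimum-norm element of G₁₀. If (g₀, g₁) and (q₀, q₁) are two pairs in G₀ × G₁ with g₁ − g₀ = q₁ − q₀ = q₁₀, then ⟨q₁₀, g₀⟩ = ⟨q₁₀, q₀⟩ and ⟨q₁₀, g₁⟩ = ⟨q₁₀, q₁⟩. -/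
open scoped RealInnerProductSpace

lemma min_norm_dir_nonneg {H : Type*} [NormedAddCommGroup H] [InnerProductSpace ℝ H]
    (q d : H) (h : ∀ s : ℝ, 0 < s → s ≤ 1 → ‖q‖ ≤ ‖q + s • d‖) : 0 ≤ ⟪q, d⟫ := by
  have key : ∀ s : ℝ, 0 < s → s ≤ 1 → 0 ≤ 2 * ⟪q, d⟫ + s * ‖d‖ ^ 2 := by
    intro s hs hs1
    have h1 := h s hs hs1
    have h2 : ‖q‖ ^ 2 ≤ ‖q + s • d‖ ^ 2 := by
      exact pow_le_pow_left₀ (norm_nonneg _) h1 2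
    have h3 : ‖q + s • d‖ ^ 2 = ‖q‖ ^ 2 + 2 * (s * ⟪q, d⟫) + s ^ 2 * ‖d‖ ^ 2 := by
      rw [← real_inner_self_eq_norm_sq, ← real_inner_self_eq_norm_sq,
        ← real_inner_self_eq_norm_sq]
      simp only [inner_add_add_self, real_inner_smul_left, real_inner_smul_right]
      rw [real_inner_comm d q]
      ring
    have h4 : 0 ≤ 2 * (s * ⟪q, d⟫) + s ^ 2 * ‖d‖ ^ 2 := by linarith
    have h5 : 0 ≤ s * (2 * ⟪q, d⟫ + s * ‖d‖ ^ 2) := by ring_nf; ring_nf at h4; linarith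
    nlinarith
  by_contra hneg
  push_neg at hneg
  rcases eq_or_ne d 0 with hd | hd
  · simp [hd] at hneg
  · have hdpos : (0:ℝ) < ‖d‖ ^ 2 := pow_pos (norm_pos_iff.mpr hd) 2
    set s := min 1 (-⟪q, d⟫ / ‖d‖ ^ 2) with hs
    have hs0 : 0 < s := lt_min one_pos (div_pos (by linarith) hdpos)
    have hs1 : s ≤ 1 := min_le_left _ _
    have h6 := key s hs0 hs1
    have h7 : s * ‖d‖ ^ 2 ≤ -⟪q, d⟫ := by
      have : s ≤ -⟪q, d⟫ / ‖d‖ ^ 2 := min_le_right _ _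
      calc s * ‖d‖ ^ 2 ≤ (-⟪q, d⟫ / ‖d‖ ^ 2) * ‖d‖ ^ 2 := by nlinarith
        _ = -⟪q, d⟫ := by field_simp
    linarith

/-- any two least favorable pairs realizing the minimum-norm
difference `q₁₀` have the same inner products with `q₁₀`:
`⟪q₁₀, g₀⟫ = ⟪q₁₀, q₀⟫` and `⟪q₁₀, g₁⟫ = ⟪q₁₀, q₁⟫`. -/
theorem least_favorable_pairs_same_inner_products
    {H : Type*} [NormedAddCommGroup H] [InnerProductSpace ℝ H] [CompleteSpace H]
    (G₀ G₁ : Set H)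
    (h₀ne : G₀.Nonempty) (h₁ne : G₁.Nonempty)
    (h₀cl : IsClosed G₀) (h₁cl : IsClosed G₁)
    (h₀cv : Convex ℝ G₀) (h₁cv : Convex ℝ G₁)
    (hdisj : Disjoint G₀ G₁)
    (G₁₀ : Set H) (hG₁₀ : G₁₀ = {d | ∃ g₀ ∈ G₀, ∃ g₁ ∈ G₁, d = g₁ - g₀})
    (hG₁₀cl : IsClosed G₁₀)
    (q₁₀ : H) (hq₁₀mem : q₁₀ ∈ G₁₀) (hq₁₀min : ∀ g ∈ G₁₀, ‖q₁₀‖ ≤ ‖g‖)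
    (g₀ q₀ : H) (hg₀ : g₀ ∈ G₀) (hq₀ : q₀ ∈ G₀)
    (g₁ q₁ : H) (hg₁ : g₁ ∈ G₁) (hq₁ : q₁ ∈ G₁)
    (hgdiff : g₁ - g₀ = q₁₀) (hqdiff : q₁ - q₀ = q₁₀) :
    ⟪q₁₀, g₀⟫ = ⟪q₁₀, q₀⟫ ∧ ⟪q₁₀, g₁⟫ = ⟪q₁₀, q₁⟫ := by
  set d := q₀ - g₀ with hd
  have hpos : 0 ≤ ⟪q₁₀, d⟫ := by
    apply min_norm_dir_nonneg
    intro s hs0 hs1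
    apply hq₁₀min
    rw [hG₁₀]
    refine ⟨(1 - s) • q₀ + s • g₀, h₀cv hq₀ hg₀ (by linarith) hs0.le (by ring), q₁, hq₁, ?_⟩
    rw [← hqdiff, hd]
    module
  have hneg : 0 ≤ ⟪q₁₀, -d⟫ := by
    apply min_norm_dir_nonneg
    intro s hs0 hs1
    apply hq₁₀min
    rw [hG₁₀]
    refine ⟨(1 - s) • g₀ + s • q₀, h₀cv hg₀ hq₀ (by linarith) hs0.le (by ring), g₁, hg₁, ?_⟩
    rw [← hgdiff, hd]
    module
  rw [inner_neg_right] at hneg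
  have hz : ⟪q₁₀, d⟫ = 0 := le_antisymm (by linarith) hpos
  have h0 : ⟪q₁₀, g₀⟫ = ⟪q₁₀, q₀⟫ := by
    have : ⟪q₁₀, q₀⟫ - ⟪q₁₀, g₀⟫ = 0 := by rw [← inner_sub_right]; exact hz
    linarith
  refine ⟨h0, ?_⟩
  have : g₁ = q₁₀ + g₀ := by rw [← hgdiff]; abel
  have h2 : q₁ = q₁₀ + q₀ := by rw [← hqdiff]; abel
  rw [this, h2, inner_add_right, inner_add_right, h0]
end

section
/- Let (Ω, 𝔄, P) be a probability space, Λ ∈ L²(P) with E[Λ] = 0, let τ > 0, r₀, r₁ ≥ 0, r = r₀ + r₁ > 0, and assume 2r < τE[|Λ|]. Let v′ < 0 < v″ be the unique reals with τE[(v′ − Λ)₊] = r = τE[(Λ − v″)₊]. Let G_v = {g ∈ L²(P) : E[g] = 0, E[|g|] ≤ 2} be the normed total variation ball, G₀ = r₀G_v, G₁ = τΛ + r₁G_v, and set g̃ = (τ/r)((Λ − v″)₊ − (v′ − Λ)₊). Then g̃ ∈ G_v, G₀ and G₁ are disjoint, the pair (q₀, q₁) = (r₀g̃, τΛ − r₁g̃)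 belongs to G₀ × G₁, and q₁ − q₀ = τ(v′ ∨ Λ ∧ v″) is the minimum-norm element of G₁ − G₀. -/
open MeasureTheory
open scoped RealInnerProductSpace

lemma clamp_eq (v' v'' a : ℝ) (h : v' ≤ v'') :
    a - max (a - v'') 0 + max (v' - a) 0 = max v' (min a v'') := by
  rcases le_total a v' with h1 | h1 <;> rcases le_total a v'' with h2 | h2 <;>
    simp [max_def, min_def] <;> split_ifs <;> linarith

lemma abs_diff_pos (v' v'' a : ℝ) (h : v' < v'') :
    |max (a - v'') 0 - max (v' - a) 0| = max (a - v'') 0 + max (v' - a) 0 := by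
  rcases le_or_gt a v'' with h2 | h2
  · rw [max_eq_right (by linarith : a - v'' ≤ 0), zero_sub, abs_neg,
      abs_of_nonneg (le_max_right _ _), zero_add]
  · rw [max_eq_right (by linarith : v' - a ≤ 0), sub_zero, add_zero,
      abs_of_nonneg (le_max_right _ _)]

lemma clamp_mul (v' v'' a : ℝ) (h : v' ≤ v'') :
    max v' (min a v'') * (max (a - v'') 0 - max (v' - a) 0)
      = v'' * max (a - v'') 0 - v' * max (v' - a) 0 := by
  rcases le_total a v' with h1 | h1 <;> rcases le_total a v'' with h2 | h2 <;>
    simp [max_def, min_def] <;> split_ifs <;> try ring_nf <;> nlinarith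

set_option maxHeartbeats 1000000 in
/-- for the total variation hypotheses `G₀ = r₀G_v` and
`G₁ = τΛ + r₁G_v`, under `2r < τE[|Λ|]`, with
`g̃ = (τ/r)((Λ − v″)₊ − (v′ − Λ)₊)`, one has `g̃ ∈ G_v`, `G₀` and `G₁` are
disjoint, the pair `(r₀g̃, τΛ − r₁g̃)` lies in `G₀ × G₁`, and its difference
`τ(v′ ∨ Λ ∧ v″)` is the minimum-norm element of `G₁ − G₀`. -/
theorem tv_least_favorable_tangent_pair
    {Ω : Type*} [MeasurableSpace Ω] (P : Measure Ω) [IsProbabilityMeasure P]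
    (Λ : Lp ℝ 2 P) (hcent : ∫ x, Λ x ∂P = 0)
    (τ r₀ r₁ r : ℝ) (hτ : 0 < τ) (h₀ : 0 ≤ r₀) (h₁ : 0 ≤ r₁)
    (hr : r = r₀ + r₁) (hrpos : 0 < r)
    (hrad : 2 * r < τ * ∫ x, |Λ x| ∂P)
    (v' v'' : ℝ) (hv' : v' < 0) (hv'' : 0 < v'')
    (hv'eq : τ * (∫ x, max (v' - Λ x) 0 ∂P) = r)
    (hv''eq : τ * (∫ x, max (Λ x - v'') 0 ∂P) = r)
    (Gv : Set (Lp ℝ 2 P))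
    (hGv : Gv = {g : Lp ℝ 2 P | (∫ x, g x ∂P) = 0 ∧ (∫ x, |g x| ∂P) ≤ 2})
    (G₀ G₁ : Set (Lp ℝ 2 P))
    (hG₀ : G₀ = {h | ∃ g ∈ Gv, h = r₀ • g})
    (hG₁ : G₁ = {h | ∃ g ∈ Gv, h = τ • Λ + r₁ • g})
    (gt : Lp ℝ 2 P)
    (hgt : (fun x => gt x) =ᵐ[P]
      fun x => (τ / r) * (max (Λ x - v'') 0 - max (v' - Λ x) 0)) :
    gt ∈ Gv ∧
    Disjoint G₀ G₁ ∧
    r₀ • gt ∈ G₀ ∧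
    τ • Λ - r₁ • gt ∈ G₁ ∧
    (fun x => ((τ • Λ - r₁ • gt) - r₀ • gt : Lp ℝ 2 P) x) =ᵐ[P]
      (fun x => τ * max v' (min (Λ x) v'')) ∧
    ((τ • Λ - r₁ • gt) - r₀ • gt ∈
        {d : Lp ℝ 2 P | ∃ g₀ ∈ G₀, ∃ g₁ ∈ G₁, d = g₁ - g₀} ∧
      ∀ d ∈ {d : Lp ℝ 2 P | ∃ g₀ ∈ G₀, ∃ g₁ ∈ G₁, d = g₁ - g₀},
        ‖(τ • Λ - r₁ • gt) - r₀ • gt‖ ≤ ‖d‖) := by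
  have hvv : v' < v'' := hv'.trans hv''
  have hint : ∀ u : Lp ℝ 2 P, Integrable (fun x => u x) P :=
    fun u => (Lp.memLp u).integrable one_le_two
  -- integrability of the positive parts
  have hp1m : AEStronglyMeasurable (fun x => max (Λ x - v'') 0) P :=
    ((Lp.aestronglyMeasurable Λ).sub aestronglyMeasurable_const).sup
      aestronglyMeasurable_const
  have hp2m : AEStronglyMeasurable (fun x => max (v' - Λ x) 0) P :=
    (aestronglyMeasurable_const.sub (Lp.aestronglyMeasurable Λ)).sup
      aestronglyMeasurable_const
  have hp1i : Integrable (fun x => max (Λ x - v'') 0) P := by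
    refine (hint Λ).abs.mono' hp1m (Filter.Eventually.of_forall fun x => ?_)
    rw [Real.norm_eq_abs, abs_of_nonneg (le_max_right _ _)]
    exact max_le ((sub_le_self _ hv''.le).trans (le_abs_self _)) (abs_nonneg _)
  have hp2i : Integrable (fun x => max (v' - Λ x) 0) P := by
    refine (hint Λ).abs.mono' hp2m (Filter.Eventually.of_forall fun x => ?_)
    rw [Real.norm_eq_abs, abs_of_nonneg (le_max_right _ _)]
    exact max_le (by have := neg_abs_le (Λ x); linarith) (abs_nonneg _)
  have hI1 : ∫ x, max (Λ x - v'') 0 ∂P = r / τ := by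
    field_simp [eq_div_iff hτ.ne']; linarith [hv''eq]
  have hI2 : ∫ x, max (v' - Λ x) 0 ∂P = r / τ := by
    field_simp [eq_div_iff hτ.ne']; linarith [hv'eq]
  -- gt ∈ Gv
  have hgt0 : ∫ x, gt x ∂P = 0 := by
    rw [integral_congr_ae hgt, integral_const_mul, integral_sub hp1i hp2i, hI1, hI2]
    ring
  have hgtabs : ∫ x, |gt x| ∂P = 2 := by
    have habs : (fun x => |gt x|) =ᵐ[P]
        fun x => (τ / r) * (max (Λ x - v'') 0 + max (v' - Λ x) 0) := by
      filter_upwards [hgt] with x hx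
      rw [hx, abs_mul, abs_of_pos (div_pos hτ hrpos), abs_diff_pos _ _ _ hvv]
    rw [integral_congr_ae habs, integral_const_mul, integral_add hp1i hp2i, hI1, hI2]
    field_simp
    ring
  have hgtGv : gt ∈ Gv := by rw [hGv]; exact ⟨hgt0, hgtabs.le⟩
  set q : Lp ℝ 2 P := (τ • Λ - r₁ • gt) - r₀ • gt with hqdef
  have h5 : (fun x => q x) =ᵐ[P] fun x => τ * max v' (min (Λ x) v'') := by
    filter_upwards [Lp.coeFn_sub (τ • Λ - r₁ • gt) (r₀ • gt),
      Lp.coeFn_sub (τ • Λ) (r₁ • gt), Lp.coeFn_smul τ Λ,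
      Lp.coeFn_smul r₁ gt, Lp.coeFn_smul r₀ gt, hgt] with x h1 h2 h3 h4 h5' h6
    simp only [Pi.sub_apply, Pi.smul_apply, smul_eq_mul] at h1 h2 h3 h4 h5'
    rw [hqdef]
    rw [h1, h2, h3, h4, h5', h6, ← clamp_eq v' v'' (Λ x) hvv.le, hr]
    have hne : r₀ + r₁ ≠ 0 := by rw [← hr]; exact hrpos.ne'
    field_simp
    ring
  have hmem0 : r₀ • gt ∈ G₀ := by rw [hG₀]; exact ⟨gt, hgtGv, rfl⟩
  have hmem1 : τ • Λ - r₁ • gt ∈ G₁ := by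
    rw [hG₁]
    refine ⟨-gt, ?_, by rw [smul_neg, ← sub_eq_add_neg]⟩
    rw [hGv]
    have hneg : (fun x => (-gt : Lp ℝ 2 P) x) =ᵐ[P] fun x => -(gt x) := by
      filter_upwards [Lp.coeFn_neg gt] with x hx
      rw [hx]; rfl
    constructor
    · rw [integral_congr_ae hneg, integral_neg, hgt0, neg_zero]
    · have h' : (fun x => |(-gt : Lp ℝ 2 P) x|) =ᵐ[P] fun x => |gt x| := by
        filter_upwards [hneg] with x hx
        rw [hx, abs_neg]
      rw [integral_congr_ae h']
      exact hgtabs.le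
  have hinner_eq : ∀ u : Lp ℝ 2 P, ⟪q, u⟫ = ∫ x, q x * u x ∂P := by
    intro u
    rw [L2.inner_def]
    simp [RCLike.inner_apply]
    exact integral_congr_ae (Filter.Eventually.of_forall fun x => mul_comm _ _)
  have hmul : ∀ u w : Lp ℝ 2 P, Integrable (fun x => u x * w x) P := by
    intro u w
    have := L2.integrable_inner (𝕜 := ℝ) w u
    simpa [RCLike.inner_apply] using this
  have key : ∀ u : Lp ℝ 2 P, u ∈ Gv → |∫ x, q x * u x ∂P| ≤ τ * (v'' - v') := by
    intro u hu
    rw [hGv] at hu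
    obtain ⟨hu0, hu2⟩ := hu
    have hqci : Integrable (fun x => (q x - τ * (v' + v'') / 2) * u x) P := by
      have he : (fun x => (q x - τ * (v' + v'') / 2) * u x)
          = fun x => q x * u x - (τ * (v' + v'') / 2) * u x := by
        funext x; ring
      rw [he]
      exact (hmul q u).sub ((hint u).const_mul _)
    have hsub : ∫ x, q x * u x ∂P
        = ∫ x, (q x - τ * (v' + v'') / 2) * u x ∂P := by
      have he : (fun x => (q x - τ * (v' + v'') / 2) * u x)
          = fun x => q x * u x - (τ * (v' + v'') / 2) * u x := by
        funext x; ring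
      rw [he, integral_sub (hmul q u) ((hint u).const_mul _),
        integral_const_mul, hu0, mul_zero, sub_zero]
    have hbd : ∀ᵐ x ∂P, |q x - τ * (v' + v'') / 2| ≤ τ * (v'' - v') / 2 := by
      filter_upwards [h5] with x hx
      rw [hx]
      have hc1 : v' ≤ max v' (min (Λ x) v'') := le_max_left _ _
      have hc2 : max v' (min (Λ x) v'') ≤ v'' := max_le hvv.le (min_le_right _ _)
      rw [abs_le]
      constructor <;> nlinarith
    rw [hsub]
    have habsint : Integrable (fun x => |q x - τ * (v' + v'') / 2| * |u x|) P := by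
      have he2 : (fun x => |q x - τ * (v' + v'') / 2| * |u x|)
          = fun x => |(q x - τ * (v' + v'') / 2) * u x| := by
        funext x; rw [abs_mul]
      rw [he2]; exact hqci.abs
    calc |∫ x, (q x - τ * (v' + v'') / 2) * u x ∂P|
        ≤ ∫ x, |q x - τ * (v' + v'') / 2| * |u x| ∂P := by
          simpa [Real.norm_eq_abs, abs_mul] using
            norm_integral_le_integral_norm (fun x => (q x - τ * (v' + v'') / 2) * u x) (μ := P)
      _ ≤ ∫ x, (τ * (v'' - v') / 2) * |u x| ∂P := by
          refine integral_mono_ae habsint ((hint u).abs.const_mul _) ?_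
          filter_upwards [hbd] with x hx
          exact mul_le_mul_of_nonneg_right hx (abs_nonneg _)
      _ = (τ * (v'' - v') / 2) * ∫ x, |u x| ∂P := integral_const_mul _ _
      _ ≤ (τ * (v'' - v') / 2) * 2 := by
          refine mul_le_mul_of_nonneg_left hu2 ?_
          have : 0 < v'' - v' := by linarith
          positivity
      _ = τ * (v'' - v') := by ring
  have hA : ∫ x, q x * gt x ∂P = τ * (v'' - v') := by
    have he : (fun x => q x * gt x) =ᵐ[P] fun x => (τ * (τ / r)) *
        (v'' * max (Λ x - v'') 0 - v' * max (v' - Λ x) 0) := by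
      filter_upwards [h5, hgt] with x hx hy
      rw [hx, hy, mul_mul_mul_comm, clamp_mul v' v'' (Λ x) hvv.le]
    rw [integral_congr_ae he, integral_const_mul,
      integral_sub (hp1i.const_mul v'') (hp2i.const_mul v'),
      integral_const_mul, integral_const_mul, hI1, hI2]
    field_simp
  refine ⟨hgtGv, ?_, hmem0, hmem1, h5, ?_, ?_⟩
  · -- Disjointness
    rw [Set.disjoint_left]
    rintro h hh0 hh1
    rw [hG₀] at hh0; obtain ⟨g, hg, rfl⟩ := hh0
    rw [hG₁] at hh1; obtain ⟨g', hg', heq⟩ := hh1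
    rw [hGv] at hg hg'
    obtain ⟨hg0, hg2⟩ := hg
    obtain ⟨hg'0, hg'2⟩ := hg'
    have hLp : (τ • Λ : Lp ℝ 2 P) = r₀ • g - r₁ • g' := by rw [heq]; abel
    have hae : (fun x => τ * Λ x) =ᵐ[P] fun x => r₀ * g x - r₁ * g' x := by
      have e1 := Lp.coeFn_smul τ Λ
      have e2 := Lp.coeFn_sub (r₀ • g) (r₁ • g' : Lp ℝ 2 P)
      have e3 := Lp.coeFn_smul r₀ g
      have e4 := Lp.coeFn_smul r₁ g'
      rw [hLp] at e1
      filter_upwards [e1, e2, e3, e4] with x h1 h2 h3 h4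
      simp only [Pi.smul_apply, smul_eq_mul, Pi.sub_apply] at h1 h2 h3 h4
      rw [← h1, h2, h3, h4]
    have habs : ∫ x, |τ * Λ x| ∂P = ∫ x, |r₀ * g x - r₁ * g' x| ∂P := by
      refine integral_congr_ae ?_
      filter_upwards [hae] with x hx
      rw [hx]
    have hL : ∫ x, |τ * Λ x| ∂P = τ * ∫ x, |Λ x| ∂P := by
      simp_rw [abs_mul, abs_of_pos hτ]
      exact integral_const_mul τ _
    have hR : ∫ x, |r₀ * g x - r₁ * g' x| ∂P ≤ 2 * r := by
      have hb : ∫ x, |r₀ * g x - r₁ * g' x| ∂P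
          ≤ ∫ x, r₀ * |g x| + r₁ * |g' x| ∂P := by
        refine integral_mono ((((hint g).const_mul r₀).sub
          ((hint g').const_mul r₁)).abs) (((hint g).abs.const_mul r₀).add
          ((hint g').abs.const_mul r₁)) fun x => ?_
        calc |r₀ * g x - r₁ * g' x| ≤ |r₀ * g x| + |r₁ * g' x| := abs_sub _ _
          _ = r₀ * |g x| + r₁ * |g' x| := by
              rw [abs_mul, abs_mul, abs_of_nonneg h₀, abs_of_nonneg h₁]
      rw [integral_add ((hint g).abs.const_mul r₀) ((hint g').abs.const_mul r₁),
        integral_const_mul, integral_const_mul] at hb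
      have : r₀ * ∫ x, |g x| ∂P + r₁ * ∫ x, |g' x| ∂P ≤ r₀ * 2 + r₁ * 2 :=
        add_le_add (mul_le_mul_of_nonneg_left hg2 h₀)
          (mul_le_mul_of_nonneg_left hg'2 h₁)
      linarith
    rw [hL] at habs
    linarith
  · exact ⟨r₀ • gt, hmem0, τ • Λ - r₁ • gt, hmem1, rfl⟩
  · intro d hd
    obtain ⟨g₀, hg₀, g₁, hg₁, rfl⟩ := hd
    rw [hG₀] at hg₀; obtain ⟨g, hg, rfl⟩ := hg₀
    rw [hG₁] at hg₁; obtain ⟨g', hg', rfl⟩ := hg₁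
    have hdq : (τ • Λ + r₁ • g') - r₀ • g - q = r₁ • (g' + gt) + r₀ • (gt - g) := by
      rw [hqdef]; module
    have hip : 0 ≤ ⟪q, ((τ • Λ + r₁ • g') - r₀ • g) - q⟫ := by
      rw [hdq, inner_add_right, real_inner_smul_right, real_inner_smul_right,
        inner_add_right, inner_sub_right, hinner_eq g', hinner_eq gt, hinner_eq g, hA]
      have hb1 := abs_le.mp (key g' hg')
      have hb2 := abs_le.mp (key g hg)
      have e1 : (0:ℝ) ≤ r₁ * ((∫ x, q x * g' x ∂P) + τ * (v'' - v')) :=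
        mul_nonneg h₁ (by linarith [hb1.1])
      have e2 : (0:ℝ) ≤ r₀ * (τ * (v'' - v') - ∫ x, q x * g x ∂P) :=
        mul_nonneg h₀ (by linarith [hb2.1, hb2.2])
      linarith
    have hsq := norm_add_sq_real q (((τ • Λ + r₁ • g') - r₀ • g) - q)
    have hqd : q + (((τ • Λ + r₁ • g') - r₀ • g) - q) = (τ • Λ + r₁ • g') - r₀ • g := by
      abel
    rw [hqd] at hsq

    nlinarith [norm_nonneg q, norm_nonneg ((τ • Λ + r₁ • g') - r₀ • g),
      norm_nonneg ((((τ • Λ + r₁ • g') - r₀ • g) - q)), hip, hsq]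
end

section
/- Let (Ω, 𝔄, P) be a probability space and r₀, r₁ ≥ 0, and let G_c = {g ∈ L²(P) : E[g] = 0, g ≥ −1 P-a.e.} be the normed contamination ball. Then the set of differences r₁G_c − r₀G_c = {r₁g₁ − r₀g₀ : g₀, g₁ ∈ G_c} equals {h ∈ L²(P) : E[h] = 0, E[(h + (r₁ − r₀))₊] ≤ r₁, E[(h + (r₁ − r₀))₋] ≤ r₀}. In particular, for r₀ = r₁ = r, the set rG_c − rG_c equals {h ∈ L²(P) : E[h] = 0, E[|h|] ≤ 2r}. -/
open MeasureTheory

lemma aux_scale {Ω : Type*} [MeasurableSpace Ω] (P : Measure Ω) [IsProbabilityMeasure P]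
    (r : ℝ) (hr : 0 ≤ r) (f : Ω → ℝ) (hf : MemLp f 2 P) (hf0 : ∀ᵐ x ∂P, 0 ≤ f x)
    (hfi : (∫ x, f x ∂P) = r) :
    ∃ g : Lp ℝ 2 P, (∫ x, g x ∂P) = 0 ∧ (∀ᵐ x ∂P, -1 ≤ g x) ∧
      (∀ᵐ x ∂P, r * g x = f x - r) := by
  rcases eq_or_lt_of_le hr with hr0 | hr0
  · refine ⟨0, ?_, ?_, ?_⟩
    · have : ((0 : Lp ℝ 2 P) : Ω → ℝ) =ᵐ[P] 0 := Lp.coeFn_zero _ _ _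
      simp [integral_congr_ae this]
    · filter_upwards [Lp.coeFn_zero ℝ 2 P] with x hx
      rw [hx]; norm_num
    · have hfz : f =ᵐ[P] 0 := by
        rw [← integral_eq_zero_iff_of_nonneg_ae hf0 (hf.integrable one_le_two)]
        rw [hfi, hr0]
      filter_upwards [hfz] with x hx
      simp [hx, ← hr0]
  · set g' : Ω → ℝ := fun x => r⁻¹ * f x - 1 with hg'
    have hmem : MemLp g' 2 P := (hf.const_mul r⁻¹).sub (memLp_const 1)
    refine ⟨hmem.toLp g', ?_, ?_, ?_⟩
    · rw [integral_congr_ae (hmem.coeFn_toLp)]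
      rw [integral_sub ((hf.integrable one_le_two).const_mul _) (integrable_const _)]
      rw [integral_const_mul, hfi, integral_const]
      simp [inv_mul_cancel₀ hr0.ne']
    · filter_upwards [hmem.coeFn_toLp, hf0] with x hx hx0
      rw [hx]
      have : 0 ≤ r⁻¹ * f x := mul_nonneg (inv_nonneg.mpr hr) hx0
      simp only [hg']; linarith
    · filter_upwards [hmem.coeFn_toLp] with x hx
      rw [hx]
      simp only [hg']
      field_simp

lemma part1 {Ω : Type*} [MeasurableSpace Ω] (P : Measure Ω) [IsProbabilityMeasure P]
    (r₀ r₁ : ℝ) (h₀ : 0 ≤ r₀) (h₁ : 0 ≤ r₁) :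
    {h : Lp ℝ 2 P | ∃ g₀ ∈ {g : Lp ℝ 2 P | (∫ x, g x ∂P) = 0 ∧ ∀ᵐ x ∂P, -1 ≤ g x},
        ∃ g₁ ∈ {g : Lp ℝ 2 P | (∫ x, g x ∂P) = 0 ∧ ∀ᵐ x ∂P, -1 ≤ g x},
        h = r₁ • g₁ - r₀ • g₀} =
      {h : Lp ℝ 2 P | (∫ x, h x ∂P) = 0 ∧
        (∫ x, max (h x + (r₁ - r₀)) 0 ∂P) ≤ r₁ ∧
        (∫ x, max (-(h x + (r₁ - r₀))) 0 ∂P) ≤ r₀} := by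
  ext h
  simp only [Set.mem_setOf_eq]
  constructor
  · rintro ⟨g₀, ⟨hI₀, hb₀⟩, g₁, ⟨hI₁, hb₁⟩, rfl⟩
    have i₀ : Integrable (fun x => g₀ x) P := (Lp.memLp g₀).integrable one_le_two
    have i₁ : Integrable (fun x => g₁ x) P := (Lp.memLp g₁).integrable one_le_two
    have heq : ((r₁ • g₁ - r₀ • g₀ : Lp ℝ 2 P) : Ω → ℝ) =ᵐ[P]
        fun x => r₁ * g₁ x - r₀ * g₀ x := by
      filter_upwards [Lp.coeFn_sub (r₁ • g₁) (r₀ • g₀), Lp.coeFn_smul r₁ g₁,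
        Lp.coeFn_smul r₀ g₀] with x h1 h2 h3
      simp only [Pi.sub_apply] at h1
      simpa [h2, h3] using h1
    have ih : Integrable (fun x => ((r₁ • g₁ - r₀ • g₀ : Lp ℝ 2 P) : Ω → ℝ) x) P :=
      (Lp.memLp _).integrable one_le_two
    have hint : (∫ x, ((r₁ • g₁ - r₀ • g₀ : Lp ℝ 2 P) : Ω → ℝ) x ∂P) = 0 := by
      rw [integral_congr_ae heq,
        integral_sub (i₁.const_mul r₁) (i₀.const_mul r₀),
        integral_const_mul, integral_const_mul, hI₀, hI₁]
      ring
    refine ⟨hint, ?_, ?_⟩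
    · have key : ∀ᵐ x ∂P, max (((r₁ • g₁ - r₀ • g₀ : Lp ℝ 2 P) : Ω → ℝ) x + (r₁ - r₀)) 0
          ≤ r₁ * (1 + g₁ x) := by
        filter_upwards [heq, hb₀, hb₁] with x hx hx0 hx1
        have ha : 0 ≤ r₁ * (1 + g₁ x) := mul_nonneg h₁ (by linarith)
        have hb : 0 ≤ r₀ * (1 + g₀ x) := mul_nonneg h₀ (by linarith)
        rw [hx]
        exact max_le (by nlinarith) ha
      calc (∫ x, max (((r₁ • g₁ - r₀ • g₀ : Lp ℝ 2 P) : Ω → ℝ) x + (r₁ - r₀)) 0 ∂P)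
          ≤ ∫ x, r₁ * (1 + g₁ x) ∂P := by
            refine integral_mono_ae ((ih.add (integrable_const _)).pos_part)
              (((integrable_const (1:ℝ)).add i₁).const_mul r₁) key
        _ = r₁ := by
            rw [integral_const_mul, integral_add (integrable_const (1:ℝ)) i₁, hI₁,
              integral_const]
            simp
    · have key : ∀ᵐ x ∂P, max (-(((r₁ • g₁ - r₀ • g₀ : Lp ℝ 2 P) : Ω → ℝ) x + (r₁ - r₀))) 0
          ≤ r₀ * (1 + g₀ x) := by
        filter_upwards [heq, hb₀, hb₁] with x hx hx0 hx1
        have ha : 0 ≤ r₁ * (1 + g₁ x) := mul_nonneg h₁ (by linarith)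
        have hb : 0 ≤ r₀ * (1 + g₀ x) := mul_nonneg h₀ (by linarith)
        rw [hx]
        exact max_le (by nlinarith) hb
      calc (∫ x, max (-(((r₁ • g₁ - r₀ • g₀ : Lp ℝ 2 P) : Ω → ℝ) x + (r₁ - r₀))) 0 ∂P)
          ≤ ∫ x, r₀ * (1 + g₀ x) ∂P := by
            refine integral_mono_ae ((ih.add (integrable_const _)).neg_part)
              (((integrable_const (1:ℝ)).add i₀).const_mul r₀) key
        _ = r₀ := by
            rw [integral_const_mul, integral_add (integrable_const (1:ℝ)) i₀, hI₀,
              integral_const]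
            simp
  · rintro ⟨hint, hpos, hneg⟩
    have ihh : Integrable (fun x => h x) P := (Lp.memLp h).integrable one_le_two
    set c : ℝ := r₁ - r₀ with hc
    have hmu : MemLp (fun x => h x + c) 2 P := (Lp.memLp h).add (memLp_const c)
    have hiu : Integrable (fun x => h x + c) P := hmu.integrable one_le_two
    set a : ℝ := ∫ x, max (h x + c) 0 ∂P with ha
    set b : ℝ := ∫ x, max (-(h x + c)) 0 ∂P with hb
    have hsum : (∫ x, (h x + c) ∂P) = c := by
      rw [integral_add ihh (integrable_const c), hint, integral_const]
      simp
    have hab : a - b = c := by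
      rw [ha, hb, ← integral_sub hiu.pos_part hiu.neg_part]
      simp only [max_zero_sub_max_neg_zero_eq_self]
      exact hsum
    set s : ℝ := r₁ - a with hs
    have hs0 : 0 ≤ s := by rw [hs]; linarith
    have hs0' : s = r₀ - b := by rw [hs, hc] at *; linarith
    obtain ⟨g₁, hg₁i, hg₁b, hg₁e⟩ := aux_scale P r₁ h₁ (fun x => max (h x + c) 0 + s)
      (hmu.pos_part.add (memLp_const s))
      (Filter.Eventually.of_forall fun x => add_nonneg (le_max_right _ _) hs0)
      (by rw [integral_add hiu.pos_part (integrable_const s), integral_const, ← ha]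
          simp [hs])
    obtain ⟨g₀, hg₀i, hg₀b, hg₀e⟩ := aux_scale P r₀ h₀ (fun x => max (-(h x + c)) 0 + s)
      (hmu.neg_part.add (memLp_const s))
      (Filter.Eventually.of_forall fun x => add_nonneg (le_max_right _ _) hs0)
      (by rw [integral_add hiu.neg_part (integrable_const s), integral_const, ← hb]
          simp [hs0'])
    refine ⟨g₀, ⟨hg₀i, hg₀b⟩, g₁, ⟨hg₁i, hg₁b⟩, ?_⟩
    apply Lp.ext
    filter_upwards [Lp.coeFn_sub (r₁ • g₁) (r₀ • g₀), Lp.coeFn_smul r₁ g₁,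
      Lp.coeFn_smul r₀ g₀, hg₁e, hg₀e] with x h1 h2 h3 h4 h5
    simp only [Pi.sub_apply] at h1
    rw [h1, h2, h3]
    simp only [Pi.smul_apply, smul_eq_mul]
    rw [h4, h5]
    have := max_zero_sub_max_neg_zero_eq_self (h x + c)
    rw [hc] at *
    linarith

/-- the set of differences `r₁G_c − r₀G_c` of scaled normed
contamination balls equals
`{h ∈ L²(P) : E[h] = 0, E[(h + (r₁−r₀))₊] ≤ r₁, E[(h + (r₁−r₀))₋] ≤ r₀}`;
in particular for `r₀ = r₁` it is the centered total variation ball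
`{h : E[h] = 0, E[|h|] ≤ 2r₀}`. -/
theorem contamination_difference_set_eq
    {Ω : Type*} [MeasurableSpace Ω] (P : Measure Ω) [IsProbabilityMeasure P]
    (r₀ r₁ : ℝ) (h₀ : 0 ≤ r₀) (h₁ : 0 ≤ r₁)
    (Gc : Set (Lp ℝ 2 P))
    (hGc : Gc = {g : Lp ℝ 2 P | (∫ x, g x ∂P) = 0 ∧ ∀ᵐ x ∂P, -1 ≤ g x}) :
    {h : Lp ℝ 2 P | ∃ g₀ ∈ Gc, ∃ g₁ ∈ Gc, h = r₁ • g₁ - r₀ • g₀} =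
      {h : Lp ℝ 2 P | (∫ x, h x ∂P) = 0 ∧
        (∫ x, max (h x + (r₁ - r₀)) 0 ∂P) ≤ r₁ ∧
        (∫ x, max (-(h x + (r₁ - r₀))) 0 ∂P) ≤ r₀} ∧
    (r₀ = r₁ →
      {h : Lp ℝ 2 P | ∃ g₀ ∈ Gc, ∃ g₁ ∈ Gc, h = r₀ • g₁ - r₀ • g₀} =
        {h : Lp ℝ 2 P | (∫ x, h x ∂P) = 0 ∧ (∫ x, |h x| ∂P) ≤ 2 * r₀}) := by
  subst hGc
  refine ⟨part1 P r₀ r₁ h₀ h₁, fun hrr => ?_⟩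
  rw [part1 P r₀ r₀ h₀ h₀]
  ext h
  simp only [Set.mem_setOf_eq, sub_self, add_zero]
  refine and_congr_right fun hint => ?_
  have ihh : Integrable (fun x => h x) P := (Lp.memLp h).integrable one_le_two
  have habs : (∫ x, |h x| ∂P) = (∫ x, max (h x) 0 ∂P) + ∫ x, max (-h x) 0 ∂P := by
    rw [← integral_add ihh.pos_part ihh.neg_part]
    exact integral_congr_ae (Filter.Eventually.of_forall fun x =>
      (max_zero_add_max_neg_zero_eq_abs_self _).symm)
  have hAB : (∫ x, max (h x) 0 ∂P) - ∫ x, max (-h x) 0 ∂P = 0 := by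
    rw [← integral_sub ihh.pos_part ihh.neg_part]
    simp only [max_zero_sub_max_neg_zero_eq_self]
    exact hint
  constructor
  · rintro ⟨hA, hB⟩; rw [habs]; linarith
  · intro habs2
    rw [habs] at habs2
    exact ⟨by linarith, by linarith⟩
end

section
/- Let (Ω, 𝔄, P) be a probability space, Λ ∈ L²(P) with E[Λ] = 0, τ > 0, r₀, r₁ > 0, and set z = (r₁ − r₀)/τ. Assume the radius condition r₀ < E[(τΛ − (r₁ − r₀))₊], which is equivalent to r₁ < E[((r₁ − r₀) − τΛ)₊]. Then there exist unique reals c′ < z < c″ with τE[(c′ − Λ)₊] = r₁ and τE[(Λ − c″)₊] = r₀. Let G_c = {g ∈ L²(P) : E[g] = 0, g ≥ −1 P-a.e.}, G₀ = r₀G_c, and G₁ = τΛ + r₁G_c. Then G₀ and G₁ are disjoint, the minimum-norm element of G₁ − G₀ is τ(c′ ∨ Λ ∧ c″) − (r₁ − r₀), and the unique pair (q₀, q₁) ∈ G₀ × G₁ with q₁ − q₀ equal to this minimum-norm element is q₀ = τ(Λ − c″)₊ − r₀ and q₁ = τ(Λ ∨ c′) − r₁. -/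
open MeasureTheory Filter
set_option maxHeartbeats 1000000

open MeasureTheory Filter
set_option maxHeartbeats 1000000

lemma exu_aux {Ω : Type*} [MeasurableSpace Ω] (P : Measure Ω) [IsProbabilityMeasure P]
    (ℓ : Ω → ℝ) (hℓ : Integrable ℓ P) (τ R Z : ℝ) (hτ : 0 < τ) (hR : 0 < R)
    (hZ : R < τ * ∫ x, max (Z - ℓ x) 0 ∂P) :
    ∃! c : ℝ, c < Z ∧ τ * (∫ x, max (c - ℓ x) 0 ∂P) = R := by
  set f : ℝ → ℝ := fun c => ∫ x, max (c - ℓ x) 0 ∂P with hf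
  have hint : ∀ c : ℝ, Integrable (fun x => max (c - ℓ x) 0) P :=
    fun c => ((integrable_const c).sub hℓ).pos_part
  have hmono : ∀ a b : ℝ, a ≤ b → f a ≤ f b := by
    intro a b hab
    exact integral_mono (hint a) (hint b) fun x => by
      exact max_le_max (by linarith) le_rfl
  have hcont : Continuous f := by
    have : LipschitzWith 1 f := by
      apply LipschitzWith.of_dist_le_mul
      intro a b
      rw [Real.dist_eq, Real.dist_eq, NNReal.coe_one, one_mul]
      have h1 : f a - f b = ∫ x, (max (a - ℓ x) 0 - max (b - ℓ x) 0) ∂P := by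
        rw [integral_sub (hint a) (hint b)]
      rw [h1]
      have := norm_integral_le_of_norm_le_const (μ := P)
        (f := fun x => max (a - ℓ x) 0 - max (b - ℓ x) 0) (C := |a - b|)
        (Filter.Eventually.of_forall fun x => by
          rw [Real.norm_eq_abs]
          have := abs_max_sub_max_le_abs (a - ℓ x) (b - ℓ x) 0
          simpa using this.trans (le_of_eq (by ring_nf)))
      simpa [measure_univ] using this
    exact this.continuous
  have hstrict : ∀ a b : ℝ, a < b → 0 < f a → f a < f b := by
    intro a b hab hfa
    refine lt_of_le_of_ne (hmono a b hab.le) fun heq => ?_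
    have h0 : ∫ x, (max (b - ℓ x) 0 - max (a - ℓ x) 0) ∂P = 0 := by
      rw [integral_sub (hint b) (hint a)]; simp only [hf] at heq; linarith [heq]
    have hnn : 0 ≤ᶠ[ae P] fun x => max (b - ℓ x) 0 - max (a - ℓ x) 0 :=
      Filter.Eventually.of_forall fun x => by
        have : max (a - ℓ x) 0 ≤ max (b - ℓ x) 0 := max_le_max (by linarith) le_rfl
        simpa using this
    have hz := (integral_eq_zero_iff_of_nonneg_ae hnn ((hint b).sub (hint a))).mp h0
    have hae : (fun x => max (a - ℓ x) 0) =ᶠ[ae P] 0 := by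
      filter_upwards [hz] with x hx
      simp only [Pi.zero_apply] at hx ⊢
      by_contra hne
      have hlt : 0 < a - ℓ x := by
        rcases le_or_gt (a - ℓ x) 0 with h | h
        · exact absurd (max_eq_right h) hne
        · exact h
      rw [max_eq_left hlt.le, max_eq_left (by linarith)] at hx
      linarith
    have : f a = 0 := by
      show (∫ x, max (a - ℓ x) 0 ∂P) = 0
      rw [integral_congr_ae hae]; simp
    linarith
  have hfZ : R / τ < f Z := by rw [div_lt_iff₀ hτ] at *; linarith [hZ]
  -- find N with f (-N) small
  have htend : Tendsto (fun n : ℕ => f (-(n : ℝ))) atTop (nhds 0) := by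
    have h0 : (0 : ℝ) = ∫ x, (0 : ℝ) ∂P := by simp
    rw [h0]
    apply tendsto_integral_of_dominated_convergence (fun x => max (-ℓ x) 0)
    · exact fun n => (hint _).aestronglyMeasurable
    · exact hℓ.neg.pos_part
    · intro n
      refine Filter.Eventually.of_forall fun x => ?_
      rw [Real.norm_eq_abs, abs_of_nonneg (le_max_right _ _)]
      exact max_le_max (by simp [Nat.cast_nonneg]) le_rfl
    · refine Filter.Eventually.of_forall fun x => ?_
      apply tendsto_nhds_of_eventually_eq
      filter_upwards [tendsto_natCast_atTop_atTop.eventually_ge_atTop (-ℓ x)] with n hn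
      exact max_eq_right (by linarith)
  obtain ⟨N, hN⟩ := ((htend.const_mul τ).eventually_lt_const (by simpa using hR)).exists
  have hfN : f (-(N:ℝ)) < R / τ := by rw [lt_div_iff₀ hτ]; linarith
  have hNZ : -(N : ℝ) < Z := by
    by_contra h
    push_neg at h
    exact absurd (hmono Z _ h) (by linarith)
  obtain ⟨c, hcIcc, hfc⟩ := intermediate_value_Icc hNZ.le hcont.continuousOn
    ⟨hfN.le, hfZ.le⟩
  have hcZ : c < Z := lt_of_le_of_ne hcIcc.2 fun h => by rw [h] at hfc; linarith
  have hτc : τ * f c = R := by rw [hfc]; field_simp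
  refine ⟨c, ⟨hcZ, hτc⟩, ?_⟩
  rintro y ⟨hyZ, hy⟩
  have hfy : f y = R / τ := by field_simp at hy ⊢; linarith
  have hfcpos : 0 < f c := by rw [hfc]; positivity
  have hfypos : 0 < f y := by rw [hfy]; positivity
  rcases lt_trichotomy y c with h | h | h
  · exact absurd (hstrict y c h hfypos) (by rw [hfy, hfc]; simp)
  · exact h
  · exact absurd (hstrict c y h hfcpos) (by rw [hfy, hfc]; simp)

-- clip identity
lemma clip_id (τ r₀ r₁ a c' c'' : ℝ) (h : c' ≤ c'') :
    τ * max a c' - r₁ - (τ * max (a - c'') 0 - r₀) =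
      τ * max c' (min a c'') - (r₁ - r₀) := by
  rcases le_total a c' with h1 | h1
  · have h2 : a ≤ c'' := le_trans h1 h
    rw [max_eq_right h1, min_eq_left h2, max_eq_left h1,
      max_eq_right (by linarith : a - c'' ≤ 0)]
    ring
  rcases le_total a c'' with h2 | h2
  · rw [max_eq_left h1, min_eq_left h2, max_eq_right h1,
      max_eq_right (by linarith : a - c'' ≤ 0)]
    ring
  · rw [max_eq_left h1, min_eq_right h2, max_eq_right h,
      max_eq_left (by linarith : (0:ℝ) ≤ a - c'')]
    ring

-- max a b - a = max (b - a) 0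
lemma max_sub_self (a b : ℝ) : max a b - a = max (b - a) 0 := by
  rcases le_total a b with h | h <;> simp [max_eq_left, max_eq_right, *] <;> linarith

-- key pointwise nonneg A
lemma keyA (τ r₁ c' c'' a h : ℝ) (hτ : 0 < τ) (hr : 0 < r₁) (hh : -1 ≤ h) (hcc : c' ≤ c'') :
    0 ≤ (τ * max c' (min a c'') - τ * c') * (h - r₁⁻¹ * (τ * max (c' - a) 0 - r₁)) := by
  rcases le_or_gt a c' with h1 | h1
  · have : min a c'' = a := min_eq_left (le_trans h1 hcc)
    rw [this, max_eq_left h1]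
    ring_nf
    simp
  · have h2 : max (c' - a) 0 = 0 := max_eq_right (by linarith)
    rw [h2]
    have e1 : r₁⁻¹ * (τ * 0 - r₁) = -1 := by field_simp; ring
    rw [e1]
    apply mul_nonneg
    · have : c' ≤ max c' (min a c'') := le_max_left _ _
      nlinarith
    · linarith

-- key pointwise nonneg B
lemma keyB (τ r₀ c' c'' a h : ℝ) (hτ : 0 < τ) (hr : 0 < r₀) (hh : -1 ≤ h) (hcc : c' ≤ c'') :
    0 ≤ (τ * c'' - τ * max c' (min a c'')) * (h - r₀⁻¹ * (τ * max (a - c'') 0 - r₀)) := by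
  rcases le_or_gt a c'' with h1 | h1
  · have h2 : max (a - c'') 0 = 0 := max_eq_right (by linarith)
    rw [h2]
    have e1 : r₀⁻¹ * (τ * 0 - r₀) = -1 := by field_simp; ring
    rw [e1]
    apply mul_nonneg
    · have : max c' (min a c'') ≤ c'' := max_le hcc (min_le_right _ _)
      nlinarith
    · linarith
  · have : min a c'' = c'' := min_eq_right h1.le
    rw [this, max_eq_right hcc]
    ring_nf
    simp


/-- for the contamination hypotheses `G₀ = r₀G_c` and
`G₁ = τΛ + r₁G_c`, under the radius condition `r₀ < E[(τΛ − (r₁−r₀))₊]`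
(equivalent to `r₁ < E[((r₁−r₀) − τΛ)₊]`), the clipping constants
`c′ < z < c″` with `τE[(c′−Λ)₊] = r₁`, `τE[(Λ−c″)₊] = r₀` exist uniquely;
the sets are disjoint, the minimum-norm element of `G₁ − G₀` is
`τ(c′ ∨ Λ ∧ c″) − (r₁ − r₀)`, and the unique realizing pair is
`q₀ = τ(Λ−c″)₊ − r₀`, `q₁ = τ(Λ ∨ c′) − r₁`. -/
theorem contamination_least_favorable_tangent_pair
    {Ω : Type*} [MeasurableSpace Ω] (P : Measure Ω) [IsProbabilityMeasure P]
    (Λ : Lp ℝ 2 P) (hcent : ∫ x, Λ x ∂P = 0)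
    (τ r₀ r₁ z : ℝ) (hτ : 0 < τ) (h₀ : 0 < r₀) (h₁ : 0 < r₁)
    (hz : z = (r₁ - r₀) / τ)
    (hrad : r₀ < ∫ x, max (τ * Λ x - (r₁ - r₀)) 0 ∂P)
    (Gc : Set (Lp ℝ 2 P))
    (hGc : Gc = {g : Lp ℝ 2 P | (∫ x, g x ∂P) = 0 ∧ ∀ᵐ x ∂P, -1 ≤ g x})
    (G₀ G₁ : Set (Lp ℝ 2 P))
    (hG₀ : G₀ = {h | ∃ g ∈ Gc, h = r₀ • g})
    (hG₁ : G₁ = {h | ∃ g ∈ Gc, h = τ • Λ + r₁ • g}) :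
    (r₀ < (∫ x, max (τ * Λ x - (r₁ - r₀)) 0 ∂P) ↔
      r₁ < ∫ x, max ((r₁ - r₀) - τ * Λ x) 0 ∂P) ∧
    (∃! c' : ℝ, c' < z ∧ τ * (∫ x, max (c' - Λ x) 0 ∂P) = r₁) ∧
    (∃! c'' : ℝ, z < c'' ∧ τ * (∫ x, max (Λ x - c'') 0 ∂P) = r₀) ∧
    (∀ c' c'' : ℝ, c' < z → z < c'' →
      τ * (∫ x, max (c' - Λ x) 0 ∂P) = r₁ →
      τ * (∫ x, max (Λ x - c'') 0 ∂P) = r₀ →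
      ∀ q₀ q₁ : Lp ℝ 2 P,
        (fun x => q₀ x) =ᵐ[P] (fun x => τ * max (Λ x - c'') 0 - r₀) →
        (fun x => q₁ x) =ᵐ[P] (fun x => τ * max (Λ x) c' - r₁) →
        Disjoint G₀ G₁ ∧
        q₀ ∈ G₀ ∧ q₁ ∈ G₁ ∧
        (fun x => (q₁ - q₀ : Lp ℝ 2 P) x) =ᵐ[P]
          (fun x => τ * max c' (min (Λ x) c'') - (r₁ - r₀)) ∧
        (q₁ - q₀ ∈ {d : Lp ℝ 2 P | ∃ g₀ ∈ G₀, ∃ g₁ ∈ G₁, d = g₁ - g₀} ∧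
          ∀ d ∈ {d : Lp ℝ 2 P | ∃ g₀ ∈ G₀, ∃ g₁ ∈ G₁, d = g₁ - g₀},
            ‖q₁ - q₀‖ ≤ ‖d‖) ∧
        (∀ p₀ ∈ G₀, ∀ p₁ ∈ G₁, p₁ - p₀ = q₁ - q₀ → p₀ = q₀ ∧ p₁ = q₁)) := by
  have hΛint : Integrable (fun x => Λ x) P := (Lp.memLp Λ).integrable one_le_two
  have hτ0 : τ ≠ 0 := ne_of_gt hτ
  have hd : τ * z = r₁ - r₀ := by rw [hz]; field_simp
  have hintT : Integrable (fun x => max (τ * Λ x - (r₁ - r₀)) 0) P :=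
    ((hΛint.const_mul τ).sub (integrable_const _)).pos_part
  have hintT' : Integrable (fun x => max ((r₁ - r₀) - τ * Λ x) 0) P :=
    ((integrable_const _).sub (hΛint.const_mul τ)).pos_part
  -- part 1
  have hpart1 : (∫ x, max (τ * Λ x - (r₁ - r₀)) 0 ∂P)
      = (∫ x, max ((r₁ - r₀) - τ * Λ x) 0 ∂P) - (r₁ - r₀) := by
    have e : ∀ x : Ω, max (τ * Λ x - (r₁ - r₀)) 0
        = max ((r₁ - r₀) - τ * Λ x) 0 + (τ * Λ x - (r₁ - r₀)) := by
      intro x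
      rcases le_total (τ * Λ x) (r₁ - r₀) with h | h
      · rw [max_eq_right (by linarith), max_eq_left (by linarith)]; ring
      · rw [max_eq_left (by linarith), max_eq_right (by linarith)]; ring
    rw [integral_congr_ae (Eventually.of_forall e),
      integral_add hintT' (show Integrable (fun x => τ * Λ x - (r₁ - r₀)) P from
        (hΛint.const_mul τ).sub (integrable_const _)),
      integral_sub (hΛint.const_mul τ) (integrable_const _),
      integral_const_mul, hcent]
    simp [measure_univ]
    ring
  have hiff : r₀ < (∫ x, max (τ * Λ x - (r₁ - r₀)) 0 ∂P) ↔
      r₁ < ∫ x, max ((r₁ - r₀) - τ * Λ x) 0 ∂P := by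
    constructor <;> intro hh <;> rw [hpart1] at * <;> linarith
  refine ⟨hiff, ?_, ?_, ?_⟩
  -- part 2 : existence/uniqueness of c'
  · apply exu_aux P (fun x => Λ x) hΛint τ r₁ z hτ h₁
    have e : ∀ x : Ω, τ * max (z - Λ x) 0 = max ((r₁ - r₀) - τ * Λ x) 0 := by
      intro x
      rw [mul_max_of_nonneg _ _ hτ.le, mul_zero, mul_sub, hd]
    calc r₁ < ∫ x, max ((r₁ - r₀) - τ * Λ x) 0 ∂P := hiff.mp hrad
      _ = ∫ x, τ * max (z - Λ x) 0 ∂P := by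
          exact integral_congr_ae (Eventually.of_forall fun x => (e x).symm)
      _ = τ * ∫ x, max (z - Λ x) 0 ∂P := integral_const_mul _ _
  -- part 3 : existence/uniqueness of c''
  · have hΛint' : Integrable (fun x => -Λ x) P := hΛint.neg
    have key : r₀ < τ * ∫ x, max (-z - (-Λ x)) 0 ∂P := by
      have e : ∀ x : Ω, τ * max (-z - (-Λ x)) 0 = max (τ * Λ x - (r₁ - r₀)) 0 := by
        intro x
        rw [mul_max_of_nonneg _ _ hτ.le, mul_zero]
        congr 1
        rw [mul_sub, mul_neg, mul_neg, hd]; ring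
      calc r₀ < ∫ x, max (τ * Λ x - (r₁ - r₀)) 0 ∂P := hrad
        _ = ∫ x, τ * max (-z - (-Λ x)) 0 ∂P :=
            integral_congr_ae (Eventually.of_forall fun x => (e x).symm)
        _ = τ * ∫ x, max (-z - (-Λ x)) 0 ∂P := integral_const_mul _ _
    obtain ⟨c, ⟨hcz, hceq⟩, huniq⟩ := exu_aux P (fun x => -Λ x) hΛint' τ r₀ (-z) hτ h₀ key
    have flipint : ∀ y : ℝ, (∫ x, max (Λ x - y) 0 ∂P) = ∫ x, max (-y - (-Λ x)) 0 ∂P := by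
      intro y
      apply integral_congr_ae (Eventually.of_forall fun x => ?_)
      congr 1; ring
    refine ⟨-c, ⟨by linarith, ?_⟩, ?_⟩
    · rw [flipint (-c)]
      simpa using hceq
    · rintro y ⟨hy1, hy2⟩
      have := huniq (-y) ⟨by linarith, by rw [flipint y] at hy2; simpa using hy2⟩
      linarith
  -- part 4
  · intro c' c'' hc'z hzc'' hc'eq hc''eq q₀ q₁ hq₀ae hq₁ae
    have hcc : c' ≤ c'' := by linarith
    have hccs : c' < c'' := by linarith
    have hint0 : Integrable (fun x => max (Λ x - c'') 0) P :=
      (hΛint.sub (integrable_const _)).pos_part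
    have hint1 : Integrable (fun x => max (c' - Λ x) 0) P :=
      ((integrable_const _).sub hΛint).pos_part
    set g₀ : Lp ℝ 2 P := (r₀⁻¹ : ℝ) • q₀ with hg₀def
    set g₁ : Lp ℝ 2 P := (r₁⁻¹ : ℝ) • (q₁ - τ • Λ) with hg₁def
    have hq₀eq : q₀ = r₀ • g₀ := by
      rw [hg₀def, smul_smul, mul_inv_cancel₀ h₀.ne', one_smul]
    have hq₁eq : q₁ = τ • Λ + r₁ • g₁ := by
      rw [hg₁def, smul_smul, mul_inv_cancel₀ h₁.ne', one_smul]; abel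
    have hg₀ae : (fun x => g₀ x) =ᵐ[P] fun x => r₀⁻¹ * (τ * max (Λ x - c'') 0 - r₀) := by
      filter_upwards [Lp.coeFn_smul (r₀⁻¹ : ℝ) q₀, hq₀ae] with x e1 e2
      rw [show ((g₀ : Lp ℝ 2 P) : Ω → ℝ) x = (r₀⁻¹ • ((q₀ : Lp ℝ 2 P) : Ω → ℝ)) x from e1,
        Pi.smul_apply, smul_eq_mul, e2]
    have hg₁ae : (fun x => g₁ x) =ᵐ[P] fun x => r₁⁻¹ * (τ * max (c' - Λ x) 0 - r₁) := by
      filter_upwards [Lp.coeFn_smul (r₁⁻¹ : ℝ) (q₁ - τ • Λ), Lp.coeFn_sub q₁ (τ • Λ),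
        Lp.coeFn_smul τ Λ, hq₁ae] with x e1 e2 e3 e4
      rw [show ((g₁ : Lp ℝ 2 P) : Ω → ℝ) x = (r₁⁻¹ • (((q₁ - τ • Λ) : Lp ℝ 2 P) : Ω → ℝ)) x from e1,
        Pi.smul_apply, smul_eq_mul, e2, Pi.sub_apply, e3, Pi.smul_apply, smul_eq_mul, e4]
      have h5 := max_sub_self (Λ x) c'
      linear_combination r₁⁻¹ * τ * h5
    have hG0int : Integrable (fun x => r₀⁻¹ * (τ * max (Λ x - c'') 0 - r₀)) P := by
      apply Integrable.const_mul
      exact (hint0.const_mul τ).sub (integrable_const _)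
    have hG1int : Integrable (fun x => r₁⁻¹ * (τ * max (c' - Λ x) 0 - r₁)) P := by
      apply Integrable.const_mul
      exact (hint1.const_mul τ).sub (integrable_const _)
    have hG0zero : ∫ x, r₀⁻¹ * (τ * max (Λ x - c'') 0 - r₀) ∂P = 0 := by
      rw [integral_const_mul, integral_sub (hint0.const_mul τ) (integrable_const _),
        integral_const_mul, hc''eq, integral_const]
      simp [measure_univ]
    have hG1zero : ∫ x, r₁⁻¹ * (τ * max (c' - Λ x) 0 - r₁) ∂P = 0 := by
      rw [integral_const_mul, integral_sub (hint1.const_mul τ) (integrable_const _),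
        integral_const_mul, hc'eq, integral_const]
      simp [measure_univ]
    have hg₀Gc : g₀ ∈ Gc := by
      rw [hGc]
      refine ⟨?_, ?_⟩
      · rw [integral_congr_ae hg₀ae]; exact hG0zero
      · filter_upwards [hg₀ae] with x hx
        rw [hx, mul_sub, inv_mul_cancel₀ h₀.ne']
        have hM : 0 ≤ max (Λ x - c'') 0 := le_max_right _ _
        have : 0 ≤ r₀⁻¹ * (τ * max (Λ x - c'') 0) := by positivity
        linarith
    have hg₁Gc : g₁ ∈ Gc := by
      rw [hGc]
      refine ⟨?_, ?_⟩
      · rw [integral_congr_ae hg₁ae]; exact hG1zero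
      · filter_upwards [hg₁ae] with x hx
        rw [hx, mul_sub, inv_mul_cancel₀ h₁.ne']
        have hM : 0 ≤ max (c' - Λ x) 0 := le_max_right _ _
        have : 0 ≤ r₁⁻¹ * (τ * max (c' - Λ x) 0) := by positivity
        linarith
    have hq₀mem : q₀ ∈ G₀ := by rw [hG₀]; exact ⟨g₀, hg₀Gc, hq₀eq⟩
    have hq₁mem : q₁ ∈ G₁ := by rw [hG₁]; exact ⟨g₁, hg₁Gc, hq₁eq⟩
    have hdisj : Disjoint G₀ G₁ := by
      rw [Set.disjoint_left]
      rintro h hm₀ hm₁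
      rw [hG₀] at hm₀; rw [hG₁] at hm₁
      obtain ⟨g, hgGc, rfl⟩ := hm₀
      obtain ⟨g', hg'Gc, heq⟩ := hm₁
      rw [hGc] at hgGc hg'Gc
      have hgint : Integrable (fun x => g x) P := (Lp.memLp g).integrable one_le_two
      have hae : ∀ᵐ x ∂P, r₀ * g x = τ * Λ x + r₁ * g' x := by
        have h2 : ⇑(r₀ • g) =ᵐ[P] ⇑(τ • Λ + r₁ • g') := by rw [heq]
        filter_upwards [h2, Lp.coeFn_smul (r₀ : ℝ) g, Lp.coeFn_add (τ • Λ) (r₁ • g'),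
          Lp.coeFn_smul τ Λ, Lp.coeFn_smul (r₁ : ℝ) g'] with x e2 e1 e3 e4 e5
        calc r₀ * g x = (r₀ • (g : Ω → ℝ)) x := by simp
          _ = (r₀ • g : Lp ℝ 2 P) x := e1.symm
          _ = ((τ • Λ + r₁ • g' : Lp ℝ 2 P) : Ω → ℝ) x := e2
          _ = τ * Λ x + r₁ * g' x := by
              rw [e3, Pi.add_apply, e4, e5, Pi.smul_apply, Pi.smul_apply,
                smul_eq_mul, smul_eq_mul]
      have hbnd : ∀ᵐ x ∂P, max (τ * Λ x - (r₁ - r₀)) 0 ≤ r₀ * (g x + 1) := by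
        filter_upwards [hae, hgGc.2, hg'Gc.2] with x he hg1 hg2
        apply max_le
        · nlinarith [mul_nonneg h₁.le (show (0:ℝ) ≤ g' x + 1 by linarith)]
        · exact mul_nonneg h₀.le (by linarith)
      have hle : (∫ x, max (τ * Λ x - (r₁ - r₀)) 0 ∂P) ≤ ∫ x, r₀ * (g x + 1) ∂P :=
        integral_mono_ae hintT ((hgint.add (integrable_const 1)).const_mul r₀) hbnd
      rw [integral_const_mul, integral_add hgint (integrable_const 1), hgGc.1,
        integral_const] at hle
      simp [measure_univ] at hle
      linarith
    have hmae : (fun x => (q₁ - q₀ : Lp ℝ 2 P) x) =ᵐ[P]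
        fun x => τ * max c' (min (Λ x) c'') - (r₁ - r₀) := by
      filter_upwards [Lp.coeFn_sub q₁ q₀, hq₁ae, hq₀ae] with x e1 e2 e3
      rw [e1, Pi.sub_apply, e2, e3, clip_id τ r₀ r₁ (Λ x) c' c'' hcc]
    have hinner : ∀ f g : Lp ℝ 2 P, (inner ℝ f g : ℝ) = ∫ x, f x * g x ∂P := fun f g => by
      rw [L2.inner_def]; simp [RCLike.inner_apply, mul_comm]
    have hmulint : ∀ f g : Lp ℝ 2 P, Integrable (fun x => f x * g x) P := fun f g => by
      have h2 := L2.integrable_inner (𝕜 := ℝ) f g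
      refine h2.congr (Eventually.of_forall fun x => ?_)
      simp [RCLike.inner_apply, mul_comm]
    have hL1 : ∀ h : Lp ℝ 2 P, Integrable (fun x => h x) P :=
      fun h => (Lp.memLp h).integrable one_le_two
    have hH1int : ∀ h : Lp ℝ 2 P,
        Integrable (fun x => h x - r₁⁻¹ * (τ * max (c' - Λ x) 0 - r₁)) P :=
      fun h => (hL1 h).sub hG1int
    have hH0int : ∀ h : Lp ℝ 2 P,
        Integrable (fun x => h x - r₀⁻¹ * (τ * max (Λ x - c'') 0 - r₀)) P :=
      fun h => (hL1 h).sub hG0int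
    have hsub1 : ∀ h : Lp ℝ 2 P, (fun x => (h - g₁ : Lp ℝ 2 P) x) =ᵐ[P]
        fun x => h x - r₁⁻¹ * (τ * max (c' - Λ x) 0 - r₁) := by
      intro h
      filter_upwards [Lp.coeFn_sub h g₁, hg₁ae] with x e1 e2
      rw [e1, Pi.sub_apply, e2]
    have hsub0 : ∀ h : Lp ℝ 2 P, (fun x => (h - g₀ : Lp ℝ 2 P) x) =ᵐ[P]
        fun x => h x - r₀⁻¹ * (τ * max (Λ x - c'') 0 - r₀) := by
      intro h
      filter_upwards [Lp.coeFn_sub h g₀, hg₀ae] with x e1 e2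
      rw [e1, Pi.sub_apply, e2]
    have hW1int : ∀ h : Lp ℝ 2 P, Integrable (fun x =>
        (τ * max c' (min (Λ x) c'') - τ * c') *
          (h x - r₁⁻¹ * (τ * max (c' - Λ x) 0 - r₁))) P := by
      intro h
      have big : Integrable (fun x => (q₁ - q₀ : Lp ℝ 2 P) x * (h - g₁ : Lp ℝ 2 P) x
          - (τ * c' - (r₁ - r₀)) * (h x - r₁⁻¹ * (τ * max (c' - Λ x) 0 - r₁))) P :=
        (hmulint _ _).sub ((hH1int h).const_mul _)
      refine big.congr ?_
      filter_upwards [hmae, hsub1 h] with x e1 e2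
      rw [e1, e2]; ring
    have hW0int : ∀ h : Lp ℝ 2 P, Integrable (fun x =>
        (τ * c'' - τ * max c' (min (Λ x) c'')) *
          (h x - r₀⁻¹ * (τ * max (Λ x - c'') 0 - r₀))) P := by
      intro h
      have big : Integrable (fun x => -((q₁ - q₀ : Lp ℝ 2 P) x * (h - g₀ : Lp ℝ 2 P) x)
          + (τ * c'' - (r₁ - r₀)) * (h x - r₀⁻¹ * (τ * max (Λ x - c'') 0 - r₀))) P :=
        (hmulint _ _).neg.add ((hH0int h).const_mul _)
      refine big.congr ?_
      filter_upwards [hmae, hsub0 h] with x e1 e2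
      rw [e1, e2]; ring
    have claim1 : ∀ h : Lp ℝ 2 P, (∫ x, h x ∂P) = 0 →
        (inner ℝ (q₁ - q₀) (h - g₁) : ℝ) = ∫ x,
          (τ * max c' (min (Λ x) c'') - τ * c') *
            (h x - r₁⁻¹ * (τ * max (c' - Λ x) 0 - r₁)) ∂P := by
      intro h hmean
      rw [hinner]
      rw [integral_congr_ae (show (fun x => (q₁ - q₀ : Lp ℝ 2 P) x * (h - g₁ : Lp ℝ 2 P) x) =ᵐ[P]
          (fun x => (τ * max c' (min (Λ x) c'') - τ * c') *
              (h x - r₁⁻¹ * (τ * max (c' - Λ x) 0 - r₁))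
            + (τ * c' - (r₁ - r₀)) * (h x - r₁⁻¹ * (τ * max (c' - Λ x) 0 - r₁))) from by
        filter_upwards [hmae, hsub1 h] with x e1 e2
        rw [e1, e2]; ring)]
      rw [integral_add (hW1int h) ((hH1int h).const_mul _), integral_const_mul,
        integral_sub (hL1 h) hG1int, hmean, hG1zero]
      ring
    have claim0 : ∀ h : Lp ℝ 2 P, (∫ x, h x ∂P) = 0 →
        (inner ℝ (q₁ - q₀) (h - g₀) : ℝ) = -∫ x,
          (τ * c'' - τ * max c' (min (Λ x) c'')) *
            (h x - r₀⁻¹ * (τ * max (Λ x - c'') 0 - r₀)) ∂P := by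
      intro h hmean
      rw [hinner]
      rw [integral_congr_ae (show (fun x => (q₁ - q₀ : Lp ℝ 2 P) x * (h - g₀ : Lp ℝ 2 P) x) =ᵐ[P]
          (fun x => -((τ * c'' - τ * max c' (min (Λ x) c'')) *
              (h x - r₀⁻¹ * (τ * max (Λ x - c'') 0 - r₀)))
            + (τ * c'' - (r₁ - r₀)) * (h x - r₀⁻¹ * (τ * max (Λ x - c'') 0 - r₀))) from by
        filter_upwards [hmae, hsub0 h] with x e1 e2
        rw [e1, e2]; ring)]
      rw [integral_add (show Integrable (fun x =>
          -((τ * c'' - τ * (c' ⊔ min (Λ x) c'')) *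
            (h x - r₀⁻¹ * (τ * max (Λ x - c'') 0 - r₀)))) P from (hW0int h).neg)
        ((hH0int h).const_mul _), integral_neg, integral_const_mul,
        integral_sub (hL1 h) hG0int, hmean, hG0zero]
      ring
    have claim1nn : ∀ h : Lp ℝ 2 P, (∫ x, h x ∂P) = 0 → (∀ᵐ x ∂P, -1 ≤ h x) →
        0 ≤ (inner ℝ (q₁ - q₀) (h - g₁) : ℝ) := by
      intro h hmean hge
      rw [claim1 h hmean]
      apply integral_nonneg_of_ae
      filter_upwards [hge] with x hx
      exact keyA τ r₁ c' c'' (Λ x) (h x) hτ h₁ hx hcc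
    have claim0np : ∀ h : Lp ℝ 2 P, (∫ x, h x ∂P) = 0 → (∀ᵐ x ∂P, -1 ≤ h x) →
        (inner ℝ (q₁ - q₀) (h - g₀) : ℝ) ≤ 0 := by
      intro h hmean hge
      rw [claim0 h hmean]
      apply neg_nonpos_of_nonneg
      apply integral_nonneg_of_ae
      filter_upwards [hge] with x hx
      exact keyB τ r₀ c' c'' (Λ x) (h x) hτ h₀ hx hcc
    refine ⟨hdisj, hq₀mem, hq₁mem, hmae, ⟨⟨q₀, hq₀mem, q₁, hq₁mem, rfl⟩, ?_⟩, ?_⟩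
    · rintro dd ⟨p₀, hp₀, p₁, hp₁, rfl⟩
      rw [hG₀] at hp₀; rw [hG₁] at hp₁
      obtain ⟨h₀', h₀Gc, rfl⟩ := hp₀
      obtain ⟨h₁', h₁Gc, rfl⟩ := hp₁
      rw [hGc] at h₀Gc h₁Gc
      have key : 0 ≤ (inner ℝ (q₁ - q₀)
          ((τ • Λ + r₁ • h₁' - r₀ • h₀') - (q₁ - q₀)) : ℝ) := by
        have e : (τ • Λ + r₁ • h₁' - r₀ • h₀') - (q₁ - q₀)
            = r₁ • (h₁' - g₁) - r₀ • (h₀' - g₀) := by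
          rw [hq₁eq, hq₀eq]; module
        rw [e, inner_sub_right, real_inner_smul_right, real_inner_smul_right]
        have A := claim1nn h₁' h₁Gc.1 h₁Gc.2
        have B := claim0np h₀' h₀Gc.1 h₀Gc.2
        nlinarith
      have hn := norm_add_sq_real (q₁ - q₀)
        ((τ • Λ + r₁ • h₁' - r₀ • h₀') - (q₁ - q₀))
      have e2 : (q₁ - q₀) + ((τ • Λ + r₁ • h₁' - r₀ • h₀') - (q₁ - q₀))
          = τ • Λ + r₁ • h₁' - r₀ • h₀' := by abel
      rw [e2] at hn
      by_contra hlt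
      push_neg at hlt
      nlinarith [norm_nonneg (τ • Λ + r₁ • h₁' - r₀ • h₀'), norm_nonneg (q₁ - q₀),
        sq_nonneg ‖(τ • Λ + r₁ • h₁' - r₀ • h₀') - (q₁ - q₀)‖]
    · rintro p₀ hp₀ p₁ hp₁ heqq
      rw [hG₀] at hp₀; rw [hG₁] at hp₁
      obtain ⟨h₀', h₀Gc, rfl⟩ := hp₀
      obtain ⟨h₁', h₁Gc, rfl⟩ := hp₁
      rw [hGc] at h₀Gc h₁Gc
      have hkey : r₁ • (h₁' - g₁) = r₀ • (h₀' - g₀) := by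
        have e : r₁ • (h₁' - g₁) - r₀ • (h₀' - g₀)
            = (τ • Λ + r₁ • h₁' - r₀ • h₀') - (q₁ - q₀) := by
          rw [hq₁eq, hq₀eq]; module
        exact sub_eq_zero.mp (e.trans (sub_eq_zero.mpr heqq))
      have A := claim1nn h₁' h₁Gc.1 h₁Gc.2
      have B := claim0np h₀' h₀Gc.1 h₀Gc.2
      have hAB : r₁ * (inner ℝ (q₁ - q₀) (h₁' - g₁) : ℝ)
          = r₀ * (inner ℝ (q₁ - q₀) (h₀' - g₀) : ℝ) := by
        rw [← real_inner_smul_right, ← real_inner_smul_right, hkey]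
      have hA0 : (inner ℝ (q₁ - q₀) (h₁' - g₁) : ℝ) = 0 := by nlinarith
      have hB0 : (inner ℝ (q₁ - q₀) (h₀' - g₀) : ℝ) = 0 := by nlinarith
      have hz1 : (fun x => (τ * max c' (min (Λ x) c'') - τ * c') *
          (h₁' x - r₁⁻¹ * (τ * max (c' - Λ x) 0 - r₁))) =ᵐ[P] 0 := by
        apply (integral_eq_zero_iff_of_nonneg_ae ?_ (hW1int h₁')).mp
        · rw [← claim1 h₁' h₁Gc.1]; exact hA0
        · filter_upwards [h₁Gc.2] with x hx
          exact keyA τ r₁ c' c'' (Λ x) (h₁' x) hτ h₁ hx hcc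
      have hz0 : (fun x => (τ * c'' - τ * max c' (min (Λ x) c'')) *
          (h₀' x - r₀⁻¹ * (τ * max (Λ x - c'') 0 - r₀))) =ᵐ[P] 0 := by
        apply (integral_eq_zero_iff_of_nonneg_ae ?_ (hW0int h₀')).mp
        · have := claim0 h₀' h₀Gc.1
          rw [hB0] at this
          linarith [this]
        · filter_upwards [h₀Gc.2] with x hx
          exact keyB τ r₀ c' c'' (Λ x) (h₀' x) hτ h₀ hx hcc
      have hrel : ∀ᵐ x ∂P, r₁ * (h₁' x - r₁⁻¹ * (τ * max (c' - Λ x) 0 - r₁))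
          = r₀ * (h₀' x - r₀⁻¹ * (τ * max (Λ x - c'') 0 - r₀)) := by
        have hc : ⇑(r₁ • (h₁' - g₁)) =ᵐ[P] ⇑(r₀ • (h₀' - g₀)) := by rw [hkey]
        filter_upwards [hc, Lp.coeFn_smul (r₁ : ℝ) (h₁' - g₁), Lp.coeFn_smul (r₀ : ℝ) (h₀' - g₀),
          hsub1 h₁', hsub0 h₀'] with x e1 e2 e3 e4 e5
        have e6 : r₁ * ((h₁' - g₁ : Lp ℝ 2 P) x) = r₀ * ((h₀' - g₀ : Lp ℝ 2 P) x) := by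
          have := e2.symm.trans (e1.trans e3)
          simpa using this
        rw [e4, e5] at e6
        exact e6
      have haeboth : ∀ᵐ x ∂P, h₁' x = r₁⁻¹ * (τ * max (c' - Λ x) 0 - r₁)
          ∧ h₀' x = r₀⁻¹ * (τ * max (Λ x - c'') 0 - r₀) := by
        filter_upwards [hz1, hz0, hrel] with x e1 e0 er
        simp only [Pi.zero_apply] at e1 e0
        rcases le_or_gt (Λ x) c' with hL | hL
        · have hW0pos : 0 < τ * c'' - τ * max c' (min (Λ x) c'') := by
            rw [min_eq_left (le_trans hL hcc), max_eq_left hL]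
            nlinarith
          have h0eq : h₀' x = r₀⁻¹ * (τ * max (Λ x - c'') 0 - r₀) := by
            rcases mul_eq_zero.mp e0 with hh | hh
            · exact absurd hh (ne_of_gt hW0pos)
            · linarith [sub_eq_zero.mp hh]
          refine ⟨?_, h0eq⟩
          rw [h0eq] at er
          have : r₁ * (h₁' x - r₁⁻¹ * (τ * max (c' - Λ x) 0 - r₁)) = 0 := by
            rw [er]; ring
          have := mul_eq_zero.mp this
          rcases this with hh | hh
          · exact absurd hh h₁.ne'
          · linarith [sub_eq_zero.mp hh]
        · have hW1pos : 0 < τ * max c' (min (Λ x) c'') - τ * c' := by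
            have hmin : c' < min (Λ x) c'' := lt_min hL hccs
            rw [max_eq_right hmin.le]
            nlinarith
          have h1eq : h₁' x = r₁⁻¹ * (τ * max (c' - Λ x) 0 - r₁) := by
            rcases mul_eq_zero.mp e1 with hh | hh
            · exact absurd hh (ne_of_gt hW1pos)
            · linarith [sub_eq_zero.mp hh]
          refine ⟨h1eq, ?_⟩
          rw [h1eq] at er
          have : r₀ * (h₀' x - r₀⁻¹ * (τ * max (Λ x - c'') 0 - r₀)) = 0 := by
            rw [← er]; ring
          rcases mul_eq_zero.mp this with hh | hh
          · exact absurd hh h₀.ne'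
          · linarith [sub_eq_zero.mp hh]
      have hh₁ : h₁' = g₁ := by
        apply Lp.ext
        filter_upwards [haeboth, hg₁ae] with x e1 e2
        rw [e1.1, ← e2]
      have hh₀ : h₀' = g₀ := by
        apply Lp.ext
        filter_upwards [haeboth, hg₀ae] with x e1 e2
        rw [e1.2, ← e2]
      exact ⟨by rw [hh₀, ← hq₀eq], by rw [hh₁, ← hq₁eq]⟩
end

section
/- Let (Ω, 𝔄, P) be a probability space, Λ ∈ L²(P) with E[Λ] = 0, τ > 0, r₀, r₁ > 0, r = r₀ + r₁, and 2r < τE[|Λ|]. Let v′ < 0 < v″ be the unique reals with τE[(v′ − Λ)₊] = r = τE[(Λ − v″)₊]. Then for any h₀, h₁ ∈ L²(P) with E[h_i] = 0 and E[|h_i|] ≤ 2 (i = 0, 1), the identity r₀h₀ + r₁h₁ = τ(Λ − v″)₊ − τ(v′ − Λ)₊ (P-a.e.) holds if and only if both r₀h₀⁺ + r₁h₁⁺ = τ(Λ − v″)₊ P-a.e. and r₀h₀⁻ + r₁h₁⁻ = τ(v′ − Λ)₊ P-a.e. -/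
open MeasureTheory

lemma max_pm (a : ℝ) : max a 0 + max (-a) 0 = |a| := by
  rcases le_total a 0 with h | h
  · rw [max_eq_right h, max_eq_left (neg_nonneg.mpr h), abs_of_nonpos h]; ring
  · rw [max_eq_left h, max_eq_right (neg_nonpos.mpr h), abs_of_nonneg h]; ring

lemma max_pm' (a : ℝ) : max a 0 - max (-a) 0 = a := by
  rcases le_total a 0 with h | h
  · rw [max_eq_right h, max_eq_left (neg_nonneg.mpr h)]; ring
  · rw [max_eq_left h, max_eq_right (neg_nonpos.mpr h)]; ring

/-- characterization of all least favorable tangent pairs for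
total variation: for `h₀, h₁` in the normed total variation ball, the identity
`r₀h₀ + r₁h₁ = τ(Λ − v″)₊ − τ(v′ − Λ)₊` a.e. holds iff the positive and
negative parts match: `r₀h₀⁺ + r₁h₁⁺ = τ(Λ − v″)₊` and
`r₀h₀⁻ + r₁h₁⁻ = τ(v′ − Λ)₊` a.e. -/
theorem tv_least_favorable_pairs_characterization
    {Ω : Type*} [MeasurableSpace Ω] (P : Measure Ω) [IsProbabilityMeasure P]
    (Λ : Ω → ℝ) (hΛ : MemLp Λ 2 P) (hcent : ∫ x, Λ x ∂P = 0)
    (τ r₀ r₁ r : ℝ) (hτ : 0 < τ) (h₀ : 0 < r₀) (h₁ : 0 < r₁)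
    (hr : r = r₀ + r₁) (hrad : 2 * r < τ * ∫ x, |Λ x| ∂P)
    (v' v'' : ℝ) (hv' : v' < 0) (hv'' : 0 < v'')
    (hv'eq : τ * (∫ x, max (v' - Λ x) 0 ∂P) = r)
    (hv''eq : τ * (∫ x, max (Λ x - v'') 0 ∂P) = r)
    (h₀f h₁f : Ω → ℝ)
    (hm₀ : MemLp h₀f 2 P) (hm₁ : MemLp h₁f 2 P)
    (hc₀ : ∫ x, h₀f x ∂P = 0) (hc₁ : ∫ x, h₁f x ∂P = 0)
    (hb₀ : (∫ x, |h₀f x| ∂P) ≤ 2) (hb₁ : (∫ x, |h₁f x| ∂P) ≤ 2) :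
    ((fun x => r₀ * h₀f x + r₁ * h₁f x) =ᵐ[P]
        (fun x => τ * max (Λ x - v'') 0 - τ * max (v' - Λ x) 0)) ↔
      (((fun x => r₀ * max (h₀f x) 0 + r₁ * max (h₁f x) 0) =ᵐ[P]
          fun x => τ * max (Λ x - v'') 0) ∧
        ((fun x => r₀ * max (-h₀f x) 0 + r₁ * max (-h₁f x) 0) =ᵐ[P]
          fun x => τ * max (v' - Λ x) 0)) := by
  have hΛi : Integrable Λ P := hΛ.integrable one_le_two
  have hi0 : Integrable h₀f P := hm₀.integrable one_le_two
  have hi1 : Integrable h₁f P := hm₁.integrable one_le_two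
  have hiA : Integrable (fun x => max (Λ x - v'') 0) P :=
    (hΛi.sub (integrable_const v'')).pos_part
  have hiB : Integrable (fun x => max (v' - Λ x) 0) P :=
    ((integrable_const v').sub hΛi).pos_part
  have hi0p : Integrable (fun x => max (h₀f x) 0) P := hi0.pos_part
  have hi1p : Integrable (fun x => max (h₁f x) 0) P := hi1.pos_part
  have hi0n : Integrable (fun x => max (-h₀f x) 0) P := hi0.neg.pos_part
  have hi1n : Integrable (fun x => max (-h₁f x) 0) P := hi1.neg.pos_part
  constructor
  · intro heq
    have hpt : ∀ᵐ x ∂P,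
        τ * max (Λ x - v'') 0 ≤ r₀ * max (h₀f x) 0 + r₁ * max (h₁f x) 0 ∧
        τ * max (v' - Λ x) 0 ≤ r₀ * max (-h₀f x) 0 + r₁ * max (-h₁f x) 0 := by
      filter_upwards [heq] with x hx
      set g := r₀ * h₀f x + r₁ * h₁f x with hg
      have hub : max g 0 ≤ r₀ * max (h₀f x) 0 + r₁ * max (h₁f x) 0 := by
        apply max_le
        · exact add_le_add (mul_le_mul_of_nonneg_left (le_max_left _ _) h₀.le)
            (mul_le_mul_of_nonneg_left (le_max_left _ _) h₁.le)
        · positivity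
      have hub' : max (-g) 0 ≤ r₀ * max (-h₀f x) 0 + r₁ * max (-h₁f x) 0 := by
        apply max_le
        · rw [hg, neg_add, ← mul_neg, ← mul_neg]
          exact add_le_add (mul_le_mul_of_nonneg_left (le_max_left _ _) h₀.le)
            (mul_le_mul_of_nonneg_left (le_max_left _ _) h₁.le)
        · positivity
      rcases le_or_gt (Λ x) v'' with hc | hc
      · have ha : max (Λ x - v'') 0 = 0 := max_eq_right (by linarith)
        have hgx : g = -(τ * max (v' - Λ x) 0) := by rw [hx, ha]; ring
        have hb : 0 ≤ max (v' - Λ x) 0 := le_max_right _ _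
        constructor
        · rw [ha, mul_zero]; positivity
        · have : max (-g) 0 = τ * max (v' - Λ x) 0 := by
            rw [hgx, neg_neg]; exact max_eq_left (by positivity)
          linarith [hub']
      · have hb : max (v' - Λ x) 0 = 0 := max_eq_right (by linarith)
        have hgx : g = τ * max (Λ x - v'') 0 := by rw [hx, hb]; ring
        have ha : 0 ≤ max (Λ x - v'') 0 := le_max_right _ _
        constructor
        · have : max g 0 = τ * max (Λ x - v'') 0 := by
            rw [hgx]; exact max_eq_left (by positivity)
          linarith [hub]
        · rw [hb, mul_zero]; positivity
    have hIA : ∫ x, τ * max (Λ x - v'') 0 ∂P = r := by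
      rw [integral_const_mul]; exact hv''eq
    have hIB : ∫ x, τ * max (v' - Λ x) 0 ∂P = r := by
      rw [integral_const_mul]; exact hv'eq
    set F : Ω → ℝ := fun x => r₀ * max (h₀f x) 0 + r₁ * max (h₁f x) 0 - τ * max (Λ x - v'') 0 with hF
    set G : Ω → ℝ := fun x => r₀ * max (-h₀f x) 0 + r₁ * max (-h₁f x) 0 - τ * max (v' - Λ x) 0 with hG
    have hFi : Integrable F P := ((hi0p.const_mul r₀).add (hi1p.const_mul r₁)).sub (hiA.const_mul τ)
    have hGi : Integrable G P := ((hi0n.const_mul r₀).add (hi1n.const_mul r₁)).sub (hiB.const_mul τ)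
    have hFnn : 0 ≤ᵐ[P] F := by
      filter_upwards [hpt] with x hx
      simp only [hF, Pi.zero_apply]; linarith [hx.1]
    have hGnn : 0 ≤ᵐ[P] G := by
      filter_upwards [hpt] with x hx
      simp only [hG, Pi.zero_apply]; linarith [hx.2]
    have hsum : ∫ x, F x ∂P + ∫ x, G x ∂P ≤ 0 := by
      rw [← integral_add hFi hGi]
      have hcongr : (fun x => F x + G x) =ᵐ[P]
          (fun x => r₀ * |h₀f x| + r₁ * |h₁f x|
            - τ * max (Λ x - v'') 0 - τ * max (v' - Λ x) 0) := by
        filter_upwards with x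
        have e0 := max_pm (h₀f x)
        have e1 := max_pm (h₁f x)
        simp only [hF, hG]
        linear_combination r₀ * e0 + r₁ * e1
      have I1 : Integrable (fun x => r₀ * |h₀f x|) P := hi0.abs.const_mul r₀
      have I2 : Integrable (fun x => r₁ * |h₁f x|) P := hi1.abs.const_mul r₁
      have I3 : Integrable (fun x => τ * max (Λ x - v'') 0) P := hiA.const_mul τ
      have I4 : Integrable (fun x => τ * max (v' - Λ x) 0) P := hiB.const_mul τ
      have I12 : Integrable (fun x => r₀ * |h₀f x| + r₁ * |h₁f x|) P := I1.add I2
      have I123 : Integrable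
          (fun x => r₀ * |h₀f x| + r₁ * |h₁f x| - τ * max (Λ x - v'') 0) P := I12.sub I3
      rw [integral_congr_ae hcongr, integral_sub I123 I4, integral_sub I12 I3,
        integral_add I1 I2, integral_const_mul r₀, integral_const_mul r₁, hIA, hIB]
      nlinarith [mul_le_mul_of_nonneg_left hb₀ h₀.le, mul_le_mul_of_nonneg_left hb₁ h₁.le]
    have h1 : 0 ≤ ∫ x, F x ∂P := integral_nonneg_of_ae hFnn
    have h2 : 0 ≤ ∫ x, G x ∂P := integral_nonneg_of_ae hGnn
    have hFae : F =ᵐ[P] 0 :=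
      (integral_eq_zero_iff_of_nonneg_ae hFnn hFi).mp (by linarith)
    have hGae : G =ᵐ[P] 0 :=
      (integral_eq_zero_iff_of_nonneg_ae hGnn hGi).mp (by linarith)
    constructor
    · filter_upwards [hFae] with x hx
      simp only [hF, Pi.zero_apply] at hx
      linarith
    · filter_upwards [hGae] with x hx
      simp only [hG, Pi.zero_apply] at hx
      linarith
  · rintro ⟨hA, hB⟩
    filter_upwards [hA, hB] with x hx1 hx2
    have e0 := max_pm' (h₀f x)
    have e1 := max_pm' (h₁f x)
    linear_combination hx1 - hx2 - r₀ * e0 - r₁ * e1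
end

section
/- Let (Ω, 𝔄, P) be a probability space and r > 0. Define the tangent balls G_h(r) = {g ∈ L²(P) : E[g] = 0, E[g²] ≤ 8r²}, G_v(r) = {g ∈ L²(P) : E[g] = 0, E[|g|] ≤ 2r}, and G_c(r) = {g ∈ L²(P) : E[g] = 0, g ≥ −r P-a.e.}. Then for each ∗ ∈ {h, v, c}, the set of bounded elements G_∗(r) ∩ L^∞(P) is dense in G_∗(r) with respect to the L²(P) norm; that is, the closure of G_∗(r) ∩ L^∞(P) in L²(P) equals G_∗(r). -/
open MeasureTheory

set_option linter.unusedSectionVars false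

section TangentHelpers

variable {Ω : Type*} [MeasurableSpace Ω] {P : Measure Ω} [IsProbabilityMeasure P]

local notation "⟪" x ", " y "⟫" => @inner ℝ _ _ x y

private lemma myNormOne : ‖Lp.const 2 P (1:ℝ)‖ = 1 := by
  rw [Lp.norm_def, eLpNorm_congr_ae (Lp.coeFn_const 2 P (1:ℝ))]
  rw [show (Function.const Ω (1:ℝ)) = fun _ => (1:ℝ) from rfl]
  rw [eLpNorm_const _ (by norm_num) (NeZero.ne P)]
  simp

private lemma myIntEqInner (f : Lp ℝ 2 P) : ∫ x, f x ∂P = ⟪f, Lp.const 2 P (1:ℝ)⟫ := by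
  rw [L2.inner_def]
  refine (integral_congr_ae ?_).symm
  filter_upwards [Lp.coeFn_const 2 P (1:ℝ)] with x hx
  simp [hx, RCLike.inner_apply]

private lemma myIntegrable (f : Lp ℝ 2 P) : Integrable f P :=
  (Lp.memLp f).integrable one_le_two

private lemma myAbsIntLe (f : Lp ℝ 2 P) : |∫ x, f x ∂P| ≤ ‖f‖ := by
  rw [myIntEqInner f]
  calc |⟪f, Lp.const 2 P (1:ℝ)⟫| ≤ ‖f‖ * ‖Lp.const 2 P (1:ℝ)‖ := abs_real_inner_le_norm _ _
  _ = ‖f‖ := by rw [myNormOne]; ring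

private lemma myIntAbsEq (f : Lp ℝ 2 P) : ∫ x, |f x| ∂P = ⟪|f|, Lp.const 2 P (1:ℝ)⟫ := by
  rw [L2.inner_def]
  refine (integral_congr_ae ?_).symm
  filter_upwards [Lp.coeFn_const 2 P (1:ℝ), Lp.coeFn_abs f] with x hx ha
  simp [hx, ha, RCLike.inner_apply]

private lemma myIntAbsLe (f : Lp ℝ 2 P) : ∫ x, |f x| ∂P ≤ ‖f‖ := by
  rw [myIntAbsEq f]
  calc ⟪|f|, Lp.const 2 P (1:ℝ)⟫ ≤ ‖|f|‖ * ‖Lp.const 2 P (1:ℝ)‖ := real_inner_le_norm _ _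
  _ = ‖f‖ := by rw [myNormOne, norm_abs_eq_norm]; ring

private lemma myIntSqEq (f : Lp ℝ 2 P) : ∫ x, (f x)^2 ∂P = ‖f‖^2 := by
  rw [← real_inner_self_eq_norm_sq, L2.inner_def]
  refine integral_congr_ae (Filter.Eventually.of_forall fun x => ?_)
  simp [RCLike.inner_apply, sq]

private lemma myContInt : Continuous fun f : Lp ℝ 2 P => ∫ x, f x ∂P := by
  have h : (fun f : Lp ℝ 2 P => ∫ x, f x ∂P) = fun f => ⟪f, Lp.const 2 P (1:ℝ)⟫ :=
    funext myIntEqInner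
  rw [h]
  exact continuous_id.inner continuous_const

private lemma myContIntAbs : Continuous fun f : Lp ℝ 2 P => ∫ x, |f x| ∂P := by
  have h : (fun f : Lp ℝ 2 P => ∫ x, |f x| ∂P) = fun f => ⟪|f|, Lp.const 2 P (1:ℝ)⟫ :=
    funext myIntAbsEq
  rw [h]
  have habs : Continuous fun f : Lp ℝ 2 P => |f| := by
    have h2 : (fun f : Lp ℝ 2 P => |f|) = fun f => f ⊔ (-f) := rfl
    rw [h2]
    exact continuous_id.sup continuous_neg
  exact habs.inner continuous_const

private lemma myContIntSq : Continuous fun f : Lp ℝ 2 P => ∫ x, (f x)^2 ∂P := by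
  have h : (fun f : Lp ℝ 2 P => ∫ x, (f x)^2 ∂P) = fun f => ‖f‖^2 := funext myIntSqEq
  rw [h]
  exact continuous_norm.pow 2

private lemma myNormLeOfAbs (f h : Lp ℝ 2 P) (hfh : ∀ᵐ x ∂P, |f x| ≤ |h x|) : ‖f‖ ≤ ‖h‖ := by
  rw [Lp.norm_def, Lp.norm_def]
  refine ENNReal.toReal_mono (Lp.eLpNorm_ne_top h) (eLpNorm_mono_ae ?_)
  filter_upwards [hfh] with x hx
  simpa [Real.norm_eq_abs] using hx

private lemma myExistsBounded (g : Lp ℝ 2 P) {δ : ℝ} (hδ : 0 < δ) :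
    ∃ b : Lp ℝ 2 P, ‖g - b‖ < δ ∧ ∃ C : ℝ, ∀ᵐ x ∂P, |b x| ≤ C := by
  obtain ⟨s, hs, hmem⟩ := (Lp.memLp g).exists_simpleFunc_eLpNorm_sub_lt (by norm_num)
      (ne_of_gt (ENNReal.ofReal_pos.2 hδ))
  refine ⟨hmem.toLp s, ?_, ?_⟩
  · have h1 : ⇑(g - hmem.toLp s) =ᵐ[P] ⇑g - ⇑s := by
      filter_upwards [Lp.coeFn_sub g (hmem.toLp s), hmem.coeFn_toLp] with x h1 h2
      rw [h1, Pi.sub_apply, h2, Pi.sub_apply]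
    rw [Lp.norm_def, eLpNorm_congr_ae h1]
    exact ENNReal.toReal_lt_of_lt_ofReal hs
  · obtain ⟨C, hC⟩ := s.exists_forall_norm_le
    refine ⟨C, ?_⟩
    filter_upwards [hmem.coeFn_toLp] with x hx
    rw [hx]
    simpa [Real.norm_eq_abs] using hC x

private lemma myIntSubConst (f : Lp ℝ 2 P) (c : ℝ) :
    ∫ x, (f - Lp.const 2 P c) x ∂P = (∫ x, f x ∂P) - c := by
  have h : ∫ x, (f - Lp.const 2 P c) x ∂P = ∫ x, (f x - c) ∂P := by
    refine integral_congr_ae ?_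
    filter_upwards [Lp.coeFn_sub f (Lp.const 2 P c), Lp.coeFn_const 2 P c] with x h1 h2
    rw [h1, Pi.sub_apply, h2, Function.const_apply]
  rw [h, integral_sub (myIntegrable f) (integrable_const c), integral_const]
  simp

private lemma myIntSub (f h : Lp ℝ 2 P) :
    ∫ x, (f - h) x ∂P = (∫ x, f x ∂P) - ∫ x, h x ∂P := by
  have e : ∫ x, (f - h) x ∂P = ∫ x, (f x - h x) ∂P := by
    refine integral_congr_ae ?_
    filter_upwards [Lp.coeFn_sub f h] with x hx
    rw [hx, Pi.sub_apply]
  rw [e, integral_sub (myIntegrable f) (myIntegrable h)]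

private lemma myNormConst (c : ℝ) : ‖Lp.const 2 P c‖ = |c| := by
  rw [Lp.norm_def, eLpNorm_congr_ae (Lp.coeFn_const 2 P c)]
  rw [show (Function.const Ω c) = fun _ => c from rfl]
  by_cases hc : c = 0
  · simp [hc]
  · rw [eLpNorm_const _ (by norm_num) (NeZero.ne P)]
    simp [Real.norm_eq_abs]

private lemma myIntSmul (f : Lp ℝ 2 P) (c : ℝ) :
    ∫ x, (c • f) x ∂P = c * ∫ x, f x ∂P := by
  have h : ∫ x, (c • f) x ∂P = ∫ x, c * f x ∂P := by
    refine integral_congr_ae ?_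
    filter_upwards [Lp.coeFn_smul c f] with x hx
    simp [hx]
  rw [h, integral_const_mul]

private lemma myIntAbsSmul (f : Lp ℝ 2 P) {c : ℝ} (hc : 0 ≤ c) :
    ∫ x, |(c • f) x| ∂P = c * ∫ x, |f x| ∂P := by
  have h : ∫ x, |(c • f) x| ∂P = ∫ x, c * |f x| ∂P := by
    refine integral_congr_ae ?_
    filter_upwards [Lp.coeFn_smul c f] with x hx
    simp [hx, abs_mul, abs_of_nonneg hc]
  rw [h, integral_const_mul]

private lemma myIntSqSmul (f : Lp ℝ 2 P) (c : ℝ) :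
    ∫ x, ((c • f) x)^2 ∂P = c^2 * ∫ x, (f x)^2 ∂P := by
  have h : ∫ x, ((c • f) x)^2 ∂P = ∫ x, c^2 * (f x)^2 ∂P := by
    refine integral_congr_ae ?_
    filter_upwards [Lp.coeFn_smul c f] with x hx
    simp [hx, mul_pow]
  rw [h, integral_const_mul]

private lemma myExistsCenteredBounded (g : Lp ℝ 2 P) (hg : ∫ x, g x ∂P = 0)
    {δ : ℝ} (hδ : 0 < δ) :
    ∃ b : Lp ℝ 2 P, ‖g - b‖ < 2*δ ∧ (∫ x, b x ∂P) = 0 ∧ ∃ C : ℝ, ∀ᵐ x ∂P, |b x| ≤ C := by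
  obtain ⟨b₀, hb₀, C, hC⟩ := myExistsBounded g hδ
  set m := ∫ x, b₀ x ∂P with hm
  have hmabs : |m| ≤ ‖g - b₀‖ := by
    have h1 : m = -∫ x, (g - b₀) x ∂P := by rw [myIntSub g b₀, hg]; ring
    rw [h1, abs_neg]
    exact myAbsIntLe _
  refine ⟨b₀ - Lp.const 2 P m, ?_, ?_, ⟨C + |m|, ?_⟩⟩
  · have hid : g - (b₀ - Lp.const 2 P m) = (g - b₀) + Lp.const 2 P m := by abel
    calc ‖g - (b₀ - Lp.const 2 P m)‖ ≤ ‖g - b₀‖ + ‖Lp.const 2 P m‖ := by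
          rw [hid]; exact norm_add_le _ _
    _ = ‖g - b₀‖ + |m| := by rw [myNormConst]
    _ < 2*δ := by linarith
  · rw [myIntSubConst, ← hm]; ring
  · filter_upwards [Lp.coeFn_sub b₀ (Lp.const 2 P m), Lp.coeFn_const 2 P m, hC] with x h1 h2 h3
    rw [h1, Pi.sub_apply, h2, Function.const_apply, sub_eq_add_neg]
    calc |b₀ x + -m| ≤ |b₀ x| + |(-m)| := abs_add_le _ _
    _ = |b₀ x| + |m| := by rw [abs_neg]
    _ ≤ C + |m| := by linarith

end TangentHelpers
section TangentCases

variable {Ω : Type*} [MeasurableSpace Ω] {P : Measure Ω} [IsProbabilityMeasure P]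

private lemma myDenseH (r : ℝ) (hr : 0 < r) (g : Lp ℝ 2 P) (hg0 : ∫ x, g x ∂P = 0)
    (hg2 : ∫ x, (g x)^2 ∂P ≤ 8 * r^2) {ε : ℝ} (hε : 0 < ε) :
    ∃ h : Lp ℝ 2 P, ((∫ x, h x ∂P) = 0 ∧ (∫ x, (h x)^2 ∂P) ≤ 8 * r^2) ∧
      (∃ C : ℝ, ∀ᵐ x ∂P, |h x| ≤ C) ∧ ‖g - h‖ < ε := by
  set K := Real.sqrt (8 * r^2) with hKdef
  have hK0 : 0 < K := Real.sqrt_pos.2 (by positivity)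
  have hK2 : K^2 = 8 * r^2 := Real.sq_sqrt (by positivity)
  have hgK : ‖g‖ ≤ K := by
    have h1 : ‖g‖^2 ≤ K^2 := by rw [hK2, ← myIntSqEq g] at *; exact hg2
    nlinarith [norm_nonneg g]
  have hδ : 0 < ε/5 := by linarith
  obtain ⟨b, hbd, hb0, C, hbC⟩ := myExistsCenteredBounded g hg0 hδ
  by_cases hbK : ‖b‖ ≤ K
  · refine ⟨b, ⟨hb0, ?_⟩, ⟨C, hbC⟩, by linarith⟩
    rw [myIntSqEq b, ← hK2]
    nlinarith [norm_nonneg b]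
  · push_neg at hbK
    have hbpos : 0 < ‖b‖ := lt_trans hK0 hbK
    set lam := K / ‖b‖ with hlamdef
    have hlam0 : 0 < lam := by positivity
    have hlam1 : lam ≤ 1 := by
      rw [hlamdef, div_le_one hbpos]; linarith
    refine ⟨lam • b, ⟨?_, ?_⟩, ⟨lam * C, ?_⟩, ?_⟩
    · rw [myIntSmul, hb0]; ring
    · rw [myIntSqSmul, myIntSqEq b, hlamdef]
      rw [div_pow, div_mul_eq_mul_div, div_le_iff₀ (by positivity)]
      nlinarith
    · filter_upwards [Lp.coeFn_smul lam b, hbC] with x h1 h2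
      rw [h1]
      simp only [Pi.smul_apply, smul_eq_mul, abs_mul, abs_of_nonneg hlam0.le]
      exact mul_le_mul_of_nonneg_left h2 hlam0.le
    · have hid : g - lam • b = (g - b) + (1 - lam) • b := by
        rw [sub_smul, one_smul]; abel
      have hnb : ‖(1 - lam) • b‖ = (1 - lam) * ‖b‖ := by
        rw [norm_smul, Real.norm_eq_abs, abs_of_nonneg (by linarith)]
      have hlb : (1 - lam) * ‖b‖ = ‖b‖ - K := by
        rw [hlamdef]; field_simp
      have hbub : ‖b‖ ≤ ‖g‖ + 2*(ε/5) := by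
        have h1 : b = g - (g - b) := by abel
        calc ‖b‖ = ‖g - (g - b)‖ := by rw [← h1]
        _ ≤ ‖g‖ + ‖g - b‖ := norm_sub_le _ _
        _ ≤ _ := by linarith
      calc ‖g - lam • b‖ ≤ ‖g - b‖ + ‖(1 - lam) • b‖ := by rw [hid]; exact norm_add_le _ _
      _ = ‖g - b‖ + (‖b‖ - K) := by rw [hnb, hlb]
      _ < ε := by nlinarith

end TangentCases
section TangentCasesVC

variable {Ω : Type*} [MeasurableSpace Ω] {P : Measure Ω} [IsProbabilityMeasure P]

private lemma myDenseV (r : ℝ) (hr : 0 < r) (g : Lp ℝ 2 P) (hg0 : ∫ x, g x ∂P = 0)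
    (hg1 : ∫ x, |g x| ∂P ≤ 2 * r) {ε : ℝ} (hε : 0 < ε) :
    ∃ h : Lp ℝ 2 P, ((∫ x, h x ∂P) = 0 ∧ (∫ x, |h x| ∂P) ≤ 2 * r) ∧
      (∃ C : ℝ, ∀ᵐ x ∂P, |h x| ≤ C) ∧ ‖g - h‖ < ε := by
  have hgpos : (0:ℝ) < ‖g‖ + 2 := by positivity
  set δ := min 1 (min (ε/4) (ε*r/(4*(‖g‖+2)))) with hδdef
  have hδ0 : 0 < δ := by
    refine lt_min one_pos (lt_min (by linarith) (by positivity))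
  have hδ1 : δ ≤ 1 := min_le_left _ _
  have hδ2 : δ ≤ ε/4 := le_trans (min_le_right _ _) (min_le_left _ _)
  have hδ3 : δ ≤ ε*r/(4*(‖g‖+2)) := le_trans (min_le_right _ _) (min_le_right _ _)
  obtain ⟨b, hbd, hb0, C, hbC⟩ := myExistsCenteredBounded g hg0 hδ0
  have hbub : ‖b‖ ≤ ‖g‖ + 2 := by
    have h1 : b = g - (g - b) := by abel
    calc ‖b‖ = ‖g - (g - b)‖ := by rw [← h1]
    _ ≤ ‖g‖ + ‖g - b‖ := norm_sub_le _ _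
    _ ≤ _ := by linarith
  set A := ∫ x, |b x| ∂P with hA
  by_cases hA2 : A ≤ 2*r
  · exact ⟨b, ⟨hb0, hA2⟩, ⟨C, hbC⟩, by linarith⟩
  · push_neg at hA2
    have hApos : 0 < A := lt_trans (by positivity) hA2
    set lam := 2*r/A with hlamdef
    have hlam0 : 0 < lam := by positivity
    have hlam1 : lam ≤ 1 := by rw [hlamdef, div_le_one hApos]; linarith
    have hAd : A - 2*r ≤ 2*δ := by
      have h2 : A - ∫ x, |g x| ∂P = ∫ x, (|b x| - |g x|) ∂P :=
        (integral_sub (myIntegrable b).abs (myIntegrable g).abs).symm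
      have h3 : ∫ x, (|b x| - |g x|) ∂P ≤ ∫ x, |(b - g) x| ∂P := by
        refine integral_mono_ae ((myIntegrable b).abs.sub (myIntegrable g).abs)
          (myIntegrable (b - g)).abs ?_
        filter_upwards [Lp.coeFn_sub b g] with x hx
        rw [hx, Pi.sub_apply]
        exact abs_sub_abs_le_abs_sub _ _
      have h4 : ∫ x, |(b - g) x| ∂P ≤ ‖b - g‖ := myIntAbsLe _
      have h5 : ‖b - g‖ = ‖g - b‖ := norm_sub_rev _ _
      linarith
    refine ⟨lam • b, ⟨?_, ?_⟩, ⟨lam * C, ?_⟩, ?_⟩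
    · rw [myIntSmul, hb0]; ring
    · rw [myIntAbsSmul b hlam0.le, ← hA, hlamdef, div_mul_cancel₀ _ (ne_of_gt hApos)]
    · filter_upwards [Lp.coeFn_smul lam b, hbC] with x h1 h2
      rw [h1]
      simp only [Pi.smul_apply, smul_eq_mul, abs_mul, abs_of_nonneg hlam0.le]
      exact mul_le_mul_of_nonneg_left h2 hlam0.le
    · have hid : g - lam • b = (g - b) + (1 - lam) • b := by
        rw [sub_smul, one_smul]; abel
      have hnb : ‖(1 - lam) • b‖ = (1 - lam) * ‖b‖ := by
        rw [norm_smul, Real.norm_eq_abs, abs_of_nonneg (by linarith)]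
      have e2 : (0:ℝ) ≤ 1 - lam := by linarith
      have e1 : (1 - lam) * A = A - 2*r := by
        rw [hlamdef]; field_simp
      have e3 : (1 - lam) * (2*r) ≤ 2*δ := by
        nlinarith [mul_nonneg e2 (by linarith : (0:ℝ) ≤ A - 2*r)]
      have e4 : (1 - lam) * ‖b‖ ≤ (1 - lam) * (‖g‖ + 2) :=
        mul_le_mul_of_nonneg_left hbub e2
      have e5 : δ * (4*(‖g‖+2)) ≤ ε*r := by
        have h6 := mul_le_mul_of_nonneg_right hδ3 (le_of_lt (by positivity : (0:ℝ) < 4*(‖g‖+2)))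
        rwa [div_mul_cancel₀ _ (by positivity : (4*(‖g‖+2)) ≠ 0)] at h6
      have e6a : (1 - lam) * (2*r) * (4*(‖g‖+2)) ≤ 2*δ * (4*(‖g‖+2)) :=
        mul_le_mul_of_nonneg_right e3 (by positivity)
      have e6b : ((1 - lam) * (‖g‖ + 2) * 8) * r ≤ (2*ε) * r := by
        calc ((1 - lam) * (‖g‖ + 2) * 8) * r = (1 - lam) * (2*r) * (4*(‖g‖+2)) := by ring
        _ ≤ 2*δ * (4*(‖g‖+2)) := e6a
        _ = 2 * (δ * (4*(‖g‖+2))) := by ring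
        _ ≤ 2 * (ε*r) := by linarith
        _ = (2*ε) * r := by ring
      have e6c := le_of_mul_le_mul_right e6b hr
      have e6 : (1 - lam) * (‖g‖ + 2) ≤ ε/4 := by linarith
      calc ‖g - lam • b‖ ≤ ‖g - b‖ + ‖(1 - lam) • b‖ := by rw [hid]; exact norm_add_le _ _
      _ = ‖g - b‖ + (1 - lam) * ‖b‖ := by rw [hnb]
      _ < ε := by linarith

private lemma myRealMaxAbs (a b c : ℝ) (h : c ≤ a) : |a - max b c| ≤ |a - b| := by
  rcases le_total b c with hb | hb
  · rw [max_eq_right hb, abs_of_nonneg (by linarith : (0:ℝ) ≤ a - c),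
      abs_of_nonneg (by linarith : (0:ℝ) ≤ a - b)]
    linarith
  · rw [max_eq_left hb]

private lemma myDenseC (r : ℝ) (hr : 0 < r) (g : Lp ℝ 2 P) (hg0 : ∫ x, g x ∂P = 0)
    (hgr : ∀ᵐ x ∂P, -r ≤ g x) {ε : ℝ} (hε : 0 < ε) :
    ∃ h : Lp ℝ 2 P, ((∫ x, h x ∂P) = 0 ∧ (∀ᵐ x ∂P, -r ≤ h x)) ∧
      (∃ C : ℝ, ∀ᵐ x ∂P, |h x| ≤ C) ∧ ‖g - h‖ < ε := by
  have hgpos : (0:ℝ) < ‖g‖ + 2 := by positivity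
  set δ := min 1 (min (ε/4) (ε*r/(4*(‖g‖+2)))) with hδdef
  have hδ0 : 0 < δ := by
    refine lt_min one_pos (lt_min (by linarith) (by positivity))
  have hδ1 : δ ≤ 1 := min_le_left _ _
  have hδ2 : δ ≤ ε/4 := le_trans (min_le_right _ _) (min_le_left _ _)
  have hδ3 : δ ≤ ε*r/(4*(‖g‖+2)) := le_trans (min_le_right _ _) (min_le_right _ _)
  obtain ⟨b₀, hb₀, C, hC⟩ := myExistsBounded g hδ0
  set b₁ := b₀ ⊔ Lp.const 2 P (-r) with hb₁def
  have hb₁g : ‖g - b₁‖ < δ := by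
    refine lt_of_le_of_lt (myNormLeOfAbs (g - b₁) (g - b₀) ?_) hb₀
    filter_upwards [Lp.coeFn_sub g b₁, Lp.coeFn_sub g b₀,
      Lp.coeFn_sup b₀ (Lp.const 2 P (-r)), Lp.coeFn_const 2 P (-r), hgr] with x h1 h2 h3 h4 h5
    rw [h1, Pi.sub_apply, h2, Pi.sub_apply, h3, Pi.sup_apply, h4, Function.const_apply]
    exact myRealMaxAbs _ _ _ h5
  have hb₁low : ∀ᵐ x ∂P, -r ≤ b₁ x := by
    filter_upwards [Lp.coeFn_sup b₀ (Lp.const 2 P (-r)), Lp.coeFn_const 2 P (-r)] with x h3 h4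
    rw [h3, Pi.sup_apply, h4, Function.const_apply]
    exact le_max_right _ _
  have hb₁C : ∀ᵐ x ∂P, |b₁ x| ≤ C + r := by
    filter_upwards [Lp.coeFn_sup b₀ (Lp.const 2 P (-r)), Lp.coeFn_const 2 P (-r), hC]
      with x h3 h4 h5
    rw [h3, Pi.sup_apply, h4, Function.const_apply]
    rcases le_total (b₀ x) (-r) with hx | hx
    · rw [max_eq_right hx, abs_neg, abs_of_nonneg hr.le]
      have := abs_nonneg (b₀ x)
      linarith
    · rw [max_eq_left hx]
      linarith
  set m := ∫ x, b₁ x ∂P with hm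
  have hmabs : |m| ≤ ‖g - b₁‖ := by
    have h1 : m = -∫ x, (g - b₁) x ∂P := by rw [myIntSub g b₁, hg0]; ring
    rw [h1, abs_neg]
    exact myAbsIntLe _
  set b₂ := b₁ - Lp.const 2 P m with hb₂def
  have hb₂0 : ∫ x, b₂ x ∂P = 0 := by rw [hb₂def, myIntSubConst, ← hm]; ring
  have hb₂g : ‖g - b₂‖ < 2*δ := by
    have hid : g - b₂ = (g - b₁) + Lp.const 2 P m := by rw [hb₂def]; abel
    calc ‖g - b₂‖ ≤ ‖g - b₁‖ + ‖Lp.const 2 P m‖ := by rw [hid]; exact norm_add_le _ _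
    _ = ‖g - b₁‖ + |m| := by rw [myNormConst]
    _ < 2*δ := by linarith
  have hb₂low : ∀ᵐ x ∂P, -r - m ≤ b₂ x := by
    filter_upwards [Lp.coeFn_sub b₁ (Lp.const 2 P m), Lp.coeFn_const 2 P m, hb₁low]
      with x h1 h2 h3
    rw [h1, Pi.sub_apply, h2, Function.const_apply]
    linarith
  have hb₂C : ∀ᵐ x ∂P, |b₂ x| ≤ C + r + |m| := by
    filter_upwards [Lp.coeFn_sub b₁ (Lp.const 2 P m), Lp.coeFn_const 2 P m, hb₁C]
      with x h1 h2 h3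
    rw [h1, Pi.sub_apply, h2, Function.const_apply, sub_eq_add_neg]
    calc |b₁ x + -m| ≤ |b₁ x| + |(-m)| := abs_add_le _ _
    _ = |b₁ x| + |m| := by rw [abs_neg]
    _ ≤ C + r + |m| := by linarith
  have hb₂ub : ‖b₂‖ ≤ ‖g‖ + 2 := by
    have h1 : b₂ = g - (g - b₂) := by abel
    calc ‖b₂‖ = ‖g - (g - b₂)‖ := by rw [← h1]
    _ ≤ ‖g‖ + ‖g - b₂‖ := norm_sub_le _ _
    _ ≤ _ := by linarith
  set mp := max m 0 with hmp
  have hmp0 : 0 ≤ mp := le_max_right _ _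
  have hmpm : m ≤ mp := le_max_left _ _
  have hmpδ : mp ≤ δ := by
    refine max_le ?_ hδ0.le
    calc m ≤ |m| := le_abs_self m
    _ ≤ ‖g - b₁‖ := hmabs
    _ ≤ δ := hb₁g.le
  have hrmp : 0 < r + mp := by linarith
  set lam := r / (r + mp) with hlamdef
  have hlam0 : 0 < lam := by positivity
  have hlam1 : lam ≤ 1 := by rw [hlamdef, div_le_one hrmp]; linarith
  have elam : lam * (r + mp) = r := by rw [hlamdef]; field_simp
  refine ⟨lam • b₂, ⟨?_, ?_⟩, ⟨lam * (C + r + |m|), ?_⟩, ?_⟩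
  · rw [myIntSmul, hb₂0]; ring
  · filter_upwards [Lp.coeFn_smul lam b₂, hb₂low] with x h1 h2
    rw [h1]
    simp only [Pi.smul_apply, smul_eq_mul]
    have h3 : -(r + mp) ≤ b₂ x := by linarith
    have h4 := mul_le_mul_of_nonneg_left h3 hlam0.le
    rw [mul_neg, elam] at h4
    linarith
  · filter_upwards [Lp.coeFn_smul lam b₂, hb₂C] with x h1 h2
    rw [h1]
    simp only [Pi.smul_apply, smul_eq_mul, abs_mul, abs_of_nonneg hlam0.le]
    exact mul_le_mul_of_nonneg_left h2 hlam0.le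
  · have hid : g - lam • b₂ = (g - b₂) + (1 - lam) • b₂ := by
      rw [sub_smul, one_smul]; abel
    have hnb : ‖(1 - lam) • b₂‖ = (1 - lam) * ‖b₂‖ := by
      rw [norm_smul, Real.norm_eq_abs, abs_of_nonneg (by linarith)]
    have e2 : (0:ℝ) ≤ 1 - lam := by linarith
    have e1 : (1 - lam) * (r + mp) = mp := by rw [hlamdef]; field_simp; ring
    have e3 : (1 - lam) * r ≤ δ := by
      nlinarith [mul_nonneg e2 hmp0]
    have e4 : (1 - lam) * ‖b₂‖ ≤ (1 - lam) * (‖g‖ + 2) :=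
      mul_le_mul_of_nonneg_left hb₂ub e2
    have e5 : δ * (4*(‖g‖+2)) ≤ ε*r := by
      have h6 := mul_le_mul_of_nonneg_right hδ3 (le_of_lt (by positivity : (0:ℝ) < 4*(‖g‖+2)))
      rwa [div_mul_cancel₀ _ (by positivity : (4*(‖g‖+2)) ≠ 0)] at h6
    have e6a : (1 - lam) * r * (4*(‖g‖+2)) ≤ δ * (4*(‖g‖+2)) :=
      mul_le_mul_of_nonneg_right e3 (by positivity)
    have e6b : ((1 - lam) * (‖g‖ + 2) * 4) * r ≤ ε * r := by
      calc ((1 - lam) * (‖g‖ + 2) * 4) * r = (1 - lam) * r * (4*(‖g‖+2)) := by ring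
      _ ≤ δ * (4*(‖g‖+2)) := e6a
      _ ≤ ε * r := e5
    have e6c := le_of_mul_le_mul_right e6b hr
    have e6 : (1 - lam) * (‖g‖ + 2) ≤ ε/4 := by linarith
    calc ‖g - lam • b₂‖ ≤ ‖g - b₂‖ + ‖(1 - lam) • b₂‖ := by rw [hid]; exact norm_add_le _ _
    _ = ‖g - b₂‖ + (1 - lam) * ‖b₂‖ := by rw [hnb]
    _ < ε := by linarith

end TangentCasesVC
/-- for each of the Hellinger, total variation and contamination
tangent balls `G_*(r)` in `L²(P)`, the essentially bounded elements are dense: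
the `L²`-closure of `G_*(r) ∩ L^∞(P)` equals `G_*(r)`. -/
theorem tangent_balls_bounded_elements_dense
    {Ω : Type*} [MeasurableSpace Ω] (P : Measure Ω) [IsProbabilityMeasure P]
    (r : ℝ) (hr : 0 < r)
    (Gh Gv Gc : Set (Lp ℝ 2 P))
    (hGh : Gh = {g : Lp ℝ 2 P | (∫ x, g x ∂P) = 0 ∧ (∫ x, (g x) ^ 2 ∂P) ≤ 8 * r ^ 2})
    (hGv : Gv = {g : Lp ℝ 2 P | (∫ x, g x ∂P) = 0 ∧ (∫ x, |g x| ∂P) ≤ 2 * r})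
    (hGc : Gc = {g : Lp ℝ 2 P | (∫ x, g x ∂P) = 0 ∧ ∀ᵐ x ∂P, -r ≤ g x})
    (B : Set (Lp ℝ 2 P))
    (hB : B = {g : Lp ℝ 2 P | ∃ C : ℝ, ∀ᵐ x ∂P, |g x| ≤ C}) :
    closure (Gh ∩ B) = Gh ∧ closure (Gv ∩ B) = Gv ∧ closure (Gc ∩ B) = Gc := by
  subst hGh hGv hGc hB
  have hclosedH : IsClosed {g : Lp ℝ 2 P | (∫ x, g x ∂P) = 0 ∧ (∫ x, (g x) ^ 2 ∂P) ≤ 8 * r ^ 2} := by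
    have h : {g : Lp ℝ 2 P | (∫ x, g x ∂P) = 0 ∧ (∫ x, (g x) ^ 2 ∂P) ≤ 8 * r ^ 2} =
        ((fun f : Lp ℝ 2 P => ∫ x, f x ∂P) ⁻¹' {0}) ∩
        ((fun f : Lp ℝ 2 P => ∫ x, (f x) ^ 2 ∂P) ⁻¹' Set.Iic (8 * r ^ 2)) := rfl
    rw [h]
    exact (isClosed_singleton.preimage myContInt).inter (isClosed_Iic.preimage myContIntSq)
  have hclosedV : IsClosed {g : Lp ℝ 2 P | (∫ x, g x ∂P) = 0 ∧ (∫ x, |g x| ∂P) ≤ 2 * r} := by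
    have h : {g : Lp ℝ 2 P | (∫ x, g x ∂P) = 0 ∧ (∫ x, |g x| ∂P) ≤ 2 * r} =
        ((fun f : Lp ℝ 2 P => ∫ x, f x ∂P) ⁻¹' {0}) ∩
        ((fun f : Lp ℝ 2 P => ∫ x, |f x| ∂P) ⁻¹' Set.Iic (2 * r)) := rfl
    rw [h]
    exact (isClosed_singleton.preimage myContInt).inter (isClosed_Iic.preimage myContIntAbs)
  have hclosedC : IsClosed {g : Lp ℝ 2 P | (∫ x, g x ∂P) = 0 ∧ ∀ᵐ x ∂P, -r ≤ g x} := by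
    have hset : {g : Lp ℝ 2 P | ∀ᵐ x ∂P, -r ≤ g x} = {g : Lp ℝ 2 P | Lp.const 2 P (-r) ≤ g} := by
      ext g
      simp only [Set.mem_setOf_eq]
      rw [← Lp.coeFn_le]
      constructor
      · intro h
        filter_upwards [Lp.coeFn_const 2 P (-r), h] with x h1 h2
        rw [h1]; exact h2
      · intro h
        filter_upwards [Lp.coeFn_const 2 P (-r), h] with x h1 h2
        rw [h1] at h2; exact h2
    have h : {g : Lp ℝ 2 P | (∫ x, g x ∂P) = 0 ∧ ∀ᵐ x ∂P, -r ≤ g x} =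
        ((fun f : Lp ℝ 2 P => ∫ x, f x ∂P) ⁻¹' {0}) ∩
        {g : Lp ℝ 2 P | ∀ᵐ x ∂P, -r ≤ g x} := rfl
    rw [h, hset]
    exact (isClosed_singleton.preimage myContInt).inter
      (isClosed_le continuous_const continuous_id)
  refine ⟨?_, ?_, ?_⟩
  · refine Set.Subset.antisymm (closure_minimal Set.inter_subset_left hclosedH) ?_
    intro g hg
    rw [Metric.mem_closure_iff]
    intro ε hε
    obtain ⟨h, hmem, hb, hd⟩ := myDenseH r hr g hg.1 hg.2 hε
    exact ⟨h, ⟨hmem, hb⟩, by rwa [dist_eq_norm]⟩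
  · refine Set.Subset.antisymm (closure_minimal Set.inter_subset_left hclosedV) ?_
    intro g hg
    rw [Metric.mem_closure_iff]
    intro ε hε
    obtain ⟨h, hmem, hb, hd⟩ := myDenseV r hr g hg.1 hg.2 hε
    exact ⟨h, ⟨hmem, hb⟩, by rwa [dist_eq_norm]⟩
  · refine Set.Subset.antisymm (closure_minimal Set.inter_subset_left hclosedC) ?_
    intro g hg
    rw [Metric.mem_closure_iff]
    intro ε hε
    obtain ⟨h, hmem, hb, hd⟩ := myDenseC r hr g hg.1 hg.2 hε
    exact ⟨h, ⟨hmem, hb⟩, by rwa [dist_eq_norm]⟩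
end
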